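/- arXiv:2212.14105 — 13 statements merged into one kernel-verified Lean document; each statement's English description precedes it below -/
import Mathlib

section
/- Under random assignment, exclusion, treatment monotonicity, and outcome monotonicity, the population share of supercompliers (individuals with D1 > D0 and Y1 > Y0) equals the reduced form: Pr(G = cc) = E[Y | Z=1] − E[Y | Z=0]. -/
open MeasureTheory ProbabilityTheory

/-- Conditional mean of `f` given event `s`. -/
noncomputable def cmean {Ω : Type} [MeasurableSpace Ω] (μ : Measure Ω)
    (f : Ω → ℝ) (s : Set Ω) : ℝ :=
  (∫ ω in s, f ω ∂μ) / (μ s).toReal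

theorem supercomplier_share
    {Ω : Type} [MeasurableSpace Ω] (μ : Measure Ω) [IsProbabilityMeasure μ]
    (Z D0 D1 Y0 Y1 D Y : Ω → ℝ)
    (hZm : Measurable Z) (hD0m : Measurable D0) (hD1m : Measurable D1)
    (hY0m : Measurable Y0) (hY1m : Measurable Y1)
    (hZbin : ∀ ω, Z ω = 0 ∨ Z ω = 1)
    (hD0bin : ∀ ω, D0 ω = 0 ∨ D0 ω = 1)
    (hD1bin : ∀ ω, D1 ω = 0 ∨ D1 ω = 1)
    (hY0bin : ∀ ω, Y0 ω = 0 ∨ Y0 ω = 1)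
    (hY1bin : ∀ ω, Y1 ω = 0 ∨ Y1 ω = 1)
    (hD : ∀ ω, D ω = Z ω * D1 ω + (1 - Z ω) * D0 ω)
    (hY : ∀ ω, Y ω = D ω * Y1 ω + (1 - D ω) * Y0 ω)
    (hindep : IndepFun (fun ω => (Y0 ω, Y1 ω, D0 ω, D1 ω)) Z μ)
    (hz0 : 0 < μ {ω | Z ω = 1}) (hz1 : μ {ω | Z ω = 1} < 1)
    (hmonoD : ∀ᵐ ω ∂μ, D0 ω ≤ D1 ω)
    (hmonoY : ∀ᵐ ω ∂μ, Y0 ω ≤ Y1 ω) :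
    (μ {ω | D0 ω < D1 ω ∧ Y0 ω < Y1 ω}).toReal
      = cmean μ Y {ω | Z ω = 1} - cmean μ Y {ω | Z ω = 0} := by
  classical
  set W : Ω → ℝ × ℝ × ℝ × ℝ := fun ω => (Y0 ω, Y1 ω, D0 ω, D1 ω) with hWdef
  set φ1 : ℝ × ℝ × ℝ × ℝ → ℝ := fun p => p.2.2.2 * p.2.1 + (1 - p.2.2.2) * p.1 with hφ1def
  set φ0 : ℝ × ℝ × ℝ × ℝ → ℝ := fun p => p.2.2.1 * p.2.1 + (1 - p.2.2.1) * p.1 with hφ0def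
  have hφ1m : Measurable φ1 := by fun_prop
  have hφ0m : Measurable φ0 := by fun_prop
  set A1 : Set Ω := {ω | D1 ω * Y1 ω + (1 - D1 ω) * Y0 ω = 1} with hA1def
  set A0 : Set Ω := {ω | D0 ω * Y1 ω + (1 - D0 ω) * Y0 ω = 1} with hA0def
  set T : Set Ω := {ω | D0 ω < D1 ω ∧ Y0 ω < Y1 ω} with hTdef
  set s1 : Set Ω := {ω | Z ω = 1} with hs1def
  set s0 : Set Ω := {ω | Z ω = 0} with hs0def
  have hA1m : MeasurableSet A1 :=
    ((hD1m.mul hY1m).add ((measurable_const.sub hD1m).mul hY0m)) (measurableSet_singleton 1)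
  have hA0m : MeasurableSet A0 :=
    ((hD0m.mul hY1m).add ((measurable_const.sub hD0m).mul hY0m)) (measurableSet_singleton 1)
  have hTm : MeasurableSet T := by
    have h1 : MeasurableSet {ω | D0 ω < D1 ω} := measurableSet_lt hD0m hD1m
    have h2 : MeasurableSet {ω | Y0 ω < Y1 ω} := measurableSet_lt hY0m hY1m
    exact h1.inter h2
  have hs1m : MeasurableSet s1 := hZm (measurableSet_singleton 1)
  have hs0m : MeasurableSet s0 := hZm (measurableSet_singleton 0)
  -- measures of s1, s0
  have hs1top : μ s1 ≠ ⊤ := measure_ne_top μ s1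
  have hs0top : μ s0 ≠ ⊤ := measure_ne_top μ s0
  have hs0pos : 0 < μ s0 := by
    by_contra h
    push_neg at h
    have h0 : μ s0 = 0 := le_antisymm h zero_le
    have huniv : (Set.univ : Set Ω) ⊆ s1 ∪ s0 := by
      intro ω _
      rcases hZbin ω with h | h
      · exact Or.inr h
      · exact Or.inl h
    have : (1 : ENNReal) ≤ μ s1 + μ s0 := by
      calc (1 : ENNReal) = μ Set.univ := (measure_univ (μ := μ)).symm
        _ ≤ μ (s1 ∪ s0) := measure_mono huniv
        _ ≤ μ s1 + μ s0 := measure_union_le _ _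
    rw [h0, add_zero] at this
    exact absurd this (not_le.mpr hz1)
  -- independence
  have key1 : μ (A1 ∩ s1) = μ A1 * μ s1 := by
    have h := hindep.measure_inter_preimage_eq_mul (φ1 ⁻¹' {1}) {1}
      (hφ1m (measurableSet_singleton 1)) (measurableSet_singleton 1)
    have e1 : W ⁻¹' (φ1 ⁻¹' {1}) = A1 := rfl
    have e2 : Z ⁻¹' {1} = s1 := rfl
    simpa [e1, e2] using h
  have key0 : μ (A0 ∩ s0) = μ A0 * μ s0 := by
    have h := hindep.measure_inter_preimage_eq_mul (φ0 ⁻¹' {1}) {0}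
      (hφ0m (measurableSet_singleton 1)) (measurableSet_singleton 0)
    have e1 : W ⁻¹' (φ0 ⁻¹' {1}) = A0 := rfl
    have e2 : Z ⁻¹' {0} = s0 := rfl
    simpa [e1, e2] using h
  -- integral over s1
  have int1 : ∫ ω in s1, Y ω ∂μ = (μ (A1 ∩ s1)).toReal := by
    have hEq : Set.EqOn Y (A1.indicator (fun _ => (1 : ℝ))) s1 := by
      intro ω hω
      have hz : Z ω = 1 := hω
      have hDω : D ω = D1 ω := by rw [hD ω, hz]; ring
      have hYω : Y ω = D1 ω * Y1 ω + (1 - D1 ω) * Y0 ω := by rw [hY ω, hDω]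
      by_cases hmem : ω ∈ A1
      · rw [Set.indicator_of_mem hmem, hYω]; exact hmem
      · rw [Set.indicator_of_notMem hmem, hYω]
        rcases hD1bin ω with h1 | h1 <;> rcases hY0bin ω with h2 | h2 <;>
          rcases hY1bin ω with h3 | h3 <;>
          revert hmem <;> norm_num [hA1def, Set.mem_setOf_eq, h1, h2, h3]
    rw [setIntegral_congr_fun hs1m hEq, setIntegral_indicator hA1m]
    simp [Set.inter_comm]
    rfl
  have int0 : ∫ ω in s0, Y ω ∂μ = (μ (A0 ∩ s0)).toReal := by
    have hEq : Set.EqOn Y (A0.indicator (fun _ => (1 : ℝ))) s0 := by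
      intro ω hω
      have hz : Z ω = 0 := hω
      have hDω : D ω = D0 ω := by rw [hD ω, hz]; ring
      have hYω : Y ω = D0 ω * Y1 ω + (1 - D0 ω) * Y0 ω := by rw [hY ω, hDω]
      by_cases hmem : ω ∈ A0
      · rw [Set.indicator_of_mem hmem, hYω]; exact hmem
      · rw [Set.indicator_of_notMem hmem, hYω]
        rcases hD0bin ω with h1 | h1 <;> rcases hY0bin ω with h2 | h2 <;>
          rcases hY1bin ω with h3 | h3 <;>
          revert hmem <;> norm_num [hA0def, Set.mem_setOf_eq, h1, h2, h3]
    rw [setIntegral_congr_fun hs0m hEq, setIntegral_indicator hA0m]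
    simp [Set.inter_comm]
    rfl
  -- cmean values
  have hs1r : (μ s1).toReal ≠ 0 := ENNReal.toReal_ne_zero.mpr ⟨hz0.ne', hs1top⟩
  have hs0r : (μ s0).toReal ≠ 0 := ENNReal.toReal_ne_zero.mpr ⟨hs0pos.ne', hs0top⟩
  have cm1 : cmean μ Y s1 = (μ A1).toReal := by
    rw [cmean, int1, key1, ENNReal.toReal_mul]
    field_simp
  have cm0 : cmean μ Y s0 = (μ A0).toReal := by
    rw [cmean, int0, key0, ENNReal.toReal_mul]
    field_simp
  -- measure decomposition
  have hdisj : Disjoint A0 T := by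
    rw [Set.disjoint_left]
    intro ω h0 hT
    rcases hT with ⟨hd, hy⟩
    have hd0 : D0 ω = 0 := by
      rcases hD0bin ω with h | h
      · exact h
      · rcases hD1bin ω with h' | h' <;> rw [h, h'] at hd <;> linarith
    have hy0 : Y0 ω = 0 := by
      rcases hY0bin ω with h | h
      · exact h
      · rcases hY1bin ω with h' | h' <;> rw [h, h'] at hy <;> linarith
    simp only [hA0def, Set.mem_setOf_eq, hd0, hy0] at h0
    norm_num at h0
  set U : Set Ω := A0 ∪ T with hUdef
  have hae : ∀ᵐ ω ∂μ, (ω ∈ A1) = (ω ∈ U) := by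
    filter_upwards [hmonoD, hmonoY] with ω hmd hmy
    have : (ω ∈ A1) ↔ (ω ∈ U) := by
      simp only [hUdef, hA1def, hA0def, hTdef, Set.mem_union, Set.mem_setOf_eq]
      rcases hD0bin ω with h1 | h1 <;> rcases hD1bin ω with h2 | h2 <;>
        rcases hY0bin ω with h3 | h3 <;> rcases hY1bin ω with h4 | h4 <;>
        revert hmd hmy <;> norm_num [h1, h2, h3, h4]
    exact eq_iff_iff.mpr this
  have hmeq : μ A1 = μ A0 + μ T := by
    have h1 : μ A1 = μ U := measure_congr hae
    rw [h1, hUdef, measure_union hdisj hTm]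
  have hA0top : μ A0 ≠ ⊤ := measure_ne_top μ A0
  have hTtop : μ T ≠ ⊤ := measure_ne_top μ T
  have hreal : (μ A1).toReal = (μ A0).toReal + (μ T).toReal := by
    rw [hmeq, ENNReal.toReal_add hA0top hTtop]
  rw [cm1, cm0]
  have : (μ T).toReal = (μ A1).toReal - (μ A0).toReal := by linarith
  exact this
end

section
/- Under the LATE assumptions, outcome monotonicity, a positive supercomplier share, and independence of a covariate X from Z jointly with the potential outcomes, the supercomplier mean of h(X) is identified by the Wald estimand: E[h(X) | D1>D0, Y1>Y0] = (E[h(X)Y | Z=1] − E[h(X)Y | Z=0]) / (E[Y | Z=1] − E[Y | Z=0]). -/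
open MeasureTheory ProbabilityTheory

theorem supercomplier_characteristics_wald
{Ω : Type} [MeasurableSpace Ω] (μ : Measure Ω) [IsProbabilityMeasure μ]
    (Z D0 D1 Y0 Y1 D Y : Ω → ℝ)
    (hZm : Measurable Z) (hD0m : Measurable D0) (hD1m : Measurable D1)
    (hY0m : Measurable Y0) (hY1m : Measurable Y1)
    (hZbin : ∀ ω, Z ω = 0 ∨ Z ω = 1)
    (hD0bin : ∀ ω, D0 ω = 0 ∨ D0 ω = 1)
    (hD1bin : ∀ ω, D1 ω = 0 ∨ D1 ω = 1)
    (hY0bin : ∀ ω, Y0 ω = 0 ∨ Y0 ω = 1)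
    (hY1bin : ∀ ω, Y1 ω = 0 ∨ Y1 ω = 1)
    (hD : ∀ ω, D ω = Z ω * D1 ω + (1 - Z ω) * D0 ω)
    (hY : ∀ ω, Y ω = D ω * Y1 ω + (1 - D ω) * Y0 ω)
    (hz0 : 0 < μ {ω | Z ω = 1}) (hz1 : μ {ω | Z ω = 1} < 1)
    (hmonoD : ∀ᵐ ω ∂μ, D0 ω ≤ D1 ω)
    (X : Ω → ℝ) (hXm : Measurable X) (h : ℝ → ℝ) (hhm : Measurable h)
    (hint : Integrable (fun ω => h (X ω)) μ)
    (hindep : IndepFun (fun ω => (X ω, Y0 ω, Y1 ω, D0 ω, D1 ω)) Z μ)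
    (hmonoY : ∀ᵐ ω ∂μ, Y0 ω ≤ Y1 ω)
    (hcc : 0 < μ {ω | D0 ω < D1 ω ∧ Y0 ω < Y1 ω}) :
    cmean μ (fun ω => h (X ω)) {ω | D0 ω < D1 ω ∧ Y0 ω < Y1 ω}
      = (cmean μ (fun ω => h (X ω) * Y ω) {ω | Z ω = 1}
          - cmean μ (fun ω => h (X ω) * Y ω) {ω | Z ω = 0})
        / (cmean μ Y {ω | Z ω = 1} - cmean μ Y {ω | Z ω = 0}) := by
  classical
  set S := {ω | D0 ω < D1 ω ∧ Y0 ω < Y1 ω} with hSdef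
  have hSm : MeasurableSet S := (measurableSet_lt hD0m hD1m).inter (measurableSet_lt hY0m hY1m)
  have hZ1m : MeasurableSet {ω | Z ω = 1} := hZm (measurableSet_singleton 1)
  have hZ0m : MeasurableSet {ω | Z ω = 0} := hZm (measurableSet_singleton 0)
  have hZ0c : {ω | Z ω = 0} = {ω | Z ω = 1}ᶜ := by
    ext ω; rcases hZbin ω with hω | hω <;> simp [hω]
  have hμZ1 : (μ {ω | Z ω = 1}).toReal ≠ 0 :=
    ENNReal.toReal_ne_zero.mpr ⟨hz0.ne', measure_ne_top μ _⟩
  have hμZ0 : (μ {ω | Z ω = 0}).toReal ≠ 0 := by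
    rw [hZ0c]
    refine ENNReal.toReal_ne_zero.mpr ⟨?_, measure_ne_top μ _⟩
    rw [prob_compl_eq_one_sub hZ1m]
    intro hc
    rw [tsub_eq_zero_iff_le] at hc
    exact hz1.not_ge hc
  -- the four "reduced form" functions
  set g1 : Ω → ℝ := fun ω => h (X ω) * (D1 ω * Y1 ω + (1 - D1 ω) * Y0 ω) with hg1def
  set g0 : Ω → ℝ := fun ω => h (X ω) * (D0 ω * Y1 ω + (1 - D0 ω) * Y0 ω) with hg0def
  set f1 : Ω → ℝ := fun ω => D1 ω * Y1 ω + (1 - D1 ω) * Y0 ω with hf1def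
  set f0 : Ω → ℝ := fun ω => D0 ω * Y1 ω + (1 - D0 ω) * Y0 ω with hf0def
  have hbd : ∀ d y0 y1 : ℝ, (d = 0 ∨ d = 1) → (y0 = 0 ∨ y0 = 1) → (y1 = 0 ∨ y1 = 1) →
      ‖d * y1 + (1 - d) * y0‖ ≤ 1 := by
    rintro d y0 y1 (rfl | rfl) (rfl | rfl) (rfl | rfl) <;> norm_num
  have hf1m : Measurable f1 := (hD1m.mul hY1m).add ((measurable_const.sub hD1m).mul hY0m)
  have hf0m : Measurable f0 := (hD0m.mul hY1m).add ((measurable_const.sub hD0m).mul hY0m)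
  have hf1int : Integrable f1 μ := by
    refine (integrable_const (1 : ℝ)).mono' hf1m.aestronglyMeasurable ?_
    filter_upwards with ω
    exact hbd _ _ _ (hD1bin ω) (hY0bin ω) (hY1bin ω)
  have hf0int : Integrable f0 μ := by
    refine (integrable_const (1 : ℝ)).mono' hf0m.aestronglyMeasurable ?_
    filter_upwards with ω
    exact hbd _ _ _ (hD0bin ω) (hY0bin ω) (hY1bin ω)
  have hg1int : Integrable g1 μ := by
    refine hint.norm.mono' ((hhm.comp hXm).mul hf1m).aestronglyMeasurable ?_
    filter_upwards with ω
    calc ‖h (X ω) * f1 ω‖ = ‖h (X ω)‖ * ‖f1 ω‖ := norm_mul _ _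
      _ ≤ ‖h (X ω)‖ * 1 := by
          exact mul_le_mul_of_nonneg_left (hbd _ _ _ (hD1bin ω) (hY0bin ω) (hY1bin ω))
            (norm_nonneg _)
      _ = ‖h (X ω)‖ := mul_one _
  have hg0int : Integrable g0 μ := by
    refine hint.norm.mono' ((hhm.comp hXm).mul hf0m).aestronglyMeasurable ?_
    filter_upwards with ω
    calc ‖h (X ω) * f0 ω‖ = ‖h (X ω)‖ * ‖f0 ω‖ := norm_mul _ _
      _ ≤ ‖h (X ω)‖ * 1 := by
          exact mul_le_mul_of_nonneg_left (hbd _ _ _ (hD0bin ω) (hY0bin ω) (hY1bin ω))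
            (norm_nonneg _)
      _ = ‖h (X ω)‖ := mul_one _
  -- independence of the reduced-form functions from indicators of Z
  have hψm : ∀ c : ℝ, Measurable (fun t : ℝ => ({c} : Set ℝ).indicator (fun _ => (1 : ℝ)) t) :=
    fun c => measurable_const.indicator (measurableSet_singleton c)
  have hindic : ∀ c : ℝ, ({ω | Z ω = c}.indicator (fun _ => (1 : ℝ)))
      = (fun t : ℝ => ({c} : Set ℝ).indicator (fun _ => (1 : ℝ)) t) ∘ Z := by
    intro c; funext ω
    simp [Set.indicator_apply, Set.mem_setOf_eq]
  have hφ1m : Measurable (fun p : ℝ × ℝ × ℝ × ℝ × ℝ =>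
      h p.1 * (p.2.2.2.2 * p.2.2.1 + (1 - p.2.2.2.2) * p.2.1)) := by
    fun_prop
  have hφ0m : Measurable (fun p : ℝ × ℝ × ℝ × ℝ × ℝ =>
      h p.1 * (p.2.2.2.1 * p.2.2.1 + (1 - p.2.2.2.1) * p.2.1)) := by
    fun_prop
  have hχ1m : Measurable (fun p : ℝ × ℝ × ℝ × ℝ × ℝ =>
      p.2.2.2.2 * p.2.2.1 + (1 - p.2.2.2.2) * p.2.1) := by fun_prop
  have hχ0m : Measurable (fun p : ℝ × ℝ × ℝ × ℝ × ℝ =>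
      p.2.2.2.1 * p.2.2.1 + (1 - p.2.2.2.1) * p.2.1) := by fun_prop
  have hg1ind : ∀ c : ℝ, IndepFun g1 ({ω | Z ω = c}.indicator (fun _ => (1 : ℝ))) μ := by
    intro c; rw [hindic c]; exact hindep.comp hφ1m (hψm c)
  have hg0ind : ∀ c : ℝ, IndepFun g0 ({ω | Z ω = c}.indicator (fun _ => (1 : ℝ))) μ := by
    intro c; rw [hindic c]; exact hindep.comp hφ0m (hψm c)
  have hf1ind : ∀ c : ℝ, IndepFun f1 ({ω | Z ω = c}.indicator (fun _ => (1 : ℝ))) μ := by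
    intro c; rw [hindic c]; exact hindep.comp hχ1m (hψm c)
  have hf0ind : ∀ c : ℝ, IndepFun f0 ({ω | Z ω = c}.indicator (fun _ => (1 : ℝ))) μ := by
    intro c; rw [hindic c]; exact hindep.comp hχ0m (hψm c)
  -- key computation: set integral over {Z = c} factorizes
  have key : ∀ (g : Ω → ℝ) (c : ℝ), MeasurableSet {ω | Z ω = c} → Integrable g μ →
      IndepFun g ({ω | Z ω = c}.indicator (fun _ => (1 : ℝ))) μ →
      ∫ ω in {ω | Z ω = c}, g ω ∂μ = (∫ ω, g ω ∂μ) * (μ {ω | Z ω = c}).toReal := by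
    intro g c hsm hgint hgind
    have h1 : ∫ ω in {ω | Z ω = c}, g ω ∂μ = ∫ ω, ({ω | Z ω = c}.indicator g) ω ∂μ :=
      (integral_indicator hsm).symm
    have h2 : ({ω | Z ω = c}.indicator g)
        = g * ({ω | Z ω = c}.indicator (fun _ => (1 : ℝ))) := by
      funext ω; by_cases hω : ω ∈ {ω | Z ω = c} <;> simp [hω]
    have hIint : Integrable ({ω | Z ω = c}.indicator (fun _ => (1 : ℝ))) μ :=
      (integrable_const (1 : ℝ)).indicator hsm
    rw [h1, h2, hgind.integral_mul_eq_mul_integral hgint.aestronglyMeasurable hIint.aestronglyMeasurable]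
    congr 1
    exact integral_indicator_one (μ := μ) hsm
  -- the four cmean computations
  have e1 : cmean μ (fun ω => h (X ω) * Y ω) {ω | Z ω = 1} = ∫ ω, g1 ω ∂μ := by
    unfold cmean
    have hc : ∫ ω in {ω | Z ω = 1}, h (X ω) * Y ω ∂μ = ∫ ω in {ω | Z ω = 1}, g1 ω ∂μ := by
      refine setIntegral_congr_fun hZ1m ?_
      intro ω hω
      have hz : Z ω = 1 := hω
      simp only [hg1def, hY ω, hD ω, hz]; ring_nf
    rw [hc, key g1 1 hZ1m hg1int (hg1ind 1), mul_div_assoc, div_self hμZ1, mul_one]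
  have e0 : cmean μ (fun ω => h (X ω) * Y ω) {ω | Z ω = 0} = ∫ ω, g0 ω ∂μ := by
    unfold cmean
    have hc : ∫ ω in {ω | Z ω = 0}, h (X ω) * Y ω ∂μ = ∫ ω in {ω | Z ω = 0}, g0 ω ∂μ := by
      refine setIntegral_congr_fun hZ0m ?_
      intro ω hω
      have hz : Z ω = 0 := hω
      simp only [hg0def, hY ω, hD ω, hz]; ring_nf
    rw [hc, key g0 0 hZ0m hg0int (hg0ind 0), mul_div_assoc, div_self hμZ0, mul_one]
  have ey1 : cmean μ Y {ω | Z ω = 1} = ∫ ω, f1 ω ∂μ := by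
    unfold cmean
    have hc : ∫ ω in {ω | Z ω = 1}, Y ω ∂μ = ∫ ω in {ω | Z ω = 1}, f1 ω ∂μ := by
      refine setIntegral_congr_fun hZ1m ?_
      intro ω hω
      have hz : Z ω = 1 := hω
      simp only [hf1def, hY ω, hD ω, hz]; ring_nf
    rw [hc, key f1 1 hZ1m hf1int (hf1ind 1), mul_div_assoc, div_self hμZ1, mul_one]
  have ey0 : cmean μ Y {ω | Z ω = 0} = ∫ ω, f0 ω ∂μ := by
    unfold cmean
    have hc : ∫ ω in {ω | Z ω = 0}, Y ω ∂μ = ∫ ω in {ω | Z ω = 0}, f0 ω ∂μ := by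
      refine setIntegral_congr_fun hZ0m ?_
      intro ω hω
      have hz : Z ω = 0 := hω
      simp only [hf0def, hY ω, hD ω, hz]; ring_nf
    rw [hc, key f0 0 hZ0m hf0int (hf0ind 0), mul_div_assoc, div_self hμZ0, mul_one]
  -- the compliance indicator identity
  have hchi : ∀ᵐ ω ∂μ, (D1 ω - D0 ω) * (Y1 ω - Y0 ω) = S.indicator (fun _ => (1 : ℝ)) ω := by
    filter_upwards [hmonoD, hmonoY] with ω hd hy
    rcases hD0bin ω with h0 | h0 <;> rcases hD1bin ω with h1 | h1 <;>
      rcases hY0bin ω with h2 | h2 <;> rcases hY1bin ω with h3 | h3 <;>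
      (revert hd hy; norm_num [h0, h1, h2, h3, hSdef, Set.indicator_apply, Set.mem_setOf_eq])
  have numdiff : (∫ ω, g1 ω ∂μ) - (∫ ω, g0 ω ∂μ) = ∫ ω in S, h (X ω) ∂μ := by
    rw [← integral_sub hg1int hg0int]
    have hae : (fun ω => g1 ω - g0 ω) =ᵐ[μ] S.indicator (fun ω => h (X ω)) := by
      filter_upwards [hchi] with ω hω
      have hrw : g1 ω - g0 ω = h (X ω) * ((D1 ω - D0 ω) * (Y1 ω - Y0 ω)) := by
        simp only [hg1def, hg0def]; ring
      rw [hrw, hω]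
      by_cases hmem : ω ∈ S <;> simp [hmem]
    rw [integral_congr_ae hae, integral_indicator hSm]
  have dendiff : (∫ ω, f1 ω ∂μ) - (∫ ω, f0 ω ∂μ) = (μ S).toReal := by
    rw [← integral_sub hf1int hf0int]
    have hae : (fun ω => f1 ω - f0 ω) =ᵐ[μ] S.indicator (fun _ => (1 : ℝ)) := by
      filter_upwards [hchi] with ω hω
      have hrw : f1 ω - f0 ω = (D1 ω - D0 ω) * (Y1 ω - Y0 ω) := by
        simp only [hf1def, hf0def]; ring
      rw [hrw, hω]
    rw [integral_congr_ae hae]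
    exact integral_indicator_one (μ := μ) hSm
  rw [e1, e0, ey1, ey0, numdiff, dendiff]
  rfl
end

section
/- With κ, κ0, κ1 as defined and π = κ − (κ0·Y + κ1·(1−Y)), for any integrable h(X), E[π·h(X)] = E[h(X)Y | Z=1] − E[h(X)Y | Z=0], under independence of (X, Y0, Y1, D0, D1) from Z. -/
open MeasureTheory ProbabilityTheory

theorem pi_weight_identity
    {Ω : Type} [MeasurableSpace Ω] (μ : Measure Ω) [IsProbabilityMeasure μ]
    (Z D0 D1 Y0 Y1 D Y X : Ω → ℝ)
    (hZm : Measurable Z) (hD0m : Measurable D0) (hD1m : Measurable D1)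
    (hY0m : Measurable Y0) (hY1m : Measurable Y1) (hXm : Measurable X)
    (hZbin : ∀ ω, Z ω = 0 ∨ Z ω = 1)
    (hD0bin : ∀ ω, D0 ω = 0 ∨ D0 ω = 1)
    (hD1bin : ∀ ω, D1 ω = 0 ∨ D1 ω = 1)
    (hY0bin : ∀ ω, Y0 ω = 0 ∨ Y0 ω = 1)
    (hY1bin : ∀ ω, Y1 ω = 0 ∨ Y1 ω = 1)
    (hD : ∀ ω, D ω = Z ω * D1 ω + (1 - Z ω) * D0 ω)
    (hY : ∀ ω, Y ω = D ω * Y1 ω + (1 - D ω) * Y0 ω)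
    (hindep : IndepFun (fun ω => (X ω, Y0 ω, Y1 ω, D0 ω, D1 ω)) Z μ)
    (hz0 : 0 < μ {ω | Z ω = 1}) (hz1 : μ {ω | Z ω = 1} < 1)
    (κ κ0 κ1 π : Ω → ℝ)
    (hκ : ∀ ω, κ ω = 1 - D ω * (1 - Z ω) / (μ {ω' | Z ω' = 0}).toReal
        - (1 - D ω) * Z ω / (μ {ω' | Z ω' = 1}).toReal)
    (hκ0 : ∀ ω, κ0 ω = (1 - D ω) * (1 - Z ω) / (μ {ω' | Z ω' = 0}).toReal
        - (1 - D ω) * Z ω / (μ {ω' | Z ω' = 1}).toReal)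
    (hκ1 : ∀ ω, κ1 ω = D ω * Z ω / (μ {ω' | Z ω' = 1}).toReal
        - D ω * (1 - Z ω) / (μ {ω' | Z ω' = 0}).toReal)
    (hπ : ∀ ω, π ω = κ ω - (κ0 ω * Y ω + κ1 ω * (1 - Y ω)))
    (h : ℝ → ℝ) (hhm : Measurable h)
    (hint : Integrable (fun ω => h (X ω)) μ) :
    (∫ ω, π ω * h (X ω) ∂μ)
      = cmean μ (fun ω => h (X ω) * Y ω) {ω | Z ω = 1}
        - cmean μ (fun ω => h (X ω) * Y ω) {ω | Z ω = 0} := by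

  classical
  set s1 : Set Ω := {ω | Z ω = 1} with hs1def
  set s0 : Set Ω := {ω | Z ω = 0} with hs0def
  have hs1 : MeasurableSet s1 := hZm (measurableSet_singleton 1)
  have hs0 : MeasurableSet s0 := hZm (measurableSet_singleton 0)
  set p : ℝ := (μ s1).toReal with hpdef
  set q : ℝ := (μ s0).toReal with hqdef
  have hcompl : s0 = s1ᶜ := by
    ext ω; simp only [Set.mem_setOf_eq, Set.mem_compl_iff, hs0def, hs1def]
    rcases hZbin ω with h | h <;> simp [h]
  have hμ0 : μ s0 = 1 - μ s1 := by
    rw [hcompl, prob_compl_eq_one_sub hs1]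
  have hp : 0 < p := ENNReal.toReal_pos hz0.ne' (measure_ne_top _ _)
  have hq : 0 < q := by
    apply ENNReal.toReal_pos _ (measure_ne_top _ _)
    rw [hμ0]
    simpa using (tsub_pos_iff_lt.mpr hz1).ne'
  have hp' : p ≠ 0 := hp.ne'
  have hq' : q ≠ 0 := hq.ne'
  -- D and Y are binary
  have hDbin : ∀ ω, D ω = 0 ∨ D ω = 1 := by
    intro ω; rw [hD ω]
    rcases hZbin ω with h | h <;> rcases hD0bin ω with h0 | h0 <;>
      rcases hD1bin ω with h1 | h1 <;> simp [h, h0, h1]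
  have hYbin : ∀ ω, Y ω = 0 ∨ Y ω = 1 := by
    intro ω; rw [hY ω]
    rcases hDbin ω with h | h <;> rcases hY0bin ω with h0 | h0 <;>
      rcases hY1bin ω with h1 | h1 <;> simp [h, h0, h1]
  have hDm : Measurable D := by
    have : D = fun ω => Z ω * D1 ω + (1 - Z ω) * D0 ω := funext hD
    rw [this]; fun_prop
  have hYm : Measurable Y := by
    have : Y = fun ω => D ω * Y1 ω + (1 - D ω) * Y0 ω := funext hY
    rw [this]; fun_prop
  -- integrable pieces
  have habs : ∀ x : ℝ, (x = 0 ∨ x = 1) → ‖x‖ ≤ 1 := by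
    rintro x (h | h) <;> simp [h]
  have hintZ : Integrable (fun ω => Z ω * h (X ω)) μ :=
    hint.bdd_mul (c := 1) hZm.aestronglyMeasurable (Filter.Eventually.of_forall fun ω => habs _ (hZbin ω))
  have hintg : Integrable (fun ω => (Z ω * Y ω) * h (X ω)) μ := by
    refine hint.bdd_mul (c := 1) (hZm.mul hYm).aestronglyMeasurable (Filter.Eventually.of_forall fun ω => ?_)
    rcases hZbin ω with h | h <;> rcases hYbin ω with h' | h' <;> simp [h, h']
  have hintg0 : Integrable (fun ω => ((1 - Z ω) * Y ω) * h (X ω)) μ := by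
    refine hint.bdd_mul (c := 1) (((measurable_const.sub hZm).mul hYm).aestronglyMeasurable) (Filter.Eventually.of_forall fun ω => ?_)
    rcases hZbin ω with h | h <;> rcases hYbin ω with h' | h' <;> simp [h, h']
  -- pointwise identity
  have hptwise : ∀ ω, π ω * h (X ω)
      = (h (X ω) - p⁻¹ * (Z ω * h (X ω)))
        + (p⁻¹ * ((Z ω * Y ω) * h (X ω)) - q⁻¹ * (((1 - Z ω) * Y ω) * h (X ω))) := by
    intro ω
    rw [hπ ω, hκ ω, hκ0 ω, hκ1 ω]
    field_simp
    ring
  -- split the integral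
  have hsplit : (∫ ω, π ω * h (X ω) ∂μ)
      = ((∫ ω, h (X ω) ∂μ) - p⁻¹ * ∫ ω, Z ω * h (X ω) ∂μ)
        + (p⁻¹ * (∫ ω, (Z ω * Y ω) * h (X ω) ∂μ)
          - q⁻¹ * ∫ ω, ((1 - Z ω) * Y ω) * h (X ω) ∂μ) := by
    rw [integral_congr_ae (Filter.Eventually.of_forall hptwise)]
    have i1 : Integrable (fun ω => h (X ω) - p⁻¹ * (Z ω * h (X ω))) μ :=
      hint.sub (hintZ.const_mul _)
    have i2 : Integrable (fun ω => p⁻¹ * ((Z ω * Y ω) * h (X ω))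
        - q⁻¹ * (((1 - Z ω) * Y ω) * h (X ω))) μ :=
      (hintg.const_mul _).sub (hintg0.const_mul _)
    rw [integral_add i1 i2, integral_sub hint (hintZ.const_mul _),
      integral_sub (hintg.const_mul _) (hintg0.const_mul _),
      integral_const_mul, integral_const_mul, integral_const_mul]
  -- independence: E[Z · h(X)] = E[Z] · E[h(X)]
  have hZint : Integrable Z μ := by
    refine (integrable_const (1:ℝ)).mono' hZm.aestronglyMeasurable ?_
    exact Filter.Eventually.of_forall fun ω => habs _ (hZbin ω)
  have hIndep2 : IndepFun (fun ω => h (X ω)) Z μ := by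
    have := hindep.comp (φ := fun v : ℝ × ℝ × ℝ × ℝ × ℝ => h v.1) (ψ := id)
      (hhm.comp measurable_fst) measurable_id
    exact this
  have hEZ : (∫ ω, Z ω ∂μ) = p := by
    have hZind : Z = fun ω => Set.indicator s1 (fun _ => (1:ℝ)) ω := by
      funext ω
      rcases hZbin ω with h | h <;>
        simp [Set.indicator, hs1def, Set.mem_setOf_eq, h]
    rw [hZind, integral_indicator hs1]
    simp [hpdef, measureReal_def]
  have hmul : (∫ ω, Z ω * h (X ω) ∂μ) = p * ∫ ω, h (X ω) ∂μ := by
    have := hIndep2.symm.integral_fun_mul_eq_mul_integral hZm.aestronglyMeasurable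
      (hhm.comp hXm).aestronglyMeasurable
    rw [this, hEZ]
  -- set integrals
  have hC : (∫ ω, (Z ω * Y ω) * h (X ω) ∂μ) = ∫ ω in s1, h (X ω) * Y ω ∂μ := by
    rw [← integral_indicator hs1]
    congr 1; funext ω
    rcases hZbin ω with h | h <;>
      simp [Set.indicator, hs1def, Set.mem_setOf_eq, h, mul_comm]
  have hC0 : (∫ ω, ((1 - Z ω) * Y ω) * h (X ω) ∂μ) = ∫ ω in s0, h (X ω) * Y ω ∂μ := by
    rw [← integral_indicator hs0]
    congr 1; funext ω
    rcases hZbin ω with h | h <;>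
      simp [Set.indicator, hs0def, Set.mem_setOf_eq, h, mul_comm]
  rw [hsplit, hmul, hC, hC0]
  unfold cmean
  rw [← hpdef, ← hqdef]
  field_simp
  ring
end

section
/- Under random assignment, exclusion, treatment monotonicity, and outcome monotonicity with binary Y, the following three inequalities hold: (i) Pr(Y=0, D=1 | Z=1) ≥ Pr(Y=0, D=1 | Z=0); (ii) Pr(Y=1, D=0 | Z=0) ≥ Pr(Y=1, D=0 | Z=1); (iii) Pr(Y=1 | Z=1) ≥ Pr(Y=1 | Z=0). -/
open MeasureTheory ProbabilityTheory

/-- Conditional probability of event `s` given event `t`. -/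
noncomputable def cprob {Ω : Type} [MeasurableSpace Ω] (μ : Measure Ω)
    (s t : Set Ω) : ℝ :=
  (μ (s ∩ t)).toReal / (μ t).toReal

theorem testable_implications
    {Ω : Type} [MeasurableSpace Ω] (μ : Measure Ω) [IsProbabilityMeasure μ]
    (Z D0 D1 Y0 Y1 D Y : Ω → ℝ)
    (hZm : Measurable Z) (hD0m : Measurable D0) (hD1m : Measurable D1)
    (hY0m : Measurable Y0) (hY1m : Measurable Y1)
    (hZbin : ∀ ω, Z ω = 0 ∨ Z ω = 1)
    (hD0bin : ∀ ω, D0 ω = 0 ∨ D0 ω = 1)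
    (hD1bin : ∀ ω, D1 ω = 0 ∨ D1 ω = 1)
    (hY0bin : ∀ ω, Y0 ω = 0 ∨ Y0 ω = 1)
    (hY1bin : ∀ ω, Y1 ω = 0 ∨ Y1 ω = 1)
    (hD : ∀ ω, D ω = Z ω * D1 ω + (1 - Z ω) * D0 ω)
    (hY : ∀ ω, Y ω = D ω * Y1 ω + (1 - D ω) * Y0 ω)
    (hindep : IndepFun (fun ω => (Y0 ω, Y1 ω, D0 ω, D1 ω)) Z μ)
    (hz0 : 0 < μ {ω | Z ω = 1}) (hz1 : μ {ω | Z ω = 1} < 1)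
    (hmonoD : ∀ᵐ ω ∂μ, D0 ω ≤ D1 ω)
    (hmonoY : ∀ᵐ ω ∂μ, Y0 ω ≤ Y1 ω) :
    cprob μ {ω | Y ω = 0 ∧ D ω = 1} {ω | Z ω = 1}
        ≥ cprob μ {ω | Y ω = 0 ∧ D ω = 1} {ω | Z ω = 0}
    ∧ cprob μ {ω | Y ω = 1 ∧ D ω = 0} {ω | Z ω = 0}
        ≥ cprob μ {ω | Y ω = 1 ∧ D ω = 0} {ω | Z ω = 1}
    ∧ cprob μ {ω | Y ω = 1} {ω | Z ω = 1}
        ≥ cprob μ {ω | Y ω = 1} {ω | Z ω = 0} := by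
  set W : Ω → ℝ × ℝ × ℝ × ℝ := fun ω => (Y0 ω, Y1 ω, D0 ω, D1 ω) with hWdef
  -- {Z = 0} is the complement of {Z = 1}
  have hZcompl : {ω | Z ω = 0} = {ω | Z ω = 1}ᶜ := by
    ext ω
    rcases hZbin ω with h | h <;> simp [h]
  have hZ1meas : MeasurableSet {ω | Z ω = 1} := hZm (measurableSet_singleton 1)
  have hμZ1ne : μ {ω | Z ω = 1} ≠ 0 := hz0.ne'
  have hμZ0ne : μ {ω | Z ω = 0} ≠ 0 := by
    rw [hZcompl, measure_compl hZ1meas (measure_ne_top μ _)]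
    simp only [measure_univ]
    intro h
    have := tsub_eq_zero_iff_le.mp h
    exact absurd this (not_le.mpr hz1)
  -- key reduction: conditional prob equals unconditional prob of potential-outcome event
  have key : ∀ (A : Set Ω) (S : Set (ℝ × ℝ × ℝ × ℝ)) (z : ℝ),
      MeasurableSet S → μ {ω | Z ω = z} ≠ 0 →
      A ∩ {ω | Z ω = z} = W ⁻¹' S ∩ Z ⁻¹' {z} →
      cprob μ A {ω | Z ω = z} = (μ (W ⁻¹' S)).toReal := by
    intro A S z hS hne hEq
    have hmul : μ (W ⁻¹' S ∩ Z ⁻¹' {z}) = μ (W ⁻¹' S) * μ (Z ⁻¹' {z}) :=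
      hindep.measure_inter_preimage_eq_mul S {z} hS (measurableSet_singleton z)
    have hZz : {ω | Z ω = z} = Z ⁻¹' {z} := rfl
    rw [cprob, hEq, hmul, ENNReal.toReal_mul, hZz]
    rw [mul_div_assoc, div_self, mul_one]
    exact ENNReal.toReal_ne_zero.mpr ⟨hne, measure_ne_top μ _⟩
  -- measure comparison from a.e. inclusion
  have comp : ∀ (s t : Set Ω), (∀ᵐ ω ∂μ, ω ∈ s → ω ∈ t) →
      (μ s).toReal ≤ (μ t).toReal := by
    intro s t h
    exact ENNReal.toReal_mono (measure_ne_top μ _) (measure_mono_ae h)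
  have mY0 : Measurable fun p : ℝ × ℝ × ℝ × ℝ => p.1 := measurable_fst
  have mY1 : Measurable fun p : ℝ × ℝ × ℝ × ℝ => p.2.1 :=
    measurable_fst.comp measurable_snd
  have mD0 : Measurable fun p : ℝ × ℝ × ℝ × ℝ => p.2.2.1 :=
    measurable_fst.comp (measurable_snd.comp measurable_snd)
  have mD1 : Measurable fun p : ℝ × ℝ × ℝ × ℝ => p.2.2.2 :=
    measurable_snd.comp (measurable_snd.comp measurable_snd)
  have ms1 : MeasurableSet {p : ℝ × ℝ × ℝ × ℝ | p.2.1 = 0 ∧ p.2.2.2 = 1} :=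
    (mY1 (measurableSet_singleton 0)).inter (mD1 (measurableSet_singleton 1))
  have ms2 : MeasurableSet {p : ℝ × ℝ × ℝ × ℝ | p.2.1 = 0 ∧ p.2.2.1 = 1} :=
    (mY1 (measurableSet_singleton 0)).inter (mD0 (measurableSet_singleton 1))
  have ms3 : MeasurableSet {p : ℝ × ℝ × ℝ × ℝ | p.1 = 1 ∧ p.2.2.1 = 0} :=
    (mY0 (measurableSet_singleton 1)).inter (mD0 (measurableSet_singleton 0))
  have ms4 : MeasurableSet {p : ℝ × ℝ × ℝ × ℝ | p.1 = 1 ∧ p.2.2.2 = 0} :=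
    (mY0 (measurableSet_singleton 1)).inter (mD1 (measurableSet_singleton 0))
  have ms5 : MeasurableSet {p : ℝ × ℝ × ℝ × ℝ |
      (p.2.2.2 = 1 ∧ p.2.1 = 1) ∨ (p.2.2.2 = 0 ∧ p.1 = 1)} :=
    ((mD1 (measurableSet_singleton 1)).inter (mY1 (measurableSet_singleton 1))).union
      ((mD1 (measurableSet_singleton 0)).inter (mY0 (measurableSet_singleton 1)))
  have ms6 : MeasurableSet {p : ℝ × ℝ × ℝ × ℝ |
      (p.2.2.1 = 1 ∧ p.2.1 = 1) ∨ (p.2.2.1 = 0 ∧ p.1 = 1)} :=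
    ((mD0 (measurableSet_singleton 1)).inter (mY1 (measurableSet_singleton 1))).union
      ((mD0 (measurableSet_singleton 0)).inter (mY0 (measurableSet_singleton 1)))
  refine ⟨?_, ?_, ?_⟩
  · -- (i)
    have h1 : cprob μ {ω | Y ω = 0 ∧ D ω = 1} {ω | Z ω = 1}
        = (μ (W ⁻¹' {p : ℝ × ℝ × ℝ × ℝ | p.2.1 = 0 ∧ p.2.2.2 = 1})).toReal := by
      apply key _ _ _ ms1 hμZ1ne
      ext ω
      simp only [Set.mem_inter_iff, Set.mem_setOf_eq, Set.mem_preimage,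
        Set.mem_singleton_iff, hWdef]
      constructor
      · rintro ⟨⟨hy, hd⟩, hz⟩
        have hd1 : D1 ω = 1 := by have := hD ω; rw [hz] at this; linarith
        have hy1 : Y1 ω = 0 := by have := hY ω; rw [hd] at this; linarith
        exact ⟨⟨hy1, hd1⟩, hz⟩
      · rintro ⟨⟨hy1, hd1⟩, hz⟩
        have hd : D ω = 1 := by rw [hD ω, hz, hd1]; ring
        have hy : Y ω = 0 := by rw [hY ω, hd, hy1]; ring
        exact ⟨⟨hy, hd⟩, hz⟩
    have h0 : cprob μ {ω | Y ω = 0 ∧ D ω = 1} {ω | Z ω = 0}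
        = (μ (W ⁻¹' {p : ℝ × ℝ × ℝ × ℝ | p.2.1 = 0 ∧ p.2.2.1 = 1})).toReal := by
      apply key _ _ _ ms2 hμZ0ne
      ext ω
      simp only [Set.mem_inter_iff, Set.mem_setOf_eq, Set.mem_preimage,
        Set.mem_singleton_iff, hWdef]
      constructor
      · rintro ⟨⟨hy, hd⟩, hz⟩
        have hd0 : D0 ω = 1 := by have := hD ω; rw [hz] at this; linarith
        have hy1 : Y1 ω = 0 := by have := hY ω; rw [hd] at this; linarith
        exact ⟨⟨hy1, hd0⟩, hz⟩
      · rintro ⟨⟨hy1, hd0⟩, hz⟩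
        have hd : D ω = 1 := by rw [hD ω, hz, hd0]; ring
        have hy : Y ω = 0 := by rw [hY ω, hd, hy1]; ring
        exact ⟨⟨hy, hd⟩, hz⟩
    rw [h1, h0]
    apply comp
    filter_upwards [hmonoD] with ω hm
    simp only [Set.mem_preimage, Set.mem_setOf_eq, hWdef]
    rintro ⟨hy1, hd0⟩
    refine ⟨hy1, ?_⟩
    rcases hD1bin ω with h | h
    · rw [hd0] at hm; rw [h] at hm; linarith
    · exact h
  · -- (ii)
    have h0 : cprob μ {ω | Y ω = 1 ∧ D ω = 0} {ω | Z ω = 0}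
        = (μ (W ⁻¹' {p : ℝ × ℝ × ℝ × ℝ | p.1 = 1 ∧ p.2.2.1 = 0})).toReal := by
      apply key _ _ _ ms3 hμZ0ne
      ext ω
      simp only [Set.mem_inter_iff, Set.mem_setOf_eq, Set.mem_preimage,
        Set.mem_singleton_iff, hWdef]
      constructor
      · rintro ⟨⟨hy, hd⟩, hz⟩
        have hd0 : D0 ω = 0 := by have := hD ω; rw [hz] at this; linarith
        have hy0 : Y0 ω = 1 := by have := hY ω; rw [hd] at this; linarith
        exact ⟨⟨hy0, hd0⟩, hz⟩
      · rintro ⟨⟨hy0, hd0⟩, hz⟩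
        have hd : D ω = 0 := by rw [hD ω, hz, hd0]; ring
        have hy : Y ω = 1 := by rw [hY ω, hd, hy0]; ring
        exact ⟨⟨hy, hd⟩, hz⟩
    have h1 : cprob μ {ω | Y ω = 1 ∧ D ω = 0} {ω | Z ω = 1}
        = (μ (W ⁻¹' {p : ℝ × ℝ × ℝ × ℝ | p.1 = 1 ∧ p.2.2.2 = 0})).toReal := by
      apply key _ _ _ ms4 hμZ1ne
      ext ω
      simp only [Set.mem_inter_iff, Set.mem_setOf_eq, Set.mem_preimage,
        Set.mem_singleton_iff, hWdef]
      constructor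
      · rintro ⟨⟨hy, hd⟩, hz⟩
        have hd1 : D1 ω = 0 := by have := hD ω; rw [hz] at this; linarith
        have hy0 : Y0 ω = 1 := by have := hY ω; rw [hd] at this; linarith
        exact ⟨⟨hy0, hd1⟩, hz⟩
      · rintro ⟨⟨hy0, hd1⟩, hz⟩
        have hd : D ω = 0 := by rw [hD ω, hz, hd1]; ring
        have hy : Y ω = 1 := by rw [hY ω, hd, hy0]; ring
        exact ⟨⟨hy, hd⟩, hz⟩
    rw [h0, h1]
    apply comp
    filter_upwards [hmonoD] with ω hm
    simp only [Set.mem_preimage, Set.mem_setOf_eq, hWdef]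
    rintro ⟨hy0, hd1⟩
    refine ⟨hy0, ?_⟩
    rcases hD0bin ω with h | h
    · exact h
    · rw [hd1] at hm; rw [h] at hm; linarith
  · -- (iii)
    have h1 : cprob μ {ω | Y ω = 1} {ω | Z ω = 1}
        = (μ (W ⁻¹' {p : ℝ × ℝ × ℝ × ℝ |
            (p.2.2.2 = 1 ∧ p.2.1 = 1) ∨ (p.2.2.2 = 0 ∧ p.1 = 1)})).toReal := by
      apply key _ _ _ ms5 hμZ1ne
      ext ω
      simp only [Set.mem_inter_iff, Set.mem_setOf_eq, Set.mem_preimage,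
        Set.mem_singleton_iff, hWdef]
      constructor
      · rintro ⟨hy, hz⟩
        have hd : D ω = D1 ω := by have := hD ω; rw [hz] at this; linarith
        have hYe := hY ω
        rw [hd] at hYe
        refine ⟨?_, hz⟩
        rcases hD1bin ω with h | h
        · exact Or.inr ⟨h, by rw [h] at hYe; linarith⟩
        · exact Or.inl ⟨h, by rw [h] at hYe; linarith⟩
      · rintro ⟨hc, hz⟩
        have hd : D ω = D1 ω := by have := hD ω; rw [hz] at this; linarith
        refine ⟨?_, hz⟩
        rcases hc with ⟨hd1, hv⟩ | ⟨hd1, hv⟩ <;>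
          · rw [hY ω, hd, hd1, hv]; ring
    have h0 : cprob μ {ω | Y ω = 1} {ω | Z ω = 0}
        = (μ (W ⁻¹' {p : ℝ × ℝ × ℝ × ℝ |
            (p.2.2.1 = 1 ∧ p.2.1 = 1) ∨ (p.2.2.1 = 0 ∧ p.1 = 1)})).toReal := by
      apply key _ _ _ ms6 hμZ0ne
      ext ω
      simp only [Set.mem_inter_iff, Set.mem_setOf_eq, Set.mem_preimage,
        Set.mem_singleton_iff, hWdef]
      constructor
      · rintro ⟨hy, hz⟩
        have hd : D ω = D0 ω := by have := hD ω; rw [hz] at this; linarith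
        have hYe := hY ω
        rw [hd] at hYe
        refine ⟨?_, hz⟩
        rcases hD0bin ω with h | h
        · exact Or.inr ⟨h, by rw [h] at hYe; linarith⟩
        · exact Or.inl ⟨h, by rw [h] at hYe; linarith⟩
      · rintro ⟨hc, hz⟩
        have hd : D ω = D0 ω := by have := hD ω; rw [hz] at this; linarith
        refine ⟨?_, hz⟩
        rcases hc with ⟨hd0, hv⟩ | ⟨hd0, hv⟩ <;>
          · rw [hY ω, hd, hd0, hv]; ring
    rw [h1, h0]
    apply comp
    filter_upwards [hmonoD, hmonoY] with ω hmD hmY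
    simp only [Set.mem_preimage, Set.mem_setOf_eq, hWdef]
    rintro (⟨hd0, hy1⟩ | ⟨hd0, hy0⟩)
    · left
      refine ⟨?_, hy1⟩
      rcases hD1bin ω with h | h
      · rw [hd0, h] at hmD; linarith
      · exact h
    · have hy1 : Y1 ω = 1 := by
        rcases hY1bin ω with h | h
        · rw [hy0, h] at hmY; linarith
        · exact h
      rcases hD1bin ω with h | h
      · right; exact ⟨h, hy0⟩
      · left; exact ⟨h, hy1⟩
end

section
/- Sharpness of the testable implications: given any joint distribution of observables (Y, D, Z) with Y, D, Z binary and 0 < P(Z=1) < 1 satisfying Pr(Y=0,D=1|Z=1) ≥ Pr(Y=0,D=1|Z=0), Pr(Y=1,D=0|Z=0) ≥ Pr(Y=1,D=0|Z=1), and Pr(Y=1|Z=1) ≥ Pr(Y=1|Z=0), there exists a joint distribution of (Y1, Y0, D1, D0, Z) satisfying random assignment, treatment monotonicity (P(D1 ≥ D0)=1), and outcome monotonicity (P(Y1 ≥ Y0)=1) whose induced observed distribution of (D, Y, Z) with D = Z·D1+(1−Z)·D0 and Y = D·Y1+(1−D)·Y0 matches the given (Y, D, Z) distribution. -/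
open MeasureTheory ProbabilityTheory
open scoped ENNReal NNReal

lemma meas_sum {α : Type*} [MeasurableSpace α] [MeasurableSingletonClass α]
    (μ : Measure α) {n : ℕ} (pt : Fin n → α) (hinj : Function.Injective pt)
    (h : μ (Set.range pt)ᶜ = 0) {A : Set α} (hA : MeasurableSet A) :
    μ A = ∑ i : Fin n, μ {pt i} * A.indicator 1 (pt i) := by
  have hA' : μ A = μ (A ∩ Set.range pt) := by
    have h0 : μ (A \ Set.range pt) = 0 := measure_mono_null (fun x hx => hx.2) h
    rw [← measure_inter_add_diff A (Set.finite_range pt).measurableSet, h0, add_zero]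
  have hdec : A ∩ Set.range pt = ⋃ i, A ∩ {pt i} := by
    ext x
    simp only [Set.mem_inter_iff, Set.mem_range, Set.mem_iUnion, Set.mem_singleton_iff]
    constructor
    · rintro ⟨hx, i, rfl⟩; exact ⟨i, hx, rfl⟩
    · rintro ⟨i, hx, rfl⟩; exact ⟨hx, i, rfl⟩
  rw [hA', hdec, measure_iUnion ?_ (fun i => hA.inter (measurableSet_singleton _)), tsum_fintype]
  · apply Finset.sum_congr rfl
    intro i _
    by_cases hx : pt i ∈ A
    · rw [Set.inter_eq_self_of_subset_right (Set.singleton_subset_iff.2 hx)]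
      simp [Set.indicator_of_mem hx]
    · have : A ∩ {pt i} = ∅ := by
        rw [Set.inter_comm]; exact Set.singleton_inter_eq_empty.mpr hx
      rw [this]
      simp [Set.indicator_of_notMem hx]
  · intro i j hij
    simp only [Function.onFun]
    apply Set.disjoint_left.mpr
    rintro x ⟨_, hx1⟩ ⟨_, hx2⟩
    exact hij (hinj (by rw [Set.mem_singleton_iff] at hx1 hx2; rw [← hx1, ← hx2]))

noncomputable def pt8 : Fin 8 → ℝ × ℝ × ℝ := fun i =>
  if i = 0 then (0,0,0) else if i = 1 then (0,0,1) else if i = 2 then (0,1,0)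
  else if i = 3 then (0,1,1) else if i = 4 then (1,0,0) else if i = 5 then (1,0,1)
  else if i = 6 then (1,1,0) else (1,1,1)

lemma pt8_inj : Function.Injective pt8 := by
  intro i j hij
  fin_cases i <;> fin_cases j <;> simp_all [pt8, Prod.ext_iff]

lemma mem_range_pt8 {p : ℝ × ℝ × ℝ}
    (h : (p.1 = 0 ∨ p.1 = 1) ∧ (p.2.1 = 0 ∨ p.2.1 = 1) ∧ (p.2.2 = 0 ∨ p.2.2 = 1)) :
    p ∈ Set.range pt8 := by
  obtain ⟨h1 | h1, h2 | h2, h3 | h3⟩ := h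
  · exact ⟨0, by simp [pt8, Prod.ext_iff, h1, h2, h3]⟩
  · exact ⟨1, by simp [pt8, Prod.ext_iff, h1, h2, h3]⟩
  · exact ⟨2, by simp [pt8, Prod.ext_iff, h1, h2, h3]⟩
  · exact ⟨3, by simp [pt8, Prod.ext_iff, h1, h2, h3]⟩
  · exact ⟨4, by simp [pt8, Prod.ext_iff, h1, h2, h3]⟩
  · exact ⟨5, by simp [pt8, Prod.ext_iff, h1, h2, h3]⟩
  · exact ⟨6, by simp [pt8, Prod.ext_iff, h1, h2, h3]⟩
  · exact ⟨7, by simp [pt8, Prod.ext_iff, h1, h2, h3]⟩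

lemma ind_pre {α β : Type*} (f : α → β) (A : Set β) (x : α) :
    (f ⁻¹' A).indicator (1 : α → ℝ≥0∞) x = A.indicator 1 (f x) := rfl

lemma ind_inter {α : Type*} (S T : Set α) (x : α) :
    (S ∩ T).indicator (1 : α → ℝ≥0∞) x = S.indicator 1 x * T.indicator 1 x := by
  by_cases hS : x ∈ S <;> by_cases hT : x ∈ T <;>
    simp [Set.indicator_apply, hS, hT]

set_option maxHeartbeats 1000000 in
lemma keyIdents {b0 b1 b2 b3 b4 b5 b6 b7 p0 p1 : ℝ}
    (h0 : p0 = b0 + b2 + b4 + b6) (h1 : p1 = b1 + b3 + b5 + b7)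
    (hp0 : p0 ≠ 0) (hp1 : p1 ≠ 0) :
    (b1/p1) * p0 + ((b5+b7)/p1 - (b4+b6)/p0) * p0 + (b3/p1 - b2/p0) * p0 = b0
    ∧ (b1/p1) * p1 = b1
    ∧ (b2/p0) * p0 = b2
    ∧ (b2/p0) * p1 + (b3/p1 - b2/p0) * p1 = b3
    ∧ (b5/p1) * p0 + (b4/p0 - b5/p1) * p0 = b4
    ∧ (b5/p1) * p1 = b5
    ∧ (b6/p0) * p0 = b6
    ∧ (b6/p0) * p1 + (b4/p0 - b5/p1) * p1 + ((b5+b7)/p1 - (b4+b6)/p0) * p1 = b7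
    ∧ (b2/p0) + (b6/p0) + (b1/p1) + (b5/p1) + (b4/p0 - b5/p1)
        + ((b5+b7)/p1 - (b4+b6)/p0) + (b3/p1 - b2/p0) = 1 := by
  have e0 : b0 = p0 - b2 - b4 - b6 := by rw [h0]; ring
  have e1 : b1 = p1 - b3 - b5 - b7 := by rw [h1]; ring
  rw [e0, e1]
  and_intros <;> field_simp <;> ring

/-- Coordinates of the latent space `(Y₁, Y₀, D₁, D₀, Z)`. -/
noncomputable abbrev lY1 (q : ℝ × ℝ × ℝ × ℝ × ℝ) : ℝ := q.1
noncomputable abbrev lY0 (q : ℝ × ℝ × ℝ × ℝ × ℝ) : ℝ := q.2.1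
noncomputable abbrev lD1 (q : ℝ × ℝ × ℝ × ℝ × ℝ) : ℝ := q.2.2.1
noncomputable abbrev lD0 (q : ℝ × ℝ × ℝ × ℝ × ℝ) : ℝ := q.2.2.2.1
noncomputable abbrev lZ (q : ℝ × ℝ × ℝ × ℝ × ℝ) : ℝ := q.2.2.2.2

/-- Observed treatment induced by the latent variables. -/
noncomputable def lD (q : ℝ × ℝ × ℝ × ℝ × ℝ) : ℝ :=
  lZ q * lD1 q + (1 - lZ q) * lD0 q

/-- Observed (Y, D, Z) induced by the latent variables. -/
noncomputable def obsMap (q : ℝ × ℝ × ℝ × ℝ × ℝ) : ℝ × ℝ × ℝ :=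
  (lD q * lY1 q + (1 - lD q) * lY0 q, lD q, lZ q)

set_option maxHeartbeats 2000000 in
theorem sharpness_of_testable_implications
    (μ : Measure (ℝ × ℝ × ℝ)) [IsProbabilityMeasure μ]
    (hbin : ∀ᵐ p ∂μ, (p.1 = 0 ∨ p.1 = 1) ∧ (p.2.1 = 0 ∨ p.2.1 = 1)
        ∧ (p.2.2 = 0 ∨ p.2.2 = 1))
    (hz0 : 0 < μ {p | p.2.2 = 1}) (hz1 : μ {p | p.2.2 = 1} < 1)
    (h1 : cprob μ {p | p.1 = 0 ∧ p.2.1 = 1} {p | p.2.2 = 1}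
        ≥ cprob μ {p | p.1 = 0 ∧ p.2.1 = 1} {p | p.2.2 = 0})
    (h2 : cprob μ {p | p.1 = 1 ∧ p.2.1 = 0} {p | p.2.2 = 0}
        ≥ cprob μ {p | p.1 = 1 ∧ p.2.1 = 0} {p | p.2.2 = 1})
    (h3 : cprob μ {p | p.1 = 1} {p | p.2.2 = 1}
        ≥ cprob μ {p | p.1 = 1} {p | p.2.2 = 0}) :
    ∃ ν : Measure (ℝ × ℝ × ℝ × ℝ × ℝ), IsProbabilityMeasure ν
      ∧ (∀ᵐ q ∂ν, (lY1 q = 0 ∨ lY1 q = 1) ∧ (lY0 q = 0 ∨ lY0 q = 1)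
          ∧ (lD1 q = 0 ∨ lD1 q = 1) ∧ (lD0 q = 0 ∨ lD0 q = 1)
          ∧ (lZ q = 0 ∨ lZ q = 1))
      ∧ IndepFun (fun q => (lY1 q, lY0 q, lD1 q, lD0 q)) lZ ν
      ∧ (∀ᵐ q ∂ν, lD0 q ≤ lD1 q)
      ∧ (∀ᵐ q ∂ν, lY0 q ≤ lY1 q)
      ∧ Measure.map obsMap ν = μ := by
  classical
  have hfin : ∀ x : ℝ × ℝ × ℝ, μ {x} ≠ ⊤ := fun x => measure_ne_top μ _
  have hμnull : μ (Set.range pt8)ᶜ = 0 := by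
    refine measure_mono_null ?_ (ae_iff.mp hbin)
    intro p hp
    simp only [Set.mem_compl_iff, Set.mem_setOf_eq] at *
    exact fun h => hp (mem_range_pt8 h)
  have hm : ∀ {A : Set (ℝ × ℝ × ℝ)}, MeasurableSet A →
      μ A = ∑ i : Fin 8, μ {pt8 i} * A.indicator 1 (pt8 i) :=
    fun hA => meas_sum μ pt8 pt8_inj hμnull hA
  have mZ1 : MeasurableSet {p : ℝ×ℝ×ℝ | p.2.2 = 1} :=
    measurable_snd.snd (measurableSet_singleton 1)
  have mZ0 : MeasurableSet {p : ℝ×ℝ×ℝ | p.2.2 = 0} :=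
    measurable_snd.snd (measurableSet_singleton 0)
  have mS1 : MeasurableSet {p : ℝ×ℝ×ℝ | p.1 = 0 ∧ p.2.1 = 1} :=
    (measurable_fst (measurableSet_singleton 0)).inter
      (measurable_snd.fst (measurableSet_singleton 1))
  have mS2 : MeasurableSet {p : ℝ×ℝ×ℝ | p.1 = 1 ∧ p.2.1 = 0} :=
    (measurable_fst (measurableSet_singleton 1)).inter
      (measurable_snd.fst (measurableSet_singleton 0))
  have mS3 : MeasurableSet {p : ℝ×ℝ×ℝ | p.1 = 1} :=
    measurable_fst (measurableSet_singleton 1)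
  -- measure computations
  have eZ1 : μ {p : ℝ×ℝ×ℝ | p.2.2 = 1}
      = μ {((0:ℝ),(0:ℝ),(1:ℝ))} + μ {((0:ℝ),(1:ℝ),(1:ℝ))}
        + μ {((1:ℝ),(0:ℝ),(1:ℝ))} + μ {((1:ℝ),(1:ℝ),(1:ℝ))} := by
    rw [hm mZ1, Fin.sum_univ_eight]
    simp +decide [pt8, Set.indicator_apply]
  have eZ0 : μ {p : ℝ×ℝ×ℝ | p.2.2 = 0}
      = μ {((0:ℝ),(0:ℝ),(0:ℝ))} + μ {((0:ℝ),(1:ℝ),(0:ℝ))}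
        + μ {((1:ℝ),(0:ℝ),(0:ℝ))} + μ {((1:ℝ),(1:ℝ),(0:ℝ))} := by
    rw [hm mZ0, Fin.sum_univ_eight]
    simp +decide [pt8, Set.indicator_apply]
  have eN1a : μ ({p : ℝ×ℝ×ℝ | p.1 = 0 ∧ p.2.1 = 1} ∩ {p | p.2.2 = 1})
      = μ {((0:ℝ),(1:ℝ),(1:ℝ))} := by
    rw [hm (mS1.inter mZ1), Fin.sum_univ_eight]
    simp +decide [pt8, Set.indicator_apply]
  have eN1b : μ ({p : ℝ×ℝ×ℝ | p.1 = 0 ∧ p.2.1 = 1} ∩ {p | p.2.2 = 0})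
      = μ {((0:ℝ),(1:ℝ),(0:ℝ))} := by
    rw [hm (mS1.inter mZ0), Fin.sum_univ_eight]
    simp +decide [pt8, Set.indicator_apply]
  have eN2a : μ ({p : ℝ×ℝ×ℝ | p.1 = 1 ∧ p.2.1 = 0} ∩ {p | p.2.2 = 0})
      = μ {((1:ℝ),(0:ℝ),(0:ℝ))} := by
    rw [hm (mS2.inter mZ0), Fin.sum_univ_eight]
    simp +decide [pt8, Set.indicator_apply]
  have eN2b : μ ({p : ℝ×ℝ×ℝ | p.1 = 1 ∧ p.2.1 = 0} ∩ {p | p.2.2 = 1})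
      = μ {((1:ℝ),(0:ℝ),(1:ℝ))} := by
    rw [hm (mS2.inter mZ1), Fin.sum_univ_eight]
    simp +decide [pt8, Set.indicator_apply]
  have eN3a : μ ({p : ℝ×ℝ×ℝ | p.1 = 1} ∩ {p | p.2.2 = 1})
      = μ {((1:ℝ),(0:ℝ),(1:ℝ))} + μ {((1:ℝ),(1:ℝ),(1:ℝ))} := by
    rw [hm (mS3.inter mZ1), Fin.sum_univ_eight]
    simp +decide [pt8, Set.indicator_apply]
  have eN3b : μ ({p : ℝ×ℝ×ℝ | p.1 = 1} ∩ {p | p.2.2 = 0})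
      = μ {((1:ℝ),(0:ℝ),(0:ℝ))} + μ {((1:ℝ),(1:ℝ),(0:ℝ))} := by
    rw [hm (mS3.inter mZ0), Fin.sum_univ_eight]
    simp +decide [pt8, Set.indicator_apply]
  have etot : μ (Set.univ : Set (ℝ×ℝ×ℝ))
      = μ {((0:ℝ),(0:ℝ),(0:ℝ))} + μ {((0:ℝ),(0:ℝ),(1:ℝ))} + μ {((0:ℝ),(1:ℝ),(0:ℝ))}
        + μ {((0:ℝ),(1:ℝ),(1:ℝ))} + μ {((1:ℝ),(0:ℝ),(0:ℝ))} + μ {((1:ℝ),(0:ℝ),(1:ℝ))}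
        + μ {((1:ℝ),(1:ℝ),(0:ℝ))} + μ {((1:ℝ),(1:ℝ),(1:ℝ))} := by
    rw [hm MeasurableSet.univ, Fin.sum_univ_eight]
    simp +decide [pt8, Set.indicator_apply]
  -- real masses
  set b0 : ℝ := (μ {((0:ℝ),(0:ℝ),(0:ℝ))}).toReal with hb0def
  set b1 : ℝ := (μ {((0:ℝ),(0:ℝ),(1:ℝ))}).toReal with hb1def
  set b2 : ℝ := (μ {((0:ℝ),(1:ℝ),(0:ℝ))}).toReal with hb2def
  set b3 : ℝ := (μ {((0:ℝ),(1:ℝ),(1:ℝ))}).toReal with hb3def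
  set b4 : ℝ := (μ {((1:ℝ),(0:ℝ),(0:ℝ))}).toReal with hb4def
  set b5 : ℝ := (μ {((1:ℝ),(0:ℝ),(1:ℝ))}).toReal with hb5def
  set b6 : ℝ := (μ {((1:ℝ),(1:ℝ),(0:ℝ))}).toReal with hb6def
  set b7 : ℝ := (μ {((1:ℝ),(1:ℝ),(1:ℝ))}).toReal with hb7def
  have toReal2 : ∀ a b : ℝ≥0∞, a ≠ ⊤ → b ≠ ⊤ → (a+b).toReal = a.toReal + b.toReal := by
    intros a b ha hb; rw [ENNReal.toReal_add ha hb]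
  have toReal4 : ∀ a b c d : ℝ≥0∞, a ≠ ⊤ → b ≠ ⊤ → c ≠ ⊤ → d ≠ ⊤ →
      (a+b+c+d).toReal = a.toReal + b.toReal + c.toReal + d.toReal := by
    intros a b c d ha hb hc hd
    rw [ENNReal.toReal_add (by simp [ENNReal.add_ne_top, ha, hb, hc]) hd,
      ENNReal.toReal_add (by simp [ENNReal.add_ne_top, ha, hb]) hc,
      ENNReal.toReal_add ha hb]
  set p0 : ℝ := b0 + b2 + b4 + b6 with hp0def
  set p1 : ℝ := b1 + b3 + b5 + b7 with hp1def
  have hZ1r : (μ {p : ℝ×ℝ×ℝ | p.2.2 = 1}).toReal = p1 := by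
    rw [eZ1, toReal4 _ _ _ _ (hfin _) (hfin _) (hfin _) (hfin _)]
  have hZ0r : (μ {p : ℝ×ℝ×ℝ | p.2.2 = 0}).toReal = p0 := by
    rw [eZ0, toReal4 _ _ _ _ (hfin _) (hfin _) (hfin _) (hfin _)]
  have hp1pos : 0 < p1 := hZ1r ▸ ENNReal.toReal_pos hz0.ne' (measure_ne_top μ _)
  have hp1lt : p1 < 1 := by
    have := (ENNReal.toReal_lt_toReal (measure_ne_top μ _) ENNReal.one_ne_top).mpr hz1
    rwa [hZ1r, ENNReal.toReal_one] at this
  have htotr : b0 + b1 + b2 + b3 + b4 + b5 + b6 + b7 = 1 := by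
    have h := etot
    rw [measure_univ] at h
    have := congrArg ENNReal.toReal h
    rw [ENNReal.toReal_one] at this
    rw [this]
    rw [ENNReal.toReal_add, ENNReal.toReal_add, ENNReal.toReal_add, ENNReal.toReal_add,
      ENNReal.toReal_add, ENNReal.toReal_add, ENNReal.toReal_add] <;>
      simp [ENNReal.add_ne_top, hfin]
  have hpsum : p0 + p1 = 1 := by rw [hp0def, hp1def]; linarith
  have hp0pos : 0 < p0 := by linarith
  have hbnn : ∀ x : ℝ × ℝ × ℝ, 0 ≤ (μ {x}).toReal := fun x => ENNReal.toReal_nonneg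
  -- rewrite hypotheses
  rw [ge_iff_le, cprob, cprob, eN1a, eN1b, hZ1r, hZ0r] at h1
  rw [ge_iff_le, cprob, cprob, eN2a, eN2b, hZ1r, hZ0r] at h2
  rw [ge_iff_le, cprob, cprob, eN3a, eN3b, hZ1r, hZ0r,
    toReal2 _ _ (hfin _) (hfin _), toReal2 _ _ (hfin _) (hfin _)] at h3
  have hb0nn : 0 ≤ b0 := hb0def ▸ ENNReal.toReal_nonneg
  have hb1nn : 0 ≤ b1 := hb1def ▸ ENNReal.toReal_nonneg
  have hb2nn : 0 ≤ b2 := hb2def ▸ ENNReal.toReal_nonneg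
  have hb3nn : 0 ≤ b3 := hb3def ▸ ENNReal.toReal_nonneg
  have hb4nn : 0 ≤ b4 := hb4def ▸ ENNReal.toReal_nonneg
  have hb5nn : 0 ≤ b5 := hb5def ▸ ENNReal.toReal_nonneg
  have hb6nn : 0 ≤ b6 := hb6def ▸ ENNReal.toReal_nonneg
  have hb7nn : 0 ≤ b7 := hb7def ▸ ENNReal.toReal_nonneg
  -- weights
  set W1 : ℝ≥0 := Real.toNNReal (b2 / p0) with hW1def
  set W2 : ℝ≥0 := Real.toNNReal (b6 / p0) with hW2def
  set W3 : ℝ≥0 := Real.toNNReal (b1 / p1) with hW3def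
  set W4 : ℝ≥0 := Real.toNNReal (b5 / p1) with hW4def
  set W5 : ℝ≥0 := Real.toNNReal (b4 / p0 - b5 / p1) with hW5def
  set W6 : ℝ≥0 := Real.toNNReal ((b5 + b7) / p1 - (b4 + b6) / p0) with hW6def
  set W7 : ℝ≥0 := Real.toNNReal (b3 / p1 - b2 / p0) with hW7def
  set P0 : ℝ≥0 := Real.toNNReal p0 with hP0def
  set P1 : ℝ≥0 := Real.toNNReal p1 with hP1def
  have hW1v : (W1 : ℝ) = b2 / p0 := by rw [hW1def]; exact Real.coe_toNNReal _ (div_nonneg hb2nn hp0pos.le)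
  have hW2v : (W2 : ℝ) = b6 / p0 := by rw [hW2def]; exact Real.coe_toNNReal _ (div_nonneg hb6nn hp0pos.le)
  have hW3v : (W3 : ℝ) = b1 / p1 := by rw [hW3def]; exact Real.coe_toNNReal _ (div_nonneg hb1nn hp1pos.le)
  have hW4v : (W4 : ℝ) = b5 / p1 := by rw [hW4def]; exact Real.coe_toNNReal _ (div_nonneg hb5nn hp1pos.le)
  have hW5v : (W5 : ℝ) = b4 / p0 - b5 / p1 := by rw [hW5def]; exact Real.coe_toNNReal _ (sub_nonneg.mpr h2)
  have hW6v : (W6 : ℝ) = (b5 + b7) / p1 - (b4 + b6) / p0 := by rw [hW6def]; exact Real.coe_toNNReal _ (sub_nonneg.mpr h3)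
  have hW7v : (W7 : ℝ) = b3 / p1 - b2 / p0 := by rw [hW7def]; exact Real.coe_toNNReal _ (sub_nonneg.mpr h1)
  have hP0v : (P0 : ℝ) = p0 := by rw [hP0def]; exact Real.coe_toNNReal _ hp0pos.le
  have hP1v : (P1 : ℝ) = p1 := by rw [hP1def]; exact Real.coe_toNNReal _ hp1pos.le
  have hb0' : b0 = p0 - b2 - b4 - b6 := by rw [hp0def]; ring
  have hb1' : b1 = p1 - b3 - b5 - b7 := by rw [hp1def]; ring
  have hp0ne : p0 ≠ 0 := hp0pos.ne'
  have hp1ne : p1 ≠ 0 := hp1pos.ne'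
  -- real coefficient identities
  obtain ⟨K000, K001, K010, K011, K100, K101, K110, K111, KW⟩ :=
    keyIdents hp0def hp1def hp0ne hp1ne
  have k000 : (W3 : ℝ) * p0 + (W6 : ℝ) * p0 + (W7 : ℝ) * p0 = b0 := by
    rw [hW3v, hW6v, hW7v]; exact K000
  have k001 : (W3 : ℝ) * p1 = b1 := by rw [hW3v]; exact K001
  have k010 : (W1 : ℝ) * p0 = b2 := by rw [hW1v]; exact K010
  have k011 : (W1 : ℝ) * p1 + (W7 : ℝ) * p1 = b3 := by rw [hW1v, hW7v]; exact K011
  have k100 : (W4 : ℝ) * p0 + (W5 : ℝ) * p0 = b4 := by rw [hW4v, hW5v]; exact K100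
  have k101 : (W4 : ℝ) * p1 = b5 := by rw [hW4v]; exact K101
  have k110 : (W2 : ℝ) * p0 = b6 := by rw [hW2v]; exact K110
  have k111 : (W2 : ℝ) * p1 + (W5 : ℝ) * p1 + (W6 : ℝ) * p1 = b7 := by
    rw [hW2v, hW5v, hW6v]; exact K111
  have hWsumR : (W1 : ℝ) + W2 + W3 + W4 + W5 + W6 + W7 = 1 := by
    rw [hW1v, hW2v, hW3v, hW4v, hW5v, hW6v, hW7v]; exact KW
  have hPsumR : (P0 : ℝ) + P1 = 1 := by rw [hP0v, hP1v]; exact hpsum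
  -- ENNReal coefficient identities
  have coeB : ∀ x : ℝ × ℝ × ℝ, ((μ {x}).toNNReal : ℝ≥0∞) = μ {x} :=
    fun x => ENNReal.coe_toNNReal (hfin x)
  have E000 : (↑(W3*P0) : ℝ≥0∞) + ↑(W6*P0) + ↑(W7*P0) = μ {((0:ℝ),(0:ℝ),(0:ℝ))} := by
    rw [← coeB, ← ENNReal.coe_add, ← ENNReal.coe_add, ENNReal.coe_inj]
    apply NNReal.coe_injective
    push_cast
    rw [hP0v, ← hb0def]
    exact k000
  have E001 : (↑(W3*P1) : ℝ≥0∞) = μ {((0:ℝ),(0:ℝ),(1:ℝ))} := by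
    rw [← coeB, ENNReal.coe_inj]
    apply NNReal.coe_injective
    push_cast
    rw [hP1v, ← hb1def]
    exact k001
  have E010 : (↑(W1*P0) : ℝ≥0∞) = μ {((0:ℝ),(1:ℝ),(0:ℝ))} := by
    rw [← coeB, ENNReal.coe_inj]
    apply NNReal.coe_injective
    push_cast
    rw [hP0v, ← hb2def]
    exact k010
  have E011 : (↑(W1*P1) : ℝ≥0∞) + ↑(W7*P1) = μ {((0:ℝ),(1:ℝ),(1:ℝ))} := by
    rw [← coeB, ← ENNReal.coe_add, ENNReal.coe_inj]
    apply NNReal.coe_injective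
    push_cast
    rw [hP1v, ← hb3def]
    exact k011
  have E100 : (↑(W4*P0) : ℝ≥0∞) + ↑(W5*P0) = μ {((1:ℝ),(0:ℝ),(0:ℝ))} := by
    rw [← coeB, ← ENNReal.coe_add, ENNReal.coe_inj]
    apply NNReal.coe_injective
    push_cast
    rw [hP0v, ← hb4def]
    exact k100
  have E101 : (↑(W4*P1) : ℝ≥0∞) = μ {((1:ℝ),(0:ℝ),(1:ℝ))} := by
    rw [← coeB, ENNReal.coe_inj]
    apply NNReal.coe_injective
    push_cast
    rw [hP1v, ← hb5def]
    exact k101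
  have E110 : (↑(W2*P0) : ℝ≥0∞) = μ {((1:ℝ),(1:ℝ),(0:ℝ))} := by
    rw [← coeB, ENNReal.coe_inj]
    apply NNReal.coe_injective
    push_cast
    rw [hP0v, ← hb6def]
    exact k110
  have E111 : (↑(W2*P1) : ℝ≥0∞) + ↑(W5*P1) + ↑(W6*P1) = μ {((1:ℝ),(1:ℝ),(1:ℝ))} := by
    rw [← coeB, ← ENNReal.coe_add, ← ENNReal.coe_add, ENNReal.coe_inj]
    apply NNReal.coe_injective
    push_cast
    rw [hP1v, ← hb7def]
    exact k111
  have hWE : (W1 : ℝ≥0∞) + W2 + W3 + W4 + W5 + W6 + W7 = 1 := by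
    have h : (W1 + W2 + W3 + W4 + W5 + W6 + W7 : ℝ≥0) = 1 := by
      apply NNReal.coe_injective; push_cast; exact hWsumR
    exact_mod_cast h
  have hPE : (P0 : ℝ≥0∞) + P1 = 1 := by
    have h : (P0 + P1 : ℝ≥0) = 1 := by
      apply NNReal.coe_injective; push_cast; exact hPsumR
    exact_mod_cast h
  -- the latent measure
  set ν : Measure (ℝ × ℝ × ℝ × ℝ × ℝ) :=
      ((W1*P0 : ℝ≥0) : ℝ≥0∞) • Measure.dirac ((0:ℝ),(0:ℝ),(1:ℝ),(1:ℝ),(0:ℝ))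
    + ((W1*P1 : ℝ≥0) : ℝ≥0∞) • Measure.dirac ((0:ℝ),(0:ℝ),(1:ℝ),(1:ℝ),(1:ℝ))
    + ((W2*P0 : ℝ≥0) : ℝ≥0∞) • Measure.dirac ((1:ℝ),(0:ℝ),(1:ℝ),(1:ℝ),(0:ℝ))
    + ((W2*P1 : ℝ≥0) : ℝ≥0∞) • Measure.dirac ((1:ℝ),(0:ℝ),(1:ℝ),(1:ℝ),(1:ℝ))
    + ((W3*P0 : ℝ≥0) : ℝ≥0∞) • Measure.dirac ((0:ℝ),(0:ℝ),(0:ℝ),(0:ℝ),(0:ℝ))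
    + ((W3*P1 : ℝ≥0) : ℝ≥0∞) • Measure.dirac ((0:ℝ),(0:ℝ),(0:ℝ),(0:ℝ),(1:ℝ))
    + ((W4*P0 : ℝ≥0) : ℝ≥0∞) • Measure.dirac ((1:ℝ),(1:ℝ),(0:ℝ),(0:ℝ),(0:ℝ))
    + ((W4*P1 : ℝ≥0) : ℝ≥0∞) • Measure.dirac ((1:ℝ),(1:ℝ),(0:ℝ),(0:ℝ),(1:ℝ))
    + ((W5*P0 : ℝ≥0) : ℝ≥0∞) • Measure.dirac ((1:ℝ),(1:ℝ),(1:ℝ),(0:ℝ),(0:ℝ))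
    + ((W5*P1 : ℝ≥0) : ℝ≥0∞) • Measure.dirac ((1:ℝ),(1:ℝ),(1:ℝ),(0:ℝ),(1:ℝ))
    + ((W6*P0 : ℝ≥0) : ℝ≥0∞) • Measure.dirac ((1:ℝ),(0:ℝ),(1:ℝ),(0:ℝ),(0:ℝ))
    + ((W6*P1 : ℝ≥0) : ℝ≥0∞) • Measure.dirac ((1:ℝ),(0:ℝ),(1:ℝ),(0:ℝ),(1:ℝ))
    + ((W7*P0 : ℝ≥0) : ℝ≥0∞) • Measure.dirac ((0:ℝ),(0:ℝ),(1:ℝ),(0:ℝ),(0:ℝ))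
    + ((W7*P1 : ℝ≥0) : ℝ≥0∞) • Measure.dirac ((0:ℝ),(0:ℝ),(1:ℝ),(0:ℝ),(1:ℝ)) with hνdef
  have hν : ∀ S : Set (ℝ × ℝ × ℝ × ℝ × ℝ), MeasurableSet S → ν S =
      ↑(W1*P0) * S.indicator 1 ((0:ℝ),(0:ℝ),(1:ℝ),(1:ℝ),(0:ℝ))
    + ↑(W1*P1) * S.indicator 1 ((0:ℝ),(0:ℝ),(1:ℝ),(1:ℝ),(1:ℝ))
    + ↑(W2*P0) * S.indicator 1 ((1:ℝ),(0:ℝ),(1:ℝ),(1:ℝ),(0:ℝ))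
    + ↑(W2*P1) * S.indicator 1 ((1:ℝ),(0:ℝ),(1:ℝ),(1:ℝ),(1:ℝ))
    + ↑(W3*P0) * S.indicator 1 ((0:ℝ),(0:ℝ),(0:ℝ),(0:ℝ),(0:ℝ))
    + ↑(W3*P1) * S.indicator 1 ((0:ℝ),(0:ℝ),(0:ℝ),(0:ℝ),(1:ℝ))
    + ↑(W4*P0) * S.indicator 1 ((1:ℝ),(1:ℝ),(0:ℝ),(0:ℝ),(0:ℝ))
    + ↑(W4*P1) * S.indicator 1 ((1:ℝ),(1:ℝ),(0:ℝ),(0:ℝ),(1:ℝ))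
    + ↑(W5*P0) * S.indicator 1 ((1:ℝ),(1:ℝ),(1:ℝ),(0:ℝ),(0:ℝ))
    + ↑(W5*P1) * S.indicator 1 ((1:ℝ),(1:ℝ),(1:ℝ),(0:ℝ),(1:ℝ))
    + ↑(W6*P0) * S.indicator 1 ((1:ℝ),(0:ℝ),(1:ℝ),(0:ℝ),(0:ℝ))
    + ↑(W6*P1) * S.indicator 1 ((1:ℝ),(0:ℝ),(1:ℝ),(0:ℝ),(1:ℝ))
    + ↑(W7*P0) * S.indicator 1 ((0:ℝ),(0:ℝ),(1:ℝ),(0:ℝ),(0:ℝ))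
    + ↑(W7*P1) * S.indicator 1 ((0:ℝ),(0:ℝ),(1:ℝ),(0:ℝ),(1:ℝ)) := by
    intro S hS
    rw [hνdef]
    simp only [Measure.coe_add, Pi.add_apply, Measure.smul_apply,
      Measure.dirac_apply' _ hS, smul_eq_mul]
  have hPure : ∀ (c : ℝ≥0∞) (x : ℝ × ℝ × ℝ × ℝ × ℝ) {P : (ℝ × ℝ × ℝ × ℝ × ℝ) → Prop},
      P x → ∀ᵐ q ∂(c • Measure.dirac x), P q := by
    intro c x P hx
    exact Measure.ae_smul_measure (by rw [MeasureTheory.ae_dirac_eq]; exact Filter.eventually_pure.mpr hx) c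
  refine ⟨ν, ?_, ?_, ?_, ?_, ?_, ?_⟩
  · constructor
    rw [hν Set.univ MeasurableSet.univ]
    simp only [Set.indicator_univ, Pi.one_apply, mul_one]
    have h : (W1*P0 + W1*P1 + W2*P0 + W2*P1 + W3*P0 + W3*P1 + W4*P0 + W4*P1
        + W5*P0 + W5*P1 + W6*P0 + W6*P1 + W7*P0 + W7*P1 : ℝ≥0) = 1 := by
      apply NNReal.coe_injective
      push_cast
      linear_combination ((P0 : ℝ) + P1) * hWsumR + hPsumR
    exact_mod_cast h
  · rw [hνdef]
    simp only [ae_add_measure_iff]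
    and_intros <;> exact hPure _ _ (by norm_num)
  · rw [indepFun_iff_measure_inter_preimage_eq_mul]
    intro s t hs ht
    have hfm : Measurable (fun q : ℝ × ℝ × ℝ × ℝ × ℝ => (lY1 q, lY0 q, lD1 q, lD0 q)) :=
      measurable_fst.prodMk (measurable_snd.fst.prodMk
        (measurable_snd.snd.fst.prodMk measurable_snd.snd.snd.fst))
    have hZm : Measurable lZ := measurable_snd.snd.snd.snd
    rw [hν _ ((hfm hs).inter (hZm ht)), hν _ (hfm hs), hν _ (hZm ht)]
    simp only [ind_inter, ind_pre, lY1, lY0, lD1, lD0, lZ, ENNReal.coe_mul]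
    have key : ∀ A1 A2 A3 A4 A5 A6 A7 B0 B1 : ℝ≥0∞,
        (W1:ℝ≥0∞)*↑P0*(A1*B0) + (W1:ℝ≥0∞)*↑P1*(A1*B1) + (W2:ℝ≥0∞)*↑P0*(A2*B0) + (W2:ℝ≥0∞)*↑P1*(A2*B1) + (W3:ℝ≥0∞)*↑P0*(A3*B0) + (W3:ℝ≥0∞)*↑P1*(A3*B1) + (W4:ℝ≥0∞)*↑P0*(A4*B0) + (W4:ℝ≥0∞)*↑P1*(A4*B1) + (W5:ℝ≥0∞)*↑P0*(A5*B0) + (W5:ℝ≥0∞)*↑P1*(A5*B1) + (W6:ℝ≥0∞)*↑P0*(A6*B0) + (W6:ℝ≥0∞)*↑P1*(A6*B1) + (W7:ℝ≥0∞)*↑P0*(A7*B0) + (W7:ℝ≥0∞)*↑P1*(A7*B1)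
        = ((W1:ℝ≥0∞)*↑P0*A1 + (W1:ℝ≥0∞)*↑P1*A1 + (W2:ℝ≥0∞)*↑P0*A2 + (W2:ℝ≥0∞)*↑P1*A2 + (W3:ℝ≥0∞)*↑P0*A3 + (W3:ℝ≥0∞)*↑P1*A3 + (W4:ℝ≥0∞)*↑P0*A4 + (W4:ℝ≥0∞)*↑P1*A4 + (W5:ℝ≥0∞)*↑P0*A5 + (W5:ℝ≥0∞)*↑P1*A5 + (W6:ℝ≥0∞)*↑P0*A6 + (W6:ℝ≥0∞)*↑P1*A6 + (W7:ℝ≥0∞)*↑P0*A7 + (W7:ℝ≥0∞)*↑P1*A7)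
        * ((W1:ℝ≥0∞)*↑P0*B0 + (W1:ℝ≥0∞)*↑P1*B1 + (W2:ℝ≥0∞)*↑P0*B0 + (W2:ℝ≥0∞)*↑P1*B1 + (W3:ℝ≥0∞)*↑P0*B0 + (W3:ℝ≥0∞)*↑P1*B1 + (W4:ℝ≥0∞)*↑P0*B0 + (W4:ℝ≥0∞)*↑P1*B1 + (W5:ℝ≥0∞)*↑P0*B0 + (W5:ℝ≥0∞)*↑P1*B1 + (W6:ℝ≥0∞)*↑P0*B0 + (W6:ℝ≥0∞)*↑P1*B1 + (W7:ℝ≥0∞)*↑P0*B0 + (W7:ℝ≥0∞)*↑P1*B1) := by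
      intro A1 A2 A3 A4 A5 A6 A7 B0 B1
      have r1 : (W1:ℝ≥0∞)*↑P0*A1 + (W1:ℝ≥0∞)*↑P1*A1 + (W2:ℝ≥0∞)*↑P0*A2 + (W2:ℝ≥0∞)*↑P1*A2 + (W3:ℝ≥0∞)*↑P0*A3 + (W3:ℝ≥0∞)*↑P1*A3 + (W4:ℝ≥0∞)*↑P0*A4 + (W4:ℝ≥0∞)*↑P1*A4 + (W5:ℝ≥0∞)*↑P0*A5 + (W5:ℝ≥0∞)*↑P1*A5 + (W6:ℝ≥0∞)*↑P0*A6 + (W6:ℝ≥0∞)*↑P1*A6 + (W7:ℝ≥0∞)*↑P0*A7 + (W7:ℝ≥0∞)*↑P1*A7 = ((W1:ℝ≥0∞)*A1 + (W2:ℝ≥0∞)*A2 + (W3:ℝ≥0∞)*A3 + (W4:ℝ≥0∞)*A4 + (W5:ℝ≥0∞)*A5 + (W6:ℝ≥0∞)*A6 + (W7:ℝ≥0∞)*A7) * ((P0:ℝ≥0∞) + ↑P1) := by ring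
      have r2 : (W1:ℝ≥0∞)*↑P0*B0 + (W1:ℝ≥0∞)*↑P1*B1 + (W2:ℝ≥0∞)*↑P0*B0 + (W2:ℝ≥0∞)*↑P1*B1 + (W3:ℝ≥0∞)*↑P0*B0 + (W3:ℝ≥0∞)*↑P1*B1 + (W4:ℝ≥0∞)*↑P0*B0 + (W4:ℝ≥0∞)*↑P1*B1 + (W5:ℝ≥0∞)*↑P0*B0 + (W5:ℝ≥0∞)*↑P1*B1 + (W6:ℝ≥0∞)*↑P0*B0 + (W6:ℝ≥0∞)*↑P1*B1 + (W7:ℝ≥0∞)*↑P0*B0 + (W7:ℝ≥0∞)*↑P1*B1 = ((W1:ℝ≥0∞) + W2 + W3 + W4 + W5 + W6 + W7) * ((P0:ℝ≥0∞)*B0 + ↑P1*B1) := by ring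
      rw [r1, r2, hPE, hWE, mul_one, one_mul]
      ring
    exact key _ _ _ _ _ _ _ _ _
  · rw [hνdef]
    simp only [ae_add_measure_iff]
    and_intros <;> exact hPure _ _ (by norm_num)
  · rw [hνdef]
    simp only [ae_add_measure_iff]
    and_intros <;> exact hPure _ _ (by norm_num)
  · have hobs : Measurable obsMap := by
      unfold obsMap lD
      fun_prop
    apply Measure.ext
    intro A hA
    rw [Measure.map_apply hobs hA, hν _ (hobs hA), hm hA, Fin.sum_univ_eight]
    simp only [ind_pre]
    simp +decide only [pt8]
    norm_num [obsMap, lD, lY1, lY0, lD1, lD0, lZ]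
    simp only [ENNReal.coe_mul]
      at E000 E001 E010 E011 E100 E101 E110 E111
    rw [← E000, ← E001, ← E010, ← E011, ← E100, ← E101, ← E110, ← E111]
    ring
end

section
/- Without outcome monotonicity, the Wald estimand decomposes as: (E[h(X)Y|Z=1] − E[h(X)Y|Z=0]) / (E[Y|Z=1] − E[Y|Z=0]) = E[h(X)|G=cc] + ξ·(E[h(X)|G=cc] − E[h(X)|G=cf]), where ξ = Pr(G=cf) / (E[Y|Z=1] − E[Y|Z=0]), G=cc is the event {D1>D0, Y1>Y0} and G=cf is {D1>D0, Y1<Y0}. -/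
open MeasureTheory ProbabilityTheory

theorem wald_decomposition_without_outcome_monotonicity
    {Ω : Type} [MeasurableSpace Ω] (μ : Measure Ω) [IsProbabilityMeasure μ]
    (Z D0 D1 Y0 Y1 D Y X : Ω → ℝ)
    (hZm : Measurable Z) (hD0m : Measurable D0) (hD1m : Measurable D1)
    (hY0m : Measurable Y0) (hY1m : Measurable Y1) (hXm : Measurable X)
    (hZbin : ∀ ω, Z ω = 0 ∨ Z ω = 1)
    (hD0bin : ∀ ω, D0 ω = 0 ∨ D0 ω = 1)
    (hD1bin : ∀ ω, D1 ω = 0 ∨ D1 ω = 1)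
    (hY0bin : ∀ ω, Y0 ω = 0 ∨ Y0 ω = 1)
    (hY1bin : ∀ ω, Y1 ω = 0 ∨ Y1 ω = 1)
    (hD : ∀ ω, D ω = Z ω * D1 ω + (1 - Z ω) * D0 ω)
    (hY : ∀ ω, Y ω = D ω * Y1 ω + (1 - D ω) * Y0 ω)
    (hindep : IndepFun (fun ω => (X ω, Y0 ω, Y1 ω, D0 ω, D1 ω)) Z μ)
    (hz0 : 0 < μ {ω | Z ω = 1}) (hz1 : μ {ω | Z ω = 1} < 1)
    (hmonoD : ∀ᵐ ω ∂μ, D0 ω ≤ D1 ω)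
    (h : ℝ → ℝ) (hhm : Measurable h)
    (hint : Integrable (fun ω => h (X ω)) μ)
    (hRF : cmean μ Y {ω | Z ω = 1} - cmean μ Y {ω | Z ω = 0} ≠ 0) :
    (cmean μ (fun ω => h (X ω) * Y ω) {ω | Z ω = 1}
        - cmean μ (fun ω => h (X ω) * Y ω) {ω | Z ω = 0})
      / (cmean μ Y {ω | Z ω = 1} - cmean μ Y {ω | Z ω = 0})
    = cmean μ (fun ω => h (X ω)) {ω | D0 ω < D1 ω ∧ Y0 ω < Y1 ω}
      + ((μ {ω | D0 ω < D1 ω ∧ Y1 ω < Y0 ω}).toReal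
          / (cmean μ Y {ω | Z ω = 1} - cmean μ Y {ω | Z ω = 0}))
        * (cmean μ (fun ω => h (X ω)) {ω | D0 ω < D1 ω ∧ Y0 ω < Y1 ω}
            - cmean μ (fun ω => h (X ω)) {ω | D0 ω < D1 ω ∧ Y1 ω < Y0 ω}) := by
  classical
  -- events
  have hccm : MeasurableSet {ω | D0 ω < D1 ω ∧ Y0 ω < Y1 ω} :=
    (measurableSet_lt hD0m hD1m).inter (measurableSet_lt hY0m hY1m)
  have hcfm : MeasurableSet {ω | D0 ω < D1 ω ∧ Y1 ω < Y0 ω} :=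
    (measurableSet_lt hD0m hD1m).inter (measurableSet_lt hY1m hY0m)
  have hs1 : MeasurableSet {ω | Z ω = 1} := hZm (measurableSet_singleton 1)
  have hs0 : MeasurableSet {ω | Z ω = 0} := hZm (measurableSet_singleton 0)
  -- key independence lemma
  have key : ∀ (φ : ℝ × ℝ × ℝ × ℝ × ℝ → ℝ), Measurable φ →
      Integrable (fun ω => φ (X ω, Y0 ω, Y1 ω, D0 ω, D1 ω)) μ → ∀ c : ℝ,
      ∫ ω in {ω | Z ω = c}, φ (X ω, Y0 ω, Y1 ω, D0 ω, D1 ω) ∂μ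
        = (∫ ω, φ (X ω, Y0 ω, Y1 ω, D0 ω, D1 ω) ∂μ) * (μ {ω | Z ω = c}).toReal := by
    intro φ hφ hφi c
    have hs : MeasurableSet {ω | Z ω = c} := hZm (measurableSet_singleton c)
    set ψ : ℝ → ℝ := Set.indicator {c} (fun _ => 1) with hψ
    have hψm : Measurable ψ := measurable_const.indicator (measurableSet_singleton c)
    have hψZ : (fun ω => ψ (Z ω)) = Set.indicator {ω | Z ω = c} (fun _ => (1:ℝ)) := by
      funext ω
      by_cases hω : Z ω = c <;> simp [hψ, Set.indicator_apply, hω]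
    have hψi : Integrable (fun ω => ψ (Z ω)) μ := by
      rw [hψZ]; exact (integrable_const 1).indicator hs
    have hIF : IndepFun (fun ω => φ (X ω, Y0 ω, Y1 ω, D0 ω, D1 ω)) (fun ω => ψ (Z ω)) μ :=
      hindep.comp hφ hψm
    have hmul := hIF.integral_fun_mul_eq_mul_integral hφi.aestronglyMeasurable hψi.aestronglyMeasurable
    have hind : Set.indicator {ω | Z ω = c} (fun ω => φ (X ω, Y0 ω, Y1 ω, D0 ω, D1 ω))
        = fun ω => φ (X ω, Y0 ω, Y1 ω, D0 ω, D1 ω) * ψ (Z ω) := by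
      funext ω
      by_cases hω : Z ω = c <;> simp [hψ, Set.indicator_apply, hω]
    rw [← integral_indicator hs, hind]
    have hψint : ∫ ω, ψ (Z ω) ∂μ = (μ {ω | Z ω = c}).toReal := by
      rw [hψZ]
      exact (integral_indicator_const (1:ℝ) hs).trans (by rw [smul_eq_mul, mul_one]; rfl)
    calc ∫ ω, φ (X ω, Y0 ω, Y1 ω, D0 ω, D1 ω) * ψ (Z ω) ∂μ
        = (∫ ω, φ (X ω, Y0 ω, Y1 ω, D0 ω, D1 ω) ∂μ) * ∫ ω, ψ (Z ω) ∂μ := hmul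
      _ = _ := by rw [hψint]
  -- basic measurability of the vector
  have hVm : Measurable (fun ω => (X ω, Y0 ω, Y1 ω, D0 ω, D1 ω)) :=
    hXm.prodMk (hY0m.prodMk (hY1m.prodMk (hD0m.prodMk hD1m)))
  -- the four φ's
  have hmY1 : Measurable (fun p : ℝ × ℝ × ℝ × ℝ × ℝ =>
      p.2.2.2.2 * p.2.2.1 + (1 - p.2.2.2.2) * p.2.1) := by fun_prop
  have hmY0 : Measurable (fun p : ℝ × ℝ × ℝ × ℝ × ℝ =>
      p.2.2.2.1 * p.2.2.1 + (1 - p.2.2.2.1) * p.2.1) := by fun_prop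
  have hmH1 : Measurable (fun p : ℝ × ℝ × ℝ × ℝ × ℝ =>
      h p.1 * (p.2.2.2.2 * p.2.2.1 + (1 - p.2.2.2.2) * p.2.1)) := (hhm.comp measurable_fst).mul hmY1
  have hmH0 : Measurable (fun p : ℝ × ℝ × ℝ × ℝ × ℝ =>
      h p.1 * (p.2.2.2.1 * p.2.2.1 + (1 - p.2.2.2.1) * p.2.1)) := (hhm.comp measurable_fst).mul hmY0
  -- boundedness of W1, W0
  have hb1 : ∀ ω, ‖D1 ω * Y1 ω + (1 - D1 ω) * Y0 ω‖ ≤ 1 := by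
    intro ω
    rcases hD1bin ω with hd|hd <;> rcases hY0bin ω with k0|k0 <;> rcases hY1bin ω with k1|k1 <;>
      simp [hd, k0, k1]
  have hb0 : ∀ ω, ‖D0 ω * Y1 ω + (1 - D0 ω) * Y0 ω‖ ≤ 1 := by
    intro ω
    rcases hD0bin ω with hd|hd <;> rcases hY0bin ω with k0|k0 <;> rcases hY1bin ω with k1|k1 <;>
      simp [hd, k0, k1]
  -- integrability
  have hiY1 : Integrable (fun ω => D1 ω * Y1 ω + (1 - D1 ω) * Y0 ω) μ :=
    (integrable_const 1).mono' ((hD1m.mul hY1m).add ((measurable_const.sub hD1m).mul hY0m)).aestronglyMeasurable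
      (Filter.Eventually.of_forall hb1)
  have hiY0 : Integrable (fun ω => D0 ω * Y1 ω + (1 - D0 ω) * Y0 ω) μ :=
    (integrable_const 1).mono' ((hD0m.mul hY1m).add ((measurable_const.sub hD0m).mul hY0m)).aestronglyMeasurable
      (Filter.Eventually.of_forall hb0)
  have hiH1 : Integrable (fun ω => h (X ω) * (D1 ω * Y1 ω + (1 - D1 ω) * Y0 ω)) μ := by
    have := hint.bdd_mul (((hD1m.mul hY1m).add ((measurable_const.sub hD1m).mul hY0m)).aestronglyMeasurable) (Filter.Eventually.of_forall hb1)
    exact this.congr (Filter.Eventually.of_forall fun ω => mul_comm _ _)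
  have hiH0 : Integrable (fun ω => h (X ω) * (D0 ω * Y1 ω + (1 - D0 ω) * Y0 ω)) μ := by
    have := hint.bdd_mul (((hD0m.mul hY1m).add ((measurable_const.sub hD0m).mul hY0m)).aestronglyMeasurable) (Filter.Eventually.of_forall hb0)
    exact this.congr (Filter.Eventually.of_forall fun ω => mul_comm _ _)
  -- nonvanishing of P(Z=1), P(Z=0)
  have p1 : (μ {ω | Z ω = 1}).toReal ≠ 0 :=
    ENNReal.toReal_ne_zero.mpr ⟨hz0.ne', measure_ne_top μ _⟩
  have hcompl : {ω | Z ω = 0} = {ω | Z ω = 1}ᶜ := by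
    ext ω; rcases hZbin ω with hz|hz <;> simp [hz]
  have p0pos : 0 < μ {ω | Z ω = 0} := by
    rw [hcompl, measure_compl hs1 (measure_ne_top μ _), measure_univ]
    exact tsub_pos_of_lt hz1
  have p0 : (μ {ω | Z ω = 0}).toReal ≠ 0 :=
    ENNReal.toReal_ne_zero.mpr ⟨p0pos.ne', measure_ne_top μ _⟩
  -- cmean computation
  have cmean_eq : ∀ (f : Ω → ℝ) (φ : ℝ × ℝ × ℝ × ℝ × ℝ → ℝ), Measurable φ →
      Integrable (fun ω => φ (X ω, Y0 ω, Y1 ω, D0 ω, D1 ω)) μ → ∀ c : ℝ,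
      (μ {ω | Z ω = c}).toReal ≠ 0 →
      Set.EqOn f (fun ω => φ (X ω, Y0 ω, Y1 ω, D0 ω, D1 ω)) {ω | Z ω = c} →
      cmean μ f {ω | Z ω = c} = ∫ ω, φ (X ω, Y0 ω, Y1 ω, D0 ω, D1 ω) ∂μ := by
    intro f φ hφ hφi c hc hEq
    have hs : MeasurableSet {ω | Z ω = c} := hZm (measurableSet_singleton c)
    unfold cmean
    rw [setIntegral_congr_fun hs hEq, key φ hφ hφi c,
      mul_div_assoc, div_self hc, mul_one]
  -- the four cmeans
  have hE1 : Set.EqOn Y (fun ω => D1 ω * Y1 ω + (1 - D1 ω) * Y0 ω) {ω | Z ω = 1} := by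
    intro ω hω
    simp only [Set.mem_setOf_eq] at hω
    rw [hY ω, hD ω, hω]; ring
  have hE0 : Set.EqOn Y (fun ω => D0 ω * Y1 ω + (1 - D0 ω) * Y0 ω) {ω | Z ω = 0} := by
    intro ω hω
    simp only [Set.mem_setOf_eq] at hω
    rw [hY ω, hD ω, hω]; ring
  have e1 : cmean μ Y {ω | Z ω = 1} = ∫ ω, D1 ω * Y1 ω + (1 - D1 ω) * Y0 ω ∂μ :=
    cmean_eq Y (fun p => p.2.2.2.2 * p.2.2.1 + (1 - p.2.2.2.2) * p.2.1) hmY1 hiY1 1 p1 hE1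
  have e0 : cmean μ Y {ω | Z ω = 0} = ∫ ω, D0 ω * Y1 ω + (1 - D0 ω) * Y0 ω ∂μ :=
    cmean_eq Y (fun p => p.2.2.2.1 * p.2.2.1 + (1 - p.2.2.2.1) * p.2.1) hmY0 hiY0 0 p0 hE0
  have f1 : cmean μ (fun ω => h (X ω) * Y ω) {ω | Z ω = 1}
      = ∫ ω, h (X ω) * (D1 ω * Y1 ω + (1 - D1 ω) * Y0 ω) ∂μ :=
    cmean_eq _ (fun p => h p.1 * (p.2.2.2.2 * p.2.2.1 + (1 - p.2.2.2.2) * p.2.1)) hmH1 hiH1 1 p1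
      (fun ω hω => by simp only [Set.mem_setOf_eq] at hω; simp only []; rw [hE1 hω])
  have f0 : cmean μ (fun ω => h (X ω) * Y ω) {ω | Z ω = 0}
      = ∫ ω, h (X ω) * (D0 ω * Y1 ω + (1 - D0 ω) * Y0 ω) ∂μ :=
    cmean_eq _ (fun p => h p.1 * (p.2.2.2.1 * p.2.2.1 + (1 - p.2.2.2.1) * p.2.1)) hmH0 hiH0 0 p0
      (fun ω hω => by simp only [Set.mem_setOf_eq] at hω; simp only []; rw [hE0 hω])
  -- pointwise a.e. identities
  have haeY : ∀ᵐ ω ∂μ, (D1 ω * Y1 ω + (1 - D1 ω) * Y0 ω) - (D0 ω * Y1 ω + (1 - D0 ω) * Y0 ω)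
      = Set.indicator {ω | D0 ω < D1 ω ∧ Y0 ω < Y1 ω} (fun _ => (1:ℝ)) ω
        - Set.indicator {ω | D0 ω < D1 ω ∧ Y1 ω < Y0 ω} (fun _ => (1:ℝ)) ω := by
    filter_upwards [hmonoD] with ω hω
    rcases hD0bin ω with h0|h0 <;> rcases hD1bin ω with h1|h1
    · simp [Set.indicator_apply, Set.mem_setOf_eq, h0, h1]; try ring
    · rcases hY0bin ω with k0|k0 <;> rcases hY1bin ω with k1|k1 <;>
        (simp [Set.indicator_apply, Set.mem_setOf_eq, h0, h1, k0, k1]; try norm_num)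
    · rw [h0, h1] at hω; linarith
    · simp [Set.indicator_apply, Set.mem_setOf_eq, h0, h1]; try ring
  have haeH : ∀ᵐ ω ∂μ, h (X ω) * (D1 ω * Y1 ω + (1 - D1 ω) * Y0 ω)
        - h (X ω) * (D0 ω * Y1 ω + (1 - D0 ω) * Y0 ω)
      = Set.indicator {ω | D0 ω < D1 ω ∧ Y0 ω < Y1 ω} (fun ω => h (X ω)) ω
        - Set.indicator {ω | D0 ω < D1 ω ∧ Y1 ω < Y0 ω} (fun ω => h (X ω)) ω := by
    filter_upwards [haeY] with ω hω
    have : h (X ω) * (D1 ω * Y1 ω + (1 - D1 ω) * Y0 ω)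
        - h (X ω) * (D0 ω * Y1 ω + (1 - D0 ω) * Y0 ω)
      = h (X ω) * ((D1 ω * Y1 ω + (1 - D1 ω) * Y0 ω) - (D0 ω * Y1 ω + (1 - D0 ω) * Y0 ω)) := by
      ring
    rw [this, hω]
    by_cases hc : ω ∈ {ω | D0 ω < D1 ω ∧ Y0 ω < Y1 ω} <;>
      by_cases hf : ω ∈ {ω | D0 ω < D1 ω ∧ Y1 ω < Y0 ω} <;>
        simp [Set.indicator_apply, hc, hf]
  -- the denominator
  have hDen : cmean μ Y {ω | Z ω = 1} - cmean μ Y {ω | Z ω = 0}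
      = (μ {ω | D0 ω < D1 ω ∧ Y0 ω < Y1 ω}).toReal
        - (μ {ω | D0 ω < D1 ω ∧ Y1 ω < Y0 ω}).toReal := by
    rw [e1, e0, ← integral_sub hiY1 hiY0, integral_congr_ae haeY,
      integral_sub ((integrable_const (1:ℝ)).indicator hccm) ((integrable_const (1:ℝ)).indicator hcfm),
      integral_indicator_const (1:ℝ) hccm, integral_indicator_const (1:ℝ) hcfm]
    simp
    rfl
  -- the numerator
  have hNum : cmean μ (fun ω => h (X ω) * Y ω) {ω | Z ω = 1}
        - cmean μ (fun ω => h (X ω) * Y ω) {ω | Z ω = 0}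
      = (∫ ω in {ω | D0 ω < D1 ω ∧ Y0 ω < Y1 ω}, h (X ω) ∂μ)
        - ∫ ω in {ω | D0 ω < D1 ω ∧ Y1 ω < Y0 ω}, h (X ω) ∂μ := by
    rw [f1, f0, ← integral_sub hiH1 hiH0, integral_congr_ae haeH,
      integral_sub (hint.indicator hccm) (hint.indicator hcfm),
      integral_indicator hccm, integral_indicator hcfm]
  -- conditional means times probabilities
  have hApcc : cmean μ (fun ω => h (X ω)) {ω | D0 ω < D1 ω ∧ Y0 ω < Y1 ω}
        * (μ {ω | D0 ω < D1 ω ∧ Y0 ω < Y1 ω}).toReal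
      = ∫ ω in {ω | D0 ω < D1 ω ∧ Y0 ω < Y1 ω}, h (X ω) ∂μ := by
    unfold cmean
    by_cases hp : (μ {ω | D0 ω < D1 ω ∧ Y0 ω < Y1 ω}).toReal = 0
    · have hz : μ {ω | D0 ω < D1 ω ∧ Y0 ω < Y1 ω} = 0 :=
        (ENNReal.toReal_eq_zero_iff _).mp hp |>.resolve_right (measure_ne_top μ _)
      simp [hp, Measure.restrict_eq_zero.mpr hz]
    · field_simp
  have hBpcf : cmean μ (fun ω => h (X ω)) {ω | D0 ω < D1 ω ∧ Y1 ω < Y0 ω}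
        * (μ {ω | D0 ω < D1 ω ∧ Y1 ω < Y0 ω}).toReal
      = ∫ ω in {ω | D0 ω < D1 ω ∧ Y1 ω < Y0 ω}, h (X ω) ∂μ := by
    unfold cmean
    by_cases hp : (μ {ω | D0 ω < D1 ω ∧ Y1 ω < Y0 ω}).toReal = 0
    · have hz : μ {ω | D0 ω < D1 ω ∧ Y1 ω < Y0 ω} = 0 :=
        (ENNReal.toReal_eq_zero_iff _).mp hp |>.resolve_right (measure_ne_top μ _)
      simp [hp, Measure.restrict_eq_zero.mpr hz]
    · field_simp
  -- final algebra
  set Δ := cmean μ Y {ω | Z ω = 1} - cmean μ Y {ω | Z ω = 0} with hΔdef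
  set A := cmean μ (fun ω => h (X ω)) {ω | D0 ω < D1 ω ∧ Y0 ω < Y1 ω} with hAdef
  set B := cmean μ (fun ω => h (X ω)) {ω | D0 ω < D1 ω ∧ Y1 ω < Y0 ω} with hBdef
  set pcc := (μ {ω | D0 ω < D1 ω ∧ Y0 ω < Y1 ω}).toReal with hpccdef
  set pcf := (μ {ω | D0 ω < D1 ω ∧ Y1 ω < Y0 ω}).toReal with hpcfdef
  set Icc := ∫ ω in {ω | D0 ω < D1 ω ∧ Y0 ω < Y1 ω}, h (X ω) ∂μ with hIccdef
  set Icf := ∫ ω in {ω | D0 ω < D1 ω ∧ Y1 ω < Y0 ω}, h (X ω) ∂μ with hIcfdef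
  rw [hNum]
  field_simp
  linear_combination -hApcc + hBpcf - A*hDen + A*hΔdef
end

section
/- For a non-binary real-valued outcome Y, under random assignment, treatment monotonicity, and outcome monotonicity P(Y1 ≥ Y0) = 1, the reduced form identifies the supercomplier share scaled by the supercomplier average treatment effect: Pr(D1>D0, Y1>Y0)·E[Y1 − Y0 | D1>D0, Y1>Y0] = E[Y | Z=1] − E[Y | Z=0]. -/
open MeasureTheory ProbabilityTheory

lemma key_indep {Ω : Type} [MeasurableSpace Ω] (μ : Measure Ω) [IsProbabilityMeasure μ]
    (W : Ω → ℝ) (Z : Ω → ℝ) (c : ℝ) (hW : AEStronglyMeasurable W μ) (hZ : Measurable Z)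
    (hindep : IndepFun W Z μ) :
    ∫ ω in {ω | Z ω = c}, W ω ∂μ = (∫ ω, W ω ∂μ) * (μ {ω | Z ω = c}).toReal := by
  set ψ : ℝ → ℝ := Set.indicator {c} 1 with hψ
  have hψm : Measurable ψ := measurable_one.indicator (measurableSet_singleton c)
  have hind2 : IndepFun W (ψ ∘ Z) μ := hindep.comp measurable_id hψm
  have hs : MeasurableSet {ω | Z ω = c} := hZ (measurableSet_singleton c)
  have h1 : (fun ω => W ω * ψ (Z ω)) = Set.indicator {ω | Z ω = c} W := by
    funext ω
    by_cases h : Z ω = c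
    · simp [hψ, Set.indicator_apply, h]
    · simp [hψ, Set.indicator_apply, h]
  have h2 : ∫ ω, W ω * ψ (Z ω) ∂μ = (∫ ω, W ω ∂μ) * ∫ ω, ψ (Z ω) ∂μ :=
    hind2.integral_fun_mul_eq_mul_integral hW (hψm.comp hZ).aestronglyMeasurable
  have h3 : (fun ω => ψ (Z ω)) = Set.indicator {ω | Z ω = c} (1 : Ω → ℝ) := by
    funext ω
    by_cases h : Z ω = c
    · simp [hψ, Set.indicator_apply, h]
    · simp [hψ, Set.indicator_apply, h]
  rw [← integral_indicator hs, ← h1, h2]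
  congr 1
  rw [show (fun ω => ψ (Z ω)) = fun ω => Set.indicator {ω | Z ω = c} (1 : Ω → ℝ) ω from h3]
  exact integral_indicator_one hs

theorem reduced_form_non_binary_outcome
    {Ω : Type} [MeasurableSpace Ω] (μ : Measure Ω) [IsProbabilityMeasure μ]
    (Z D0 D1 : Ω → ℝ) (Y0 Y1 : Ω → ℝ) (D Y : Ω → ℝ)
    (hZm : Measurable Z) (hD0m : Measurable D0) (hD1m : Measurable D1)
    (hY0m : Measurable Y0) (hY1m : Measurable Y1)
    (hZbin : ∀ ω, Z ω = 0 ∨ Z ω = 1)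
    (hD0bin : ∀ ω, D0 ω = 0 ∨ D0 ω = 1)
    (hD1bin : ∀ ω, D1 ω = 0 ∨ D1 ω = 1)
    (hY0int : Integrable Y0 μ) (hY1int : Integrable Y1 μ)
    (hD : ∀ ω, D ω = Z ω * D1 ω + (1 - Z ω) * D0 ω)
    (hY : ∀ ω, Y ω = D ω * Y1 ω + (1 - D ω) * Y0 ω)
    (hindep : IndepFun (fun ω => (Y0 ω, Y1 ω, D0 ω, D1 ω)) Z μ)
    (hz0 : 0 < μ {ω | Z ω = 1}) (hz1 : μ {ω | Z ω = 1} < 1)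
    (hmonoD : ∀ᵐ ω ∂μ, D0 ω ≤ D1 ω)
    (hmonoY : ∀ᵐ ω ∂μ, Y0 ω ≤ Y1 ω)
    (hcc : 0 < μ {ω | D0 ω < D1 ω ∧ Y0 ω < Y1 ω}) :
    (μ {ω | D0 ω < D1 ω ∧ Y0 ω < Y1 ω}).toReal
        * cmean μ (fun ω => Y1 ω - Y0 ω) {ω | D0 ω < D1 ω ∧ Y0 ω < Y1 ω}
      = cmean μ Y {ω | Z ω = 1} - cmean μ Y {ω | Z ω = 0} := by
  set S : Set Ω := {ω | D0 ω < D1 ω ∧ Y0 ω < Y1 ω} with hS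
  have hSm : MeasurableSet S :=
    (measurableSet_lt hD0m hD1m).inter (measurableSet_lt hY0m hY1m)
  set g : Ω → ℝ := fun ω => Y0 ω + D1 ω * (Y1 ω - Y0 ω) with hg
  set h : Ω → ℝ := fun ω => Y0 ω + D0 ω * (Y1 ω - Y0 ω) with hh
  have hgm : Measurable g := by fun_prop
  have hhm : Measurable h := by fun_prop
  have hbd1 : ∃ C, ∀ ω, ‖D1 ω‖ ≤ C := ⟨1, fun ω => by rcases hD1bin ω with h'|h' <;> simp [h']⟩
  have hbd0 : ∃ C, ∀ ω, ‖D0 ω‖ ≤ C := ⟨1, fun ω => by rcases hD0bin ω with h'|h' <;> simp [h']⟩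
  have hgint : Integrable g μ :=
    hY0int.add ((hY1int.sub hY0int).bdd_mul hD1m.aestronglyMeasurable (ae_of_all _ hbd1.choose_spec))
  have hhint : Integrable h μ :=
    hY0int.add ((hY1int.sub hY0int).bdd_mul hD0m.aestronglyMeasurable (ae_of_all _ hbd0.choose_spec))
  -- independence of g, h from Z
  have hgind : IndepFun g Z μ := by
    have := hindep.comp (φ := fun p : ℝ × ℝ × ℝ × ℝ => p.1 + p.2.2.2 * (p.2.1 - p.1))
      (ψ := id) (by fun_prop) measurable_id
    exact this
  have hhind : IndepFun h Z μ := by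
    have := hindep.comp (φ := fun p : ℝ × ℝ × ℝ × ℝ => p.1 + p.2.2.1 * (p.2.1 - p.1))
      (ψ := id) (by fun_prop) measurable_id
    exact this
  -- measures of the Z-events
  have hz1' : μ {ω | Z ω = 1} ≠ ⊤ := (measure_lt_top μ _).ne
  have ht1 : (μ {ω | Z ω = 1}).toReal ≠ 0 := by
    simp [ENNReal.toReal_ne_zero, hz0.ne', hz1']
  have hcompl : {ω | Z ω = 0} = {ω | Z ω = 1}ᶜ := by
    ext ω; rcases hZbin ω with h'|h' <;> simp [h']
  have hz0pos : 0 < μ {ω | Z ω = 0} := by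
    rw [hcompl]
    have := prob_compl_eq_one_sub (μ := μ) (hZm (measurableSet_singleton (1:ℝ)))
    rw [show {ω | Z ω = 1} = Z ⁻¹' {1} from rfl] at *
    rw [this]
    exact tsub_pos_of_lt hz1
  have ht0 : (μ {ω | Z ω = 0}).toReal ≠ 0 := by
    simp [ENNReal.toReal_ne_zero, hz0pos.ne', (measure_lt_top μ _).ne]
  -- cmean on Z = 1 equals E[g]
  have hcm1 : cmean μ Y {ω | Z ω = 1} = ∫ ω, g ω ∂μ := by
    have hs : MeasurableSet {ω | Z ω = 1} := hZm (measurableSet_singleton 1)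
    have heq : Set.EqOn Y g {ω | Z ω = 1} := by
      intro ω hω
      have hz : Z ω = 1 := hω
      have hd : D ω = D1 ω := by rw [hD ω, hz]; ring
      rw [hY ω, hd, hg]; ring
    rw [cmean, setIntegral_congr_fun hs heq,
      key_indep μ g Z 1 hgm.aestronglyMeasurable hZm hgind]
    field_simp
  have hcm0 : cmean μ Y {ω | Z ω = 0} = ∫ ω, h ω ∂μ := by
    have hs : MeasurableSet {ω | Z ω = 0} := hZm (measurableSet_singleton 0)
    have heq : Set.EqOn Y h {ω | Z ω = 0} := by
      intro ω hω
      have hz : Z ω = 0 := hω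
      have hd : D ω = D0 ω := by rw [hD ω, hz]; ring
      rw [hY ω, hd, hh]; ring
    rw [cmean, setIntegral_congr_fun hs heq,
      key_indep μ h Z 0 hhm.aestronglyMeasurable hZm hhind]
    field_simp
  -- LHS equals the integral over S
  have hSfin : (μ S).toReal ≠ 0 := by
    simp [ENNReal.toReal_ne_zero, hcc.ne', (measure_lt_top μ S).ne]
  have hLHS : (μ S).toReal * cmean μ (fun ω => Y1 ω - Y0 ω) S
      = ∫ ω in S, (Y1 ω - Y0 ω) ∂μ := by
    rw [cmean]; field_simp
  -- a.e. equality of indicator and (D1-D0)(Y1-Y0)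
  have hae : ∀ᵐ ω ∂μ, Set.indicator S (fun ω => Y1 ω - Y0 ω) ω
      = (D1 ω - D0 ω) * (Y1 ω - Y0 ω) := by
    filter_upwards [hmonoD, hmonoY] with ω h1 h2
    rcases hD0bin ω with h0|h0 <;> rcases hD1bin ω with hd1|hd1
    · have : ω ∉ S := by simp [hS, h0, hd1]
      simp [Set.indicator_apply, this, h0, hd1]
    · rcases lt_or_eq_of_le h2 with hy|hy
      · have : ω ∈ S := by simp [hS, h0, hd1, hy]
        simp [Set.indicator_apply, this, h0, hd1]
      · have : Y1 ω - Y0 ω = 0 := by rw [← hy]; ring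
        simp [this]
    · exfalso; rw [h0, hd1] at h1; linarith
    · have : ω ∉ S := by simp [hS, h0, hd1]
      simp [Set.indicator_apply, this, h0, hd1]
  have hmain : ∫ ω in S, (Y1 ω - Y0 ω) ∂μ = (∫ ω, g ω ∂μ) - ∫ ω, h ω ∂μ := by
    rw [← integral_sub hgint hhint, ← integral_indicator hSm]
    rw [integral_congr_ae hae]
    congr 1
    funext ω
    simp [hg, hh]; ring
  rw [hcm1, hcm0, hLHS, hmain]
end

section
/- For a non-binary outcome, under the assumptions of the previous result plus independence of X from Z jointly with the potential outcomes, the Wald estimand identifies the treatment-effect-weighted supercomplier characteristics: E[h(X)(Y1−Y0) | G=cc] / E[Y1−Y0 | G=cc] = (E[h(X)Y|Z=1] − E[h(X)Y|Z=0]) / (E[Y|Z=1] − E[Y|Z=0]), where G=cc is the event {D1>D0, Y1>Y0}. -/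
open MeasureTheory ProbabilityTheory

section aux

variable {Ω : Type} [MeasurableSpace Ω] {μ : Measure Ω} [IsProbabilityMeasure μ]

lemma setint_one {Z : Ω → ℝ} (W : Ω → ℝ) (hW : Integrable W μ) (hZm : Measurable Z)
    (hZbin : ∀ ω, Z ω = 0 ∨ Z ω = 1) (hind : IndepFun W Z μ) :
    ∫ ω in {ω | Z ω = 1}, W ω ∂μ = (∫ ω, W ω ∂μ) * (μ {ω | Z ω = 1}).toReal := by
  have hs : MeasurableSet {ω | Z ω = 1} := hZm (measurableSet_singleton 1)
  have hZint : Integrable Z μ := by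
    refine (integrable_const (1 : ℝ)).mono' hZm.aestronglyMeasurable ?_
    filter_upwards with ω
    rcases hZbin ω with h | h <;> simp [h]
  have h2 : ∫ ω in {ω | Z ω = 1}, W ω ∂μ = ∫ ω, W ω * Z ω ∂μ := by
    rw [← integral_indicator hs]
    refine integral_congr_ae (Filter.Eventually.of_forall fun ω => ?_)
    rcases hZbin ω with h | h <;>
      simp [Set.indicator, h]
  have h3 : ∫ ω, W ω * Z ω ∂μ = (∫ ω, W ω ∂μ) * ∫ ω, Z ω ∂μ :=
    hind.integral_fun_mul_eq_mul_integral hW.aestronglyMeasurable hZint.aestronglyMeasurable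
  have h4 : ∫ ω, Z ω ∂μ = (μ {ω | Z ω = 1}).toReal := by
    have heq : ∀ ω, Z ω = Set.indicator {ω | Z ω = 1} (fun _ => (1:ℝ)) ω := by
      intro ω; rcases hZbin ω with h | h <;> simp [Set.indicator, h]
    rw [integral_congr_ae (Filter.Eventually.of_forall heq), integral_indicator hs]
    simp
    rfl
  rw [h2, h3, h4]

lemma setint_zero {Z : Ω → ℝ} (W : Ω → ℝ) (hW : Integrable W μ) (hZm : Measurable Z)
    (hZbin : ∀ ω, Z ω = 0 ∨ Z ω = 1) (hind : IndepFun W Z μ) :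
    ∫ ω in {ω | Z ω = 0}, W ω ∂μ = (∫ ω, W ω ∂μ) * (μ {ω | Z ω = 0}).toReal := by
  have hZ'bin : ∀ ω, (1 - Z ω) = 0 ∨ (1 - Z ω) = 1 := by
    intro ω; rcases hZbin ω with h | h <;> simp [h]
  have hind' : IndepFun W (fun ω => 1 - Z ω) μ :=
    hind.comp measurable_id (measurable_const.sub measurable_id)
  have hset : {ω | 1 - Z ω = 1} = {ω | Z ω = 0} := by
    ext ω
    constructor
    · intro hω; have : (1:ℝ) - Z ω = 1 := hω; simpa using by linarith [this]
    · intro hω; have : Z ω = 0 := hω; show (1:ℝ) - Z ω = 1; rw [this]; ring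
  have hkey := setint_one (μ := μ) (Z := fun ω => 1 - Z ω) W hW (measurable_const.sub hZm) hZ'bin hind'
  rwa [hset] at hkey

end aux

theorem wald_non_binary_outcome
    {Ω : Type} [MeasurableSpace Ω] (μ : Measure Ω) [IsProbabilityMeasure μ]
    (Z D0 D1 : Ω → ℝ) (Y0 Y1 : Ω → ℝ) (X : Ω → ℝ) (D Y : Ω → ℝ)
    (hZm : Measurable Z) (hD0m : Measurable D0) (hD1m : Measurable D1)
    (hY0m : Measurable Y0) (hY1m : Measurable Y1) (hXm : Measurable X)
    (hZbin : ∀ ω, Z ω = 0 ∨ Z ω = 1)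
    (hD0bin : ∀ ω, D0 ω = 0 ∨ D0 ω = 1)
    (hD1bin : ∀ ω, D1 ω = 0 ∨ D1 ω = 1)
    (hY0int : Integrable Y0 μ) (hY1int : Integrable Y1 μ)
    (hD : ∀ ω, D ω = Z ω * D1 ω + (1 - Z ω) * D0 ω)
    (hY : ∀ ω, Y ω = D ω * Y1 ω + (1 - D ω) * Y0 ω)
    (h : ℝ → ℝ) (hhm : Measurable h)
    (hint : Integrable (fun ω => h (X ω)) μ)
    (hint0 : Integrable (fun ω => h (X ω) * Y0 ω) μ)
    (hint1 : Integrable (fun ω => h (X ω) * Y1 ω) μ)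
    (hindep : IndepFun (fun ω => (X ω, Y0 ω, Y1 ω, D0 ω, D1 ω)) Z μ)
    (hz0 : 0 < μ {ω | Z ω = 1}) (hz1 : μ {ω | Z ω = 1} < 1)
    (hmonoD : ∀ᵐ ω ∂μ, D0 ω ≤ D1 ω)
    (hmonoY : ∀ᵐ ω ∂μ, Y0 ω ≤ Y1 ω)
    (hcc : 0 < μ {ω | D0 ω < D1 ω ∧ Y0 ω < Y1 ω}) :
    cmean μ (fun ω => h (X ω) * (Y1 ω - Y0 ω)) {ω | D0 ω < D1 ω ∧ Y0 ω < Y1 ω}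
        / cmean μ (fun ω => Y1 ω - Y0 ω) {ω | D0 ω < D1 ω ∧ Y0 ω < Y1 ω}
      = (cmean μ (fun ω => h (X ω) * Y ω) {ω | Z ω = 1}
          - cmean μ (fun ω => h (X ω) * Y ω) {ω | Z ω = 0})
        / (cmean μ Y {ω | Z ω = 1} - cmean μ Y {ω | Z ω = 0}) := by
  set cc := {ω | D0 ω < D1 ω ∧ Y0 ω < Y1 ω} with hccdef
  have hccm : MeasurableSet cc :=
    (measurableSet_lt hD0m hD1m).inter (measurableSet_lt hY0m hY1m)
  have hs1 : MeasurableSet {ω | Z ω = 1} := hZm (measurableSet_singleton 1)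
  have hs0 : MeasurableSet {ω | Z ω = 0} := hZm (measurableSet_singleton 0)
  have hp : (μ {ω | Z ω = 1}).toReal ≠ 0 :=
    (ENNReal.toReal_pos hz0.ne' (measure_ne_top μ _)).ne'
  have hq0 : 0 < μ {ω | Z ω = 0} := by
    have hset : {ω | Z ω = 0} = {ω | Z ω = 1}ᶜ := by
      ext ω
      simp only [Set.mem_setOf_eq, Set.mem_compl_iff]
      rcases hZbin ω with h' | h' <;> simp [h']
    rw [hset, measure_compl hs1 (measure_ne_top μ _), measure_univ]
    exact tsub_pos_of_lt hz1
  have hq : (μ {ω | Z ω = 0}).toReal ≠ 0 :=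
    (ENNReal.toReal_pos hq0.ne' (measure_ne_top μ _)).ne'
  have hc : (μ cc).toReal ≠ 0 :=
    (ENNReal.toReal_pos hcc.ne' (measure_ne_top μ _)).ne'
  -- latent functions
  set g1 : Ω → ℝ := fun ω => h (X ω) * (Y0 ω + D1 ω * (Y1 ω - Y0 ω)) with hg1def
  set g0 : Ω → ℝ := fun ω => h (X ω) * (Y0 ω + D0 ω * (Y1 ω - Y0 ω)) with hg0def
  set k1 : Ω → ℝ := fun ω => Y0 ω + D1 ω * (Y1 ω - Y0 ω) with hk1def
  set k0 : Ω → ℝ := fun ω => Y0 ω + D0 ω * (Y1 ω - Y0 ω) with hk0def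
  -- integrability
  have hgbound : Integrable (fun ω => |h (X ω) * Y0 ω| + |h (X ω) * Y1 ω|) μ :=
    hint0.abs.add hint1.abs
  have hkbound : Integrable (fun ω => |Y0 ω| + |Y1 ω|) μ := hY0int.abs.add hY1int.abs
  have hgint : ∀ (Dd : Ω → ℝ), Measurable Dd → (∀ ω, Dd ω = 0 ∨ Dd ω = 1) →
      Integrable (fun ω => h (X ω) * (Y0 ω + Dd ω * (Y1 ω - Y0 ω))) μ := by
    intro Dd hDd hDbin
    refine hgbound.mono'
      (((hhm.comp hXm).mul (hY0m.add (hDd.mul (hY1m.sub hY0m)))).aestronglyMeasurable) ?_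
    filter_upwards with ω
    rcases hDbin ω with hd | hd <;> rw [hd] <;> simp only [zero_mul, one_mul, add_zero]
    · calc ‖h (X ω) * Y0 ω‖ = |h (X ω) * Y0 ω| := rfl
        _ ≤ |h (X ω) * Y0 ω| + |h (X ω) * Y1 ω| := le_add_of_nonneg_right (abs_nonneg _)
    · rw [show Y0 ω + (Y1 ω - Y0 ω) = Y1 ω by ring]
      calc ‖h (X ω) * Y1 ω‖ = |h (X ω) * Y1 ω| := rfl
        _ ≤ |h (X ω) * Y0 ω| + |h (X ω) * Y1 ω| := le_add_of_nonneg_left (abs_nonneg _)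
  have hkint : ∀ (Dd : Ω → ℝ), Measurable Dd → (∀ ω, Dd ω = 0 ∨ Dd ω = 1) →
      Integrable (fun ω => Y0 ω + Dd ω * (Y1 ω - Y0 ω)) μ := by
    intro Dd hDd hDbin
    refine hkbound.mono'
      ((hY0m.add (hDd.mul (hY1m.sub hY0m))).aestronglyMeasurable) ?_
    filter_upwards with ω
    rcases hDbin ω with hd | hd <;> rw [hd] <;> simp only [zero_mul, one_mul, add_zero]
    · calc ‖Y0 ω‖ = |Y0 ω| := rfl
        _ ≤ |Y0 ω| + |Y1 ω| := le_add_of_nonneg_right (abs_nonneg _)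
    · rw [show Y0 ω + (Y1 ω - Y0 ω) = Y1 ω by ring]
      calc ‖Y1 ω‖ = |Y1 ω| := rfl
        _ ≤ |Y0 ω| + |Y1 ω| := le_add_of_nonneg_left (abs_nonneg _)
  have hg1int : Integrable g1 μ := hgint D1 hD1m hD1bin
  have hg0int : Integrable g0 μ := hgint D0 hD0m hD0bin
  have hk1int : Integrable k1 μ := hkint D1 hD1m hD1bin
  have hk0int : Integrable k0 μ := hkint D0 hD0m hD0bin
  -- independence
  have hind : ∀ (φ : ℝ × ℝ × ℝ × ℝ × ℝ → ℝ), Measurable φ →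
      IndepFun (fun ω => φ (X ω, Y0 ω, Y1 ω, D0 ω, D1 ω)) Z μ := fun φ hφ =>
    hindep.comp hφ measurable_id
  have hg1ind : IndepFun g1 Z μ :=
    hind (fun p => h p.1 * (p.2.1 + p.2.2.2.2 * (p.2.2.1 - p.2.1))) (by fun_prop)
  have hg0ind : IndepFun g0 Z μ :=
    hind (fun p => h p.1 * (p.2.1 + p.2.2.2.1 * (p.2.2.1 - p.2.1))) (by fun_prop)
  have hk1ind : IndepFun k1 Z μ :=
    hind (fun p => p.2.1 + p.2.2.2.2 * (p.2.2.1 - p.2.1)) (by fun_prop)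
  have hk0ind : IndepFun k0 Z μ :=
    hind (fun p => p.2.1 + p.2.2.2.1 * (p.2.2.1 - p.2.1)) (by fun_prop)
  -- pointwise identification on Z-sets
  have hY1eq : ∀ ω ∈ {ω | Z ω = 1}, h (X ω) * Y ω = g1 ω := by
    intro ω hω
    have hz : Z ω = 1 := hω
    rw [hg1def]; simp only; rw [hY ω, hD ω, hz]; ring
  have hY0eq : ∀ ω ∈ {ω | Z ω = 0}, h (X ω) * Y ω = g0 ω := by
    intro ω hω
    have hz : Z ω = 0 := hω
    rw [hg0def]; simp only; rw [hY ω, hD ω, hz]; ring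
  have hYk1eq : ∀ ω ∈ {ω | Z ω = 1}, Y ω = k1 ω := by
    intro ω hω
    have hz : Z ω = 1 := hω
    rw [hk1def]; simp only; rw [hY ω, hD ω, hz]; ring
  have hYk0eq : ∀ ω ∈ {ω | Z ω = 0}, Y ω = k0 ω := by
    intro ω hω
    have hz : Z ω = 0 := hω
    rw [hk0def]; simp only; rw [hY ω, hD ω, hz]; ring
  -- cmean computations on Z-sets
  have e1 : cmean μ (fun ω => h (X ω) * Y ω) {ω | Z ω = 1} = ∫ ω, g1 ω ∂μ := by
    rw [cmean, setIntegral_congr_fun hs1 hY1eq,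
      setint_one g1 hg1int hZm hZbin hg1ind, mul_div_assoc, div_self hp, mul_one]
  have e0 : cmean μ (fun ω => h (X ω) * Y ω) {ω | Z ω = 0} = ∫ ω, g0 ω ∂μ := by
    rw [cmean, setIntegral_congr_fun hs0 hY0eq,
      setint_zero g0 hg0int hZm hZbin hg0ind, mul_div_assoc, div_self hq, mul_one]
  have f1 : cmean μ Y {ω | Z ω = 1} = ∫ ω, k1 ω ∂μ := by
    rw [cmean, setIntegral_congr_fun hs1 hYk1eq,
      setint_one k1 hk1int hZm hZbin hk1ind, mul_div_assoc, div_self hp, mul_one]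
  have f0 : cmean μ Y {ω | Z ω = 0} = ∫ ω, k0 ω ∂μ := by
    rw [cmean, setIntegral_congr_fun hs0 hYk0eq,
      setint_zero k0 hk0int hZm hZbin hk0ind, mul_div_assoc, div_self hq, mul_one]
  -- key a.e. identity
  have hcases : ∀ᵐ ω ∂μ, ∀ c : ℝ,
      c * ((D1 ω - D0 ω) * (Y1 ω - Y0 ω)) =
      Set.indicator cc (fun _ => (1:ℝ)) ω * (c * (Y1 ω - Y0 ω)) := by
    filter_upwards [hmonoD, hmonoY] with ω hd hy c
    by_cases hmem : ω ∈ cc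
    · have h1 : D0 ω < D1 ω := hmem.1
      have hd0 : D0 ω = 0 := by
        rcases hD0bin ω with h' | h'
        · exact h'
        · exfalso
          rcases hD1bin ω with h'' | h'' <;> rw [h', h''] at h1 <;> linarith
      have hd1 : D1 ω = 1 := by
        rcases hD1bin ω with h' | h'
        · exfalso; rw [h', hd0] at h1; linarith
        · exact h'
      rw [Set.indicator_of_mem hmem, hd0, hd1]; ring
    · rw [Set.indicator_of_notMem hmem, zero_mul]
      rw [hccdef] at hmem
      simp only [Set.mem_setOf_eq, not_and, not_lt] at hmem
      rcases eq_or_lt_of_le hd with hde | hdl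
      · rw [← hde]; ring
      · have hye : Y1 ω = Y0 ω := le_antisymm (hmem hdl) hy
        rw [hye]; ring
  have diffA : (∫ ω, g1 ω ∂μ) - (∫ ω, g0 ω ∂μ)
      = ∫ ω in cc, h (X ω) * (Y1 ω - Y0 ω) ∂μ := by
    rw [← integral_sub hg1int hg0int, ← integral_indicator hccm]
    refine integral_congr_ae ?_
    filter_upwards [hcases] with ω hω
    have hkey := hω (h (X ω))
    rw [hg1def, hg0def]
    simp only
    rw [show h (X ω) * (Y0 ω + D1 ω * (Y1 ω - Y0 ω))
          - h (X ω) * (Y0 ω + D0 ω * (Y1 ω - Y0 ω))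
        = h (X ω) * ((D1 ω - D0 ω) * (Y1 ω - Y0 ω)) by ring, hkey]
    by_cases hmem : ω ∈ cc
    · rw [Set.indicator_of_mem hmem, Set.indicator_of_mem hmem]; ring
    · rw [Set.indicator_of_notMem hmem, Set.indicator_of_notMem hmem]; ring
  have diffB : (∫ ω, k1 ω ∂μ) - (∫ ω, k0 ω ∂μ)
      = ∫ ω in cc, (Y1 ω - Y0 ω) ∂μ := by
    rw [← integral_sub hk1int hk0int, ← integral_indicator hccm]
    refine integral_congr_ae ?_
    filter_upwards [hcases] with ω hω
    have hkey := hω 1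
    rw [hk1def, hk0def]
    simp only
    rw [show (Y0 ω + D1 ω * (Y1 ω - Y0 ω)) - (Y0 ω + D0 ω * (Y1 ω - Y0 ω))
        = 1 * ((D1 ω - D0 ω) * (Y1 ω - Y0 ω)) by ring, hkey]
    by_cases hmem : ω ∈ cc
    · rw [Set.indicator_of_mem hmem, Set.indicator_of_mem hmem]; ring
    · rw [Set.indicator_of_notMem hmem, Set.indicator_of_notMem hmem]; ring
  rw [e1, e0, f1, f0, diffA, diffB, cmean, cmean, div_div_div_comm, div_self hc, div_one]
end

section
/- Under the LATE assumptions plus outcome monotonicity, the share of the group G=ca (compliers who are outcome always-takers: D1>D0, Y0=Y1=1) is identified by Pr(G=ca) = E[(1−D)Y | Z=0] − E[(1−D)Y | Z=1]. -/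
open MeasureTheory ProbabilityTheory

theorem ca_group_share
{Ω : Type} [MeasurableSpace Ω] (μ : Measure Ω) [IsProbabilityMeasure μ]
    (Z D0 D1 Y0 Y1 D Y : Ω → ℝ)
    (hZm : Measurable Z) (hD0m : Measurable D0) (hD1m : Measurable D1)
    (hY0m : Measurable Y0) (hY1m : Measurable Y1)
    (hZbin : ∀ ω, Z ω = 0 ∨ Z ω = 1)
    (hD0bin : ∀ ω, D0 ω = 0 ∨ D0 ω = 1)
    (hD1bin : ∀ ω, D1 ω = 0 ∨ D1 ω = 1)
    (hY0bin : ∀ ω, Y0 ω = 0 ∨ Y0 ω = 1)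
    (hY1bin : ∀ ω, Y1 ω = 0 ∨ Y1 ω = 1)
    (hD : ∀ ω, D ω = Z ω * D1 ω + (1 - Z ω) * D0 ω)
    (hY : ∀ ω, Y ω = D ω * Y1 ω + (1 - D ω) * Y0 ω)
    (hz0 : 0 < μ {ω | Z ω = 1}) (hz1 : μ {ω | Z ω = 1} < 1)
    (hmonoD : ∀ᵐ ω ∂μ, D0 ω ≤ D1 ω)
    (hmonoY : ∀ᵐ ω ∂μ, Y0 ω ≤ Y1 ω)
    (hindep : IndepFun (fun ω => (Y0 ω, Y1 ω, D0 ω, D1 ω)) Z μ) :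
    (μ {ω | D0 ω < D1 ω ∧ Y0 ω = 1 ∧ Y1 ω = 1}).toReal
      = cmean μ (fun ω => (1 - D ω) * Y ω) {ω | Z ω = 0}
        - cmean μ (fun ω => (1 - D ω) * Y ω) {ω | Z ω = 1} := by
  classical
  set W : Ω → ℝ × ℝ × ℝ × ℝ := fun ω => (Y0 ω, Y1 ω, D0 ω, D1 ω) with hWdef
  have hWm : Measurable W := hY0m.prodMk (hY1m.prodMk (hD0m.prodMk hD1m))
  -- key independence computation
  have key : ∀ (g : ℝ × ℝ × ℝ × ℝ → ℝ), Measurable g → ∀ c : ℝ,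
      ∫ ω in {ω | Z ω = c}, g (W ω) ∂μ
        = (∫ ω, g (W ω) ∂μ) * (μ {ω | Z ω = c}).toReal := by
    intro g hg c
    have hset : MeasurableSet {ω | Z ω = c} := hZm (measurableSet_singleton c)
    have hindm : Measurable (Set.indicator ({c} : Set ℝ) (fun _ => (1:ℝ))) :=
      measurable_const.indicator (measurableSet_singleton c)
    have hIF : IndepFun (g ∘ W)
        ((Set.indicator ({c} : Set ℝ) (fun _ => (1:ℝ))) ∘ Z) μ :=
      hindep.comp hg hindm
    have hmul := hIF.integral_mul_eq_mul_integral (hg.comp hWm).aestronglyMeasurable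
      (hindm.comp hZm).aestronglyMeasurable
    have h1 : (g ∘ W) * ((Set.indicator ({c} : Set ℝ) (fun _ => (1:ℝ))) ∘ Z)
        = Set.indicator {ω | Z ω = c} (g ∘ W) := by
      funext ω
      by_cases h : Z ω = c <;>
        simp [Set.indicator_apply, h, Set.mem_setOf_eq]
    have h2 : ((Set.indicator ({c} : Set ℝ) (fun _ => (1:ℝ))) ∘ Z)
        = Set.indicator {ω | Z ω = c} (fun _ => (1:ℝ)) := by
      funext ω
      by_cases h : Z ω = c <;>
        simp [Set.indicator_apply, h, Set.mem_setOf_eq]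
    rw [h1, h2] at hmul
    rw [integral_indicator hset] at hmul
    rw [integral_indicator_const (1:ℝ) hset] at hmul
    simpa [smul_eq_mul, Function.comp, measureReal_def] using hmul
  -- measures of Z-sets
  have hZ0set : MeasurableSet {ω | Z ω = 0} := hZm (measurableSet_singleton 0)
  have hZ1set : MeasurableSet {ω | Z ω = 1} := hZm (measurableSet_singleton 1)
  have hcompl : {ω | Z ω = 0} = {ω | Z ω = 1}ᶜ := by
    ext ω
    rcases hZbin ω with h | h <;> simp [h]
  have hμ0 : μ {ω | Z ω = 0} = 1 - μ {ω | Z ω = 1} := by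
    rw [hcompl, measure_compl hZ1set (measure_ne_top μ _), measure_univ]
  have hμ0pos : (μ {ω | Z ω = 0}).toReal ≠ 0 := by
    rw [hμ0]
    have h1 : μ {ω | Z ω = 1} ≠ 1 := ne_of_lt hz1
    have : (1 : ENNReal) - μ {ω | Z ω = 1} ≠ 0 := by
      rw [Ne, tsub_eq_zero_iff_le, not_le]
      exact hz1
    simp [ENNReal.toReal_eq_zero_iff, this]
  have hμ1pos : (μ {ω | Z ω = 1}).toReal ≠ 0 := by
    have : μ {ω | Z ω = 1} ≠ 0 := ne_of_gt hz0
    simp [ENNReal.toReal_eq_zero_iff, this]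
  -- pointwise identities on Z-sets
  have hptw0 : ∀ ω, Z ω = 0 → (1 - D ω) * Y ω = (1 - D0 ω) * Y0 ω := by
    intro ω hz
    have hd : D ω = D0 ω := by rw [hD ω, hz]; ring
    rw [hY ω, hd]
    rcases hD0bin ω with h | h <;> rw [h] <;> ring
  have hptw1 : ∀ ω, Z ω = 1 → (1 - D ω) * Y ω = (1 - D1 ω) * Y0 ω := by
    intro ω hz
    have hd : D ω = D1 ω := by rw [hD ω, hz]; ring
    rw [hY ω, hd]
    rcases hD1bin ω with h | h <;> rw [h] <;> ring
  -- define the two g functions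
  set g0 : ℝ × ℝ × ℝ × ℝ → ℝ := fun p => (1 - p.2.2.1) * p.1 with hg0def
  set g1 : ℝ × ℝ × ℝ × ℝ → ℝ := fun p => (1 - p.2.2.2) * p.1 with hg1def
  have hg0m : Measurable g0 := by
    apply Measurable.mul
    · exact measurable_const.sub (measurable_fst.comp (measurable_snd.comp measurable_snd))
    · exact measurable_fst
  have hg1m : Measurable g1 := by
    apply Measurable.mul
    · exact measurable_const.sub (measurable_snd.comp (measurable_snd.comp measurable_snd))
    · exact measurable_fst
  -- cmean computations
  have hc0 : cmean μ (fun ω => (1 - D ω) * Y ω) {ω | Z ω = 0} = ∫ ω, g0 (W ω) ∂μ := by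
    unfold cmean
    have : ∫ ω in {ω | Z ω = 0}, (1 - D ω) * Y ω ∂μ
        = ∫ ω in {ω | Z ω = 0}, g0 (W ω) ∂μ :=
      setIntegral_congr_fun hZ0set (fun ω hω => hptw0 ω hω)
    rw [this, key g0 hg0m 0, mul_div_assoc, div_self hμ0pos, mul_one]
  have hc1 : cmean μ (fun ω => (1 - D ω) * Y ω) {ω | Z ω = 1} = ∫ ω, g1 (W ω) ∂μ := by
    unfold cmean
    have : ∫ ω in {ω | Z ω = 1}, (1 - D ω) * Y ω ∂μ
        = ∫ ω in {ω | Z ω = 1}, g1 (W ω) ∂μ :=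
      setIntegral_congr_fun hZ1set (fun ω hω => hptw1 ω hω)
    rw [this, key g1 hg1m 1, mul_div_assoc, div_self hμ1pos, mul_one]
  -- integrability of the bounded functions
  have hintf : ∀ (f : Ω → ℝ), Measurable f → (∀ ω, |f ω| ≤ 1) → Integrable f μ := by
    intro f hf hb
    exact ⟨hf.aestronglyMeasurable,
      HasFiniteIntegral.of_bounded (C := 1) (ae_of_all _ (fun ω => by
        simpa [Real.norm_eq_abs] using hb ω))⟩
  have hint0 : Integrable (fun ω => g0 (W ω)) μ := by
    apply hintf _ (hg0m.comp hWm)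
    intro ω
    show |(1 - D0 ω) * Y0 ω| ≤ 1
    rcases hD0bin ω with h | h <;> rcases hY0bin ω with h' | h' <;> simp [h, h']
  have hint1 : Integrable (fun ω => g1 (W ω)) μ := by
    apply hintf _ (hg1m.comp hWm)
    intro ω
    show |(1 - D1 ω) * Y0 ω| ≤ 1
    rcases hD1bin ω with h | h <;> rcases hY0bin ω with h' | h' <;> simp [h, h']
  -- the difference of the integrals
  have hsub : (∫ ω, g0 (W ω) ∂μ) - (∫ ω, g1 (W ω) ∂μ)
      = ∫ ω, (D1 ω - D0 ω) * Y0 ω ∂μ := by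
    rw [← integral_sub hint0 hint1]
    congr 1
    funext ω
    show (1 - D0 ω) * Y0 ω - (1 - D1 ω) * Y0 ω = _
    ring
  -- identify the integral with the measure of the complier set
  set S : Set Ω := {ω | D0 ω < D1 ω ∧ Y0 ω = 1} with hSdef
  have hSmeas : MeasurableSet S := by
    have : S = {ω | D0 ω < D1 ω} ∩ {ω | Y0 ω = 1} := rfl
    rw [this]
    exact (measurableSet_lt hD0m hD1m).inter (hY0m (measurableSet_singleton 1))
  have hae : (fun ω => (D1 ω - D0 ω) * Y0 ω)
      =ᵐ[μ] Set.indicator S (fun _ => (1:ℝ)) := by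
    filter_upwards [hmonoD] with ω hm
    rcases hD0bin ω with h0 | h0 <;> rcases hD1bin ω with h1 | h1 <;>
      rcases hY0bin ω with hy | hy
    · simp [Set.indicator_apply, hSdef, h0, h1, hy]
    · simp [Set.indicator_apply, hSdef, h0, h1, hy]
    · simp [Set.indicator_apply, hSdef, h0, h1, hy]
    · simp [Set.indicator_apply, hSdef, h0, h1, hy]
    · exfalso; rw [h0, h1] at hm; linarith
    · exfalso; rw [h0, h1] at hm; linarith
    · simp [Set.indicator_apply, hSdef, h0, h1, hy]
    · simp [Set.indicator_apply, hSdef, h0, h1, hy]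
  have hintS : ∫ ω, (D1 ω - D0 ω) * Y0 ω ∂μ = (μ S).toReal := by
    rw [integral_congr_ae hae, integral_indicator_const (1:ℝ) hSmeas, smul_eq_mul, mul_one]; rfl
  -- the two complier sets agree a.e.
  have hsets : {ω | D0 ω < D1 ω ∧ Y0 ω = 1 ∧ Y1 ω = 1} =ᵐ[μ] S := by
    rw [Filter.eventuallyEq_set]
    filter_upwards [hmonoY] with ω hm
    constructor
    · rintro ⟨a, b, c⟩; exact ⟨a, b⟩
    · rintro ⟨a, b⟩
      refine ⟨a, b, ?_⟩
      rcases hY1bin ω with h | h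
      · exfalso; rw [b, h] at hm; linarith
      · exact h
  rw [hc0, hc1, hsub, hintS, measure_congr hsets]
end

section
/- Under the LATE assumptions plus outcome monotonicity, the share of the group G=cn (compliers who are outcome never-takers: D1>D0, Y0=Y1=0) is identified by Pr(G=cn) = E[D(1−Y) | Z=1] − E[D(1−Y) | Z=0]. -/
open MeasureTheory ProbabilityTheory

theorem cn_group_share
{Ω : Type} [MeasurableSpace Ω] (μ : Measure Ω) [IsProbabilityMeasure μ]
    (Z D0 D1 Y0 Y1 D Y : Ω → ℝ)
    (hZm : Measurable Z) (hD0m : Measurable D0) (hD1m : Measurable D1)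
    (hY0m : Measurable Y0) (hY1m : Measurable Y1)
    (hZbin : ∀ ω, Z ω = 0 ∨ Z ω = 1)
    (hD0bin : ∀ ω, D0 ω = 0 ∨ D0 ω = 1)
    (hD1bin : ∀ ω, D1 ω = 0 ∨ D1 ω = 1)
    (hY0bin : ∀ ω, Y0 ω = 0 ∨ Y0 ω = 1)
    (hY1bin : ∀ ω, Y1 ω = 0 ∨ Y1 ω = 1)
    (hD : ∀ ω, D ω = Z ω * D1 ω + (1 - Z ω) * D0 ω)
    (hY : ∀ ω, Y ω = D ω * Y1 ω + (1 - D ω) * Y0 ω)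
    (hz0 : 0 < μ {ω | Z ω = 1}) (hz1 : μ {ω | Z ω = 1} < 1)
    (hmonoD : ∀ᵐ ω ∂μ, D0 ω ≤ D1 ω)
    (hmonoY : ∀ᵐ ω ∂μ, Y0 ω ≤ Y1 ω)
    (hindep : IndepFun (fun ω => (Y0 ω, Y1 ω, D0 ω, D1 ω)) Z μ) :
    (μ {ω | D0 ω < D1 ω ∧ Y0 ω = 0 ∧ Y1 ω = 0}).toReal
      = cmean μ (fun ω => D ω * (1 - Y ω)) {ω | Z ω = 1}
        - cmean μ (fun ω => D ω * (1 - Y ω)) {ω | Z ω = 0} := by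
  classical
  set f1 : Ω → ℝ := fun ω => D1 ω * (1 - Y1 ω) with hf1
  set f0 : Ω → ℝ := fun ω => D0 ω * (1 - Y1 ω) with hf0
  have hZ1meas : MeasurableSet {ω | Z ω = 1} := hZm (measurableSet_singleton 1)
  have hZ0meas : MeasurableSet {ω | Z ω = 0} := hZm (measurableSet_singleton 0)
  -- key: for any function of (Y0,Y1,D0,D1) bounded by 1,
  -- the set integral over {Z = c} factors
  have main : ∀ (c : ℝ) (f : Ω → ℝ) (φ : ℝ × ℝ × ℝ × ℝ → ℝ), Measurable φ →
      (∀ ω, f ω = φ (Y0 ω, Y1 ω, D0 ω, D1 ω)) → (∀ ω, ‖f ω‖ ≤ 1) →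
      MeasurableSet {ω | Z ω = c} →
      ∫ ω in {ω | Z ω = c}, f ω ∂μ = (∫ ω, f ω ∂μ) * (μ {ω | Z ω = c}).toReal := by
    intro c f φ hφ hfφ hbd hcmeas
    have hfeq : f = φ ∘ (fun ω => (Y0 ω, Y1 ω, D0 ω, D1 ω)) := funext hfφ
    have hfm : Measurable f := by
      rw [hfeq]
      exact hφ.comp ((hY0m.prodMk (hY1m.prodMk (hD0m.prodMk hD1m))))
    set χ : Ω → ℝ := fun ω => if Z ω = c then 1 else 0 with hχ
    have hψ : Measurable (fun x : ℝ => if x = c then (1:ℝ) else 0) := by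
      exact Measurable.ite (measurableSet_singleton c) measurable_const measurable_const
    have hindep2 : IndepFun f χ μ := by
      have h := hindep.comp hφ hψ
      rw [hfeq]
      exact h
    have hχm : Measurable χ := hψ.comp hZm
    have hintf : Integrable f μ := by
      refine (integrable_const (1:ℝ)).mono' hfm.aestronglyMeasurable ?_
      filter_upwards with ω using hbd ω
    have hintχ : Integrable χ μ := by
      refine (integrable_const (1:ℝ)).mono' hχm.aestronglyMeasurable ?_
      filter_upwards with ω
      by_cases h : Z ω = c <;> simp [hχ, h]
    have hmul := hindep2.integral_mul_eq_mul_integral hintf.1 hintχ.1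
    have hχind : (fun ω => f ω * χ ω) = Set.indicator {ω | Z ω = c} f := by
      funext ω
      by_cases h : Z ω = c <;>
        simp [hχ, Set.indicator_apply, h, Set.mem_setOf_eq]
    have hχind2 : χ = Set.indicator {ω | Z ω = c} (fun _ => (1:ℝ)) := by
      funext ω
      by_cases h : Z ω = c <;>
        simp [hχ, Set.indicator_apply, h, Set.mem_setOf_eq]
    calc ∫ ω in {ω | Z ω = c}, f ω ∂μ
        = ∫ ω, Set.indicator {ω | Z ω = c} f ω ∂μ :=
          (integral_indicator hcmeas).symm
      _ = ∫ ω, (f * χ) ω ∂μ := by rw [← hχind]; rfl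
      _ = (∫ ω, f ω ∂μ) * ∫ ω, χ ω ∂μ := hmul
      _ = (∫ ω, f ω ∂μ) * (μ {ω | Z ω = c}).toReal := by
          rw [hχind2, integral_indicator_const (1:ℝ) hcmeas, smul_eq_mul, mul_one]
          rfl
  -- pointwise identities on {Z = 1} and {Z = 0}
  have hon1 : ∀ ω, Z ω = 1 → D ω * (1 - Y ω) = f1 ω := by
    intro ω hz
    have hDω : D ω = D1 ω := by rw [hD, hz]; ring
    rcases hD1bin ω with h | h <;> simp [hf1, hY, hDω, h] <;> ring
  have hon0 : ∀ ω, Z ω = 0 → D ω * (1 - Y ω) = f0 ω := by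
    intro ω hz
    have hDω : D ω = D0 ω := by rw [hD, hz]; ring
    rcases hD0bin ω with h | h <;> simp [hf0, hY, hDω, h] <;> ring
  have hbd1 : ∀ ω, ‖f1 ω‖ ≤ 1 := by
    intro ω
    rcases hD1bin ω with h | h <;> rcases hY1bin ω with h' | h' <;>
      simp [hf1, h, h']
  have hbd0 : ∀ ω, ‖f0 ω‖ ≤ 1 := by
    intro ω
    rcases hD0bin ω with h | h <;> rcases hY1bin ω with h' | h' <;>
      simp [hf0, h, h']
  have hφ1m : Measurable (fun p : ℝ × ℝ × ℝ × ℝ => p.2.2.2 * (1 - p.2.1)) := by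
    fun_prop
  have hφ0m : Measurable (fun p : ℝ × ℝ × ℝ × ℝ => p.2.2.1 * (1 - p.2.1)) := by
    fun_prop
  have key1 := main 1 f1 _ hφ1m (fun ω => rfl) hbd1 hZ1meas
  have key0 := main 0 f0 _ hφ0m (fun ω => rfl) hbd0 hZ0meas
  -- probabilities are nonzero
  have hP1ne : (μ {ω | Z ω = 1}).toReal ≠ 0 :=
    ENNReal.toReal_ne_zero.mpr ⟨hz0.ne', measure_ne_top μ _⟩
  have hS0eq : {ω | Z ω = 0} = {ω | Z ω = 1}ᶜ := by
    ext ω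
    rcases hZbin ω with h | h <;> simp [h]
  have hP0pos : 0 < μ {ω | Z ω = 0} := by
    rw [hS0eq, measure_compl hZ1meas (measure_ne_top μ _), measure_univ]
    exact tsub_pos_of_lt hz1
  have hP0ne : (μ {ω | Z ω = 0}).toReal ≠ 0 :=
    ENNReal.toReal_ne_zero.mpr ⟨hP0pos.ne', measure_ne_top μ _⟩
  -- compute the two conditional means
  have hc1 : cmean μ (fun ω => D ω * (1 - Y ω)) {ω | Z ω = 1} = ∫ ω, f1 ω ∂μ := by
    unfold cmean
    rw [setIntegral_congr_fun hZ1meas (fun ω hω => hon1 ω hω), key1,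
      mul_div_assoc, div_self hP1ne, mul_one]
  have hc0 : cmean μ (fun ω => D ω * (1 - Y ω)) {ω | Z ω = 0} = ∫ ω, f0 ω ∂μ := by
    unfold cmean
    rw [setIntegral_congr_fun hZ0meas (fun ω hω => hon0 ω hω), key0,
      mul_div_assoc, div_self hP0ne, mul_one]
  rw [hc1, hc0]
  -- integrability
  have hf1m : Measurable f1 := hD1m.mul (measurable_const.sub hY1m)
  have hf0m : Measurable f0 := hD0m.mul (measurable_const.sub hY1m)
  have hint1 : Integrable f1 μ := by
    refine (integrable_const (1:ℝ)).mono' hf1m.aestronglyMeasurable ?_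
    filter_upwards with ω using hbd1 ω
  have hint0 : Integrable f0 μ := by
    refine (integrable_const (1:ℝ)).mono' hf0m.aestronglyMeasurable ?_
    filter_upwards with ω using hbd0 ω
  rw [← integral_sub hint1 hint0]
  -- the integrand equals the indicator of the target set a.e.
  set T : Set Ω := {ω | D0 ω < D1 ω ∧ Y0 ω = 0 ∧ Y1 ω = 0} with hT
  have hTmeas : MeasurableSet T := by
    refine (measurableSet_lt hD0m hD1m).inter (MeasurableSet.inter ?_ ?_)
    · exact hY0m (measurableSet_singleton 0)
    · exact hY1m (measurableSet_singleton 0)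
  have hae : ∀ᵐ ω ∂μ, f1 ω - f0 ω = Set.indicator T (fun _ => (1:ℝ)) ω := by
    filter_upwards [hmonoD, hmonoY] with ω hd hy
    by_cases hmem : ω ∈ T
    · rw [Set.indicator_of_mem hmem]
      obtain ⟨hlt, hy0, hy1⟩ := hmem
      have hd0 : D0 ω = 0 := by
        rcases hD0bin ω with h | h; · exact h
        rcases hD1bin ω with h' | h' <;> rw [h, h'] at hlt <;> linarith
      have hd1 : D1 ω = 1 := by
        rcases hD1bin ω with h | h
        · rcases hD0bin ω with h' | h' <;> rw [h, h'] at hlt <;> linarith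
        · exact h
      simp [hf1, hf0, hd0, hd1, hy1]
    · rw [Set.indicator_of_notMem hmem]
      by_cases hlt : D0 ω < D1 ω
      · -- then Y1 ω ≠ 0, else Y0 = 0 too, contradicting ¬mem
        have hy1 : Y1 ω = 1 := by
          rcases hY1bin ω with h | h
          · exfalso
            apply hmem
            refine ⟨hlt, ?_, h⟩
            rcases hY0bin ω with h' | h'
            · exact h'
            · rw [h, h'] at hy; linarith
          · exact h
        simp [hf1, hf0, hy1]
      · have : D0 ω = D1 ω := le_antisymm hd (not_lt.mp hlt)
        simp [hf1, hf0, this]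
  rw [integral_congr_ae hae, integral_indicator_const (1:ℝ) hTmeas, smul_eq_mul,
    mul_one]
  rfl
end

section
/- Under the LATE assumptions plus outcome monotonicity, if Pr(G=ca) > 0 then the characteristics of group G=ca are identified: E[h(X) | D1>D0, Y0=Y1=1] = (E[(1−D)Y·h(X) | Z=1] − E[(1−D)Y·h(X) | Z=0]) / (E[(1−D)Y | Z=1] − E[(1−D)Y | Z=0]). -/
open MeasureTheory ProbabilityTheory

/-- Set integral over `{Z = c}` of a function of `W` factorizes under independence. -/
lemma indep_setIntegral {Ω : Type} [MeasurableSpace Ω] (μ : Measure Ω) [IsProbabilityMeasure μ]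
    (W : Ω → ℝ × ℝ × ℝ × ℝ × ℝ) (Z : Ω → ℝ) (hW : Measurable W) (hZ : Measurable Z)
    (hindep : IndepFun W Z μ) (φ : ℝ × ℝ × ℝ × ℝ × ℝ → ℝ) (hφ : Measurable φ) (c : ℝ) :
    ∫ ω in {ω | Z ω = c}, φ (W ω) ∂μ
      = (∫ ω, φ (W ω) ∂μ) * (μ {ω | Z ω = c}).toReal := by
  have hs : MeasurableSet {ω | Z ω = c} := hZ (measurableSet_singleton c)
  set ψ : ℝ → ℝ := Set.indicator {c} (fun _ => (1 : ℝ)) with hψdef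
  have hψm : Measurable ψ :=
    Measurable.indicator measurable_const (measurableSet_singleton c)
  have hind : IndepFun (φ ∘ W) (ψ ∘ Z) μ := hindep.comp hφ hψm
  have h1 : ∫ ω in {ω | Z ω = c}, φ (W ω) ∂μ
      = ∫ ω, (φ ∘ W) ω * (ψ ∘ Z) ω ∂μ := by
    rw [← integral_indicator hs]
    congr 1
    ext ω
    by_cases hω : ω ∈ {ω | Z ω = c}
    · simp only [Set.indicator_of_mem hω, Function.comp_apply, hψdef]
      rw [Set.indicator_of_mem (by exact hω), mul_one]
    · simp only [Set.indicator_of_notMem hω, Function.comp_apply, hψdef]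
      rw [Set.indicator_of_notMem (by exact hω), mul_zero]
  have h2 : ∫ ω, (φ ∘ W) ω * (ψ ∘ Z) ω ∂μ
      = (∫ ω, (φ ∘ W) ω ∂μ) * ∫ ω, (ψ ∘ Z) ω ∂μ :=
    hind.integral_fun_mul_eq_mul_integral (hφ.comp hW).aestronglyMeasurable (hψm.comp hZ).aestronglyMeasurable
  have h3 : ∫ ω, (ψ ∘ Z) ω ∂μ = (μ {ω | Z ω = c}).toReal := by
    have heq : (fun ω => (ψ ∘ Z) ω)
        = Set.indicator {ω | Z ω = c} (fun _ => (1 : ℝ)) := by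
      ext ω
      by_cases hω : ω ∈ {ω | Z ω = c}
      · rw [Set.indicator_of_mem hω]
        simp only [Function.comp_apply, hψdef]
        rw [Set.indicator_of_mem (by exact hω)]
      · rw [Set.indicator_of_notMem hω]
        simp only [Function.comp_apply, hψdef]
        rw [Set.indicator_of_notMem (by exact hω)]
    rw [heq, integral_indicator_const (1 : ℝ) hs, smul_eq_mul, mul_one, Measure.real_def]
  rw [h1, h2, h3]
  rfl

theorem ca_group_characteristics
{Ω : Type} [MeasurableSpace Ω] (μ : Measure Ω) [IsProbabilityMeasure μ]
    (Z D0 D1 Y0 Y1 D Y : Ω → ℝ)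
    (hZm : Measurable Z) (hD0m : Measurable D0) (hD1m : Measurable D1)
    (hY0m : Measurable Y0) (hY1m : Measurable Y1)
    (hZbin : ∀ ω, Z ω = 0 ∨ Z ω = 1)
    (hD0bin : ∀ ω, D0 ω = 0 ∨ D0 ω = 1)
    (hD1bin : ∀ ω, D1 ω = 0 ∨ D1 ω = 1)
    (hY0bin : ∀ ω, Y0 ω = 0 ∨ Y0 ω = 1)
    (hY1bin : ∀ ω, Y1 ω = 0 ∨ Y1 ω = 1)
    (hD : ∀ ω, D ω = Z ω * D1 ω + (1 - Z ω) * D0 ω)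
    (hY : ∀ ω, Y ω = D ω * Y1 ω + (1 - D ω) * Y0 ω)
    (hz0 : 0 < μ {ω | Z ω = 1}) (hz1 : μ {ω | Z ω = 1} < 1)
    (hmonoD : ∀ᵐ ω ∂μ, D0 ω ≤ D1 ω)
    (hmonoY : ∀ᵐ ω ∂μ, Y0 ω ≤ Y1 ω)
    (X : Ω → ℝ) (hXm : Measurable X) (h : ℝ → ℝ) (hhm : Measurable h)
    (hint : Integrable (fun ω => h (X ω)) μ)
    (hindep : IndepFun (fun ω => (X ω, Y0 ω, Y1 ω, D0 ω, D1 ω)) Z μ)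
    (hca : 0 < μ {ω | D0 ω < D1 ω ∧ Y0 ω = 1 ∧ Y1 ω = 1}) :
    cmean μ (fun ω => h (X ω)) {ω | D0 ω < D1 ω ∧ Y0 ω = 1 ∧ Y1 ω = 1}
      = (cmean μ (fun ω => (1 - D ω) * Y ω * h (X ω)) {ω | Z ω = 1}
          - cmean μ (fun ω => (1 - D ω) * Y ω * h (X ω)) {ω | Z ω = 0})
        / (cmean μ (fun ω => (1 - D ω) * Y ω) {ω | Z ω = 1}
          - cmean μ (fun ω => (1 - D ω) * Y ω) {ω | Z ω = 0}) := by
  classical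
  set W : Ω → ℝ × ℝ × ℝ × ℝ × ℝ := fun ω => (X ω, Y0 ω, Y1 ω, D0 ω, D1 ω) with hWdef
  have hWm : Measurable W :=
    hXm.prodMk (hY0m.prodMk (hY1m.prodMk (hD0m.prodMk hD1m)))
  set s : Set Ω := {ω | D0 ω < D1 ω ∧ Y0 ω = 1 ∧ Y1 ω = 1} with hsdef
  have hsm : MeasurableSet s := by
    have h1 : MeasurableSet {ω | D0 ω < D1 ω} := measurableSet_lt hD0m hD1m
    have h2 : MeasurableSet {ω | Y0 ω = 1} := hY0m (measurableSet_singleton 1)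
    have h3 : MeasurableSet {ω | Y1 ω = 1} := hY1m (measurableSet_singleton 1)
    have : s = {ω | D0 ω < D1 ω} ∩ ({ω | Y0 ω = 1} ∩ {ω | Y1 ω = 1}) := by
      ext ω; simp [hsdef, and_assoc]
    rw [this]; exact h1.inter (h2.inter h3)
  -- The four factorized functions
  set φ1 : ℝ × ℝ × ℝ × ℝ × ℝ → ℝ := fun p => (1 - p.2.2.2.2) * p.2.1 * h p.1 with hφ1def
  set φ0 : ℝ × ℝ × ℝ × ℝ × ℝ → ℝ := fun p => (1 - p.2.2.2.1) * p.2.1 * h p.1 with hφ0def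
  set ψ1 : ℝ × ℝ × ℝ × ℝ × ℝ → ℝ := fun p => (1 - p.2.2.2.2) * p.2.1 with hψ1def
  set ψ0 : ℝ × ℝ × ℝ × ℝ × ℝ → ℝ := fun p => (1 - p.2.2.2.1) * p.2.1 with hψ0def
  have hψ1m : Measurable ψ1 :=
    (measurable_const.sub
        (measurable_snd.comp (measurable_snd.comp (measurable_snd.comp measurable_snd)))).mul
        (measurable_fst.comp measurable_snd)
  have hψ0m : Measurable ψ0 :=
    (measurable_const.sub
        (measurable_fst.comp (measurable_snd.comp (measurable_snd.comp measurable_snd)))).mul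
        (measurable_fst.comp measurable_snd)
  have hφ1m : Measurable φ1 := hψ1m.mul (hhm.comp measurable_fst)
  have hφ0m : Measurable φ0 := hψ0m.mul (hhm.comp measurable_fst)
  -- measures of Z-sets
  have hz0set : {ω | Z ω = 0} = {ω | Z ω = 1}ᶜ := by
    ext ω
    rcases hZbin ω with hz | hz <;> simp [hz]
  have hz1ne : (μ {ω | Z ω = 1}).toReal ≠ 0 :=
    (ENNReal.toReal_pos hz0.ne' (measure_ne_top μ _)).ne'
  have hz0meas : MeasurableSet {ω | Z ω = 1} := hZm (measurableSet_singleton 1)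
  have hz0pos : 0 < μ {ω | Z ω = 0} := by
    rw [hz0set, measure_compl hz0meas (measure_ne_top μ _)]
    simp only [measure_univ]
    exact tsub_pos_of_lt hz1
  have hz0ne : (μ {ω | Z ω = 0}).toReal ≠ 0 :=
    (ENNReal.toReal_pos hz0pos.ne' (measure_ne_top μ _)).ne'
  -- pointwise rewriting on Z-slices
  have heq1 : ∀ ω ∈ {ω | Z ω = 1}, (1 - D ω) * Y ω * h (X ω) = φ1 (W ω) := by
    intro ω hω
    have hz : Z ω = 1 := hω
    have hDω : D ω = D1 ω := by rw [hD, hz]; ring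
    rw [hY, hDω, hφ1def]
    rcases hD1bin ω with hd | hd <;> simp [hWdef, hd] <;> ring
  have heq0 : ∀ ω ∈ {ω | Z ω = 0}, (1 - D ω) * Y ω * h (X ω) = φ0 (W ω) := by
    intro ω hω
    have hz : Z ω = 0 := hω
    have hDω : D ω = D0 ω := by rw [hD, hz]; ring
    rw [hY, hDω, hφ0def]
    rcases hD0bin ω with hd | hd <;> simp [hWdef, hd] <;> ring
  have heq1' : ∀ ω ∈ {ω | Z ω = 1}, (1 - D ω) * Y ω = ψ1 (W ω) := by
    intro ω hω
    have hz : Z ω = 1 := hω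
    have hDω : D ω = D1 ω := by rw [hD, hz]; ring
    rw [hY, hDω, hψ1def]
    rcases hD1bin ω with hd | hd <;> simp [hWdef, hd] <;> ring
  have heq0' : ∀ ω ∈ {ω | Z ω = 0}, (1 - D ω) * Y ω = ψ0 (W ω) := by
    intro ω hω
    have hz : Z ω = 0 := hω
    have hDω : D ω = D0 ω := by rw [hD, hz]; ring
    rw [hY, hDω, hψ0def]
    rcases hD0bin ω with hd | hd <;> simp [hWdef, hd] <;> ring
  -- set integrals factorize
  have hmeas0 : MeasurableSet {ω | Z ω = 0} := hZm (measurableSet_singleton 0)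
  have key1h : ∫ ω in {ω | Z ω = 1}, (1 - D ω) * Y ω * h (X ω) ∂μ
      = (∫ ω, φ1 (W ω) ∂μ) * (μ {ω | Z ω = 1}).toReal := by
    rw [setIntegral_congr_fun hz0meas heq1]
    exact indep_setIntegral μ W Z hWm hZm hindep φ1 hφ1m 1
  have key0h : ∫ ω in {ω | Z ω = 0}, (1 - D ω) * Y ω * h (X ω) ∂μ
      = (∫ ω, φ0 (W ω) ∂μ) * (μ {ω | Z ω = 0}).toReal := by
    rw [setIntegral_congr_fun hmeas0 heq0]
    exact indep_setIntegral μ W Z hWm hZm hindep φ0 hφ0m 0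
  have key1 : ∫ ω in {ω | Z ω = 1}, (1 - D ω) * Y ω ∂μ
      = (∫ ω, ψ1 (W ω) ∂μ) * (μ {ω | Z ω = 1}).toReal := by
    rw [setIntegral_congr_fun hz0meas heq1']
    exact indep_setIntegral μ W Z hWm hZm hindep ψ1 hψ1m 1
  have key0 : ∫ ω in {ω | Z ω = 0}, (1 - D ω) * Y ω ∂μ
      = (∫ ω, ψ0 (W ω) ∂μ) * (μ {ω | Z ω = 0}).toReal := by
    rw [setIntegral_congr_fun hmeas0 heq0']
    exact indep_setIntegral μ W Z hWm hZm hindep ψ0 hψ0m 0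
  -- integrability
  have hφ1int : Integrable (fun ω => φ1 (W ω)) μ := by
    have : (fun ω => φ1 (W ω)) = fun ω => ((1 - D1 ω) * Y0 ω) * h (X ω) := by
      ext ω; simp [hφ1def, hWdef]
    rw [this]
    refine hint.bdd_mul (c := 1) ?_ (Filter.Eventually.of_forall fun ω => ?_)
    · exact ((measurable_const.sub hD1m).mul hY0m).aestronglyMeasurable
    · rcases hD1bin ω with hd | hd <;> rcases hY0bin ω with hy | hy <;>
        simp [hd, hy]
  have hφ0int : Integrable (fun ω => φ0 (W ω)) μ := by
    have : (fun ω => φ0 (W ω)) = fun ω => ((1 - D0 ω) * Y0 ω) * h (X ω) := by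
      ext ω; simp [hφ0def, hWdef]
    rw [this]
    refine hint.bdd_mul (c := 1) ?_ (Filter.Eventually.of_forall fun ω => ?_)
    · exact ((measurable_const.sub hD0m).mul hY0m).aestronglyMeasurable
    · rcases hD0bin ω with hd | hd <;> rcases hY0bin ω with hy | hy <;>
        simp [hd, hy]
  have hψ1int : Integrable (fun ω => ψ1 (W ω)) μ := by
    refine (integrable_const (1 : ℝ)).mono'
      ((measurable_const.sub hD1m).mul hY0m).aestronglyMeasurable ?_
    filter_upwards with ω
    rcases hD1bin ω with hd | hd <;> rcases hY0bin ω with hy | hy <;>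
      simp [hψ1def, hWdef, hd, hy]
  have hψ0int : Integrable (fun ω => ψ0 (W ω)) μ := by
    refine (integrable_const (1 : ℝ)).mono'
      ((measurable_const.sub hD0m).mul hY0m).aestronglyMeasurable ?_
    filter_upwards with ω
    rcases hD0bin ω with hd | hd <;> rcases hY0bin ω with hy | hy <;>
      simp [hψ0def, hWdef, hd, hy]
  -- core pointwise identity (a.e.)
  have hcore : ∀ᵐ ω ∂μ, (1 - D0 ω) * Y0 ω - (1 - D1 ω) * Y0 ω
      = Set.indicator s (fun _ => (1 : ℝ)) ω := by
    filter_upwards [hmonoD, hmonoY] with ω hd hy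
    by_cases hmem : ω ∈ s
    · rw [Set.indicator_of_mem hmem]
      obtain ⟨h1, h2, h3⟩ := hmem
      have hd0 : D0 ω = 0 := by
        rcases hD0bin ω with h' | h'
        · exact h'
        · exfalso
          rcases hD1bin ω with h'' | h'' <;> rw [h', h''] at h1 <;> linarith
      have hd1 : D1 ω = 1 := by
        rcases hD1bin ω with h' | h'
        · exfalso; rw [hd0, h'] at h1; linarith
        · exact h'
      rw [hd0, hd1, h2]; ring
    · rw [Set.indicator_of_notMem hmem]
      rcases hD0bin ω with h0 | h0
      · rcases hD1bin ω with h1 | h1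
        · rw [h0, h1]; ring
        · have hy0 : Y0 ω = 0 := by
            rcases hY0bin ω with h2 | h2
            · exact h2
            · exfalso
              have hy1 : Y1 ω = 1 := by
                rcases hY1bin ω with h3 | h3
                · exfalso; rw [h2, h3] at hy; linarith
                · exact h3
              exact hmem ⟨by rw [h0, h1]; norm_num, h2, hy1⟩
          rw [hy0]; ring
      · have h1 : D1 ω = 1 := by
          rcases hD1bin ω with h1 | h1
          · exfalso; rw [h0, h1] at hd; linarith
          · exact h1
        rw [h0, h1]; ring
  -- a.e. identification of the differences with indicators of s
  have haeh : (fun ω => φ0 (W ω) - φ1 (W ω))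
      =ᵐ[μ] Set.indicator s (fun ω => h (X ω)) := by
    filter_upwards [hcore] with ω hc
    have hstep : φ0 (W ω) - φ1 (W ω)
        = ((1 - D0 ω) * Y0 ω - (1 - D1 ω) * Y0 ω) * h (X ω) := by
      simp only [hφ0def, hφ1def, hWdef]; ring
    rw [hstep, hc]
    by_cases hmem : ω ∈ s
    · rw [Set.indicator_of_mem hmem, Set.indicator_of_mem hmem, one_mul]
    · rw [Set.indicator_of_notMem hmem, Set.indicator_of_notMem hmem, zero_mul]
  have haeo : (fun ω => ψ0 (W ω) - ψ1 (W ω))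
      =ᵐ[μ] Set.indicator s (fun _ => (1 : ℝ)) := by
    filter_upwards [hcore] with ω hc
    have hstep : ψ0 (W ω) - ψ1 (W ω)
        = (1 - D0 ω) * Y0 ω - (1 - D1 ω) * Y0 ω := by
      simp only [hψ0def, hψ1def, hWdef]
    rw [hstep, hc]
  -- the difference of means equals the s-integrals
  have hdiffh : (∫ ω, φ0 (W ω) ∂μ) - (∫ ω, φ1 (W ω) ∂μ)
      = ∫ ω in s, h (X ω) ∂μ := by
    rw [← integral_sub hφ0int hφ1int, integral_congr_ae haeh, integral_indicator hsm]
  have hdiffo : (∫ ω, ψ0 (W ω) ∂μ) - (∫ ω, ψ1 (W ω) ∂μ) = (μ s).toReal := by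
    rw [← integral_sub hψ0int hψ1int, integral_congr_ae haeo,
      integral_indicator_const (1 : ℝ) hsm, smul_eq_mul, mul_one, Measure.real_def]
  -- finish
  unfold cmean
  rw [key1h, key0h, key1, key0,
    mul_div_assoc, div_self hz1ne, mul_one,
    mul_div_assoc, div_self hz0ne, mul_one,
    mul_div_assoc, div_self hz1ne, mul_one,
    mul_div_assoc, div_self hz0ne, mul_one]
  rw [show (∫ ω, φ1 (W ω) ∂μ) - (∫ ω, φ0 (W ω) ∂μ)
      = -((∫ ω, φ0 (W ω) ∂μ) - (∫ ω, φ1 (W ω) ∂μ)) by ring,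
    show (∫ ω, ψ1 (W ω) ∂μ) - (∫ ω, ψ0 (W ω) ∂μ)
      = -((∫ ω, ψ0 (W ω) ∂μ) - (∫ ω, ψ1 (W ω) ∂μ)) by ring,
    hdiffh, hdiffo, neg_div_neg_eq]
end

section
/- Among the six treatment-control inequalities on observed cells — (1) Pr(Y=0,D=0|Z=1) ≤ Pr(Y=0,D=0|Z=0), (2) Pr(Y=0,D=1|Z=0) ≤ Pr(Y=0,D=1|Z=1), (3) Pr(Y=1,D=0|Z=1) ≤ Pr(Y=1,D=0|Z=0), (4) Pr(Y=1,D=1|Z=0) ≤ Pr(Y=1,D=1|Z=1), (5) Pr(Y=0|Z=1) ≤ Pr(Y=0|Z=0), (6) Pr(Y=1|Z=0) ≤ Pr(Y=1|Z=1) — inequalities (2), (3), and (6) imply the remaining three: (2) and (5) imply (1); (3) and (6) imply (4); and (5) is equivalent to (6). -/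
open MeasureTheory ProbabilityTheory

section Aux

variable {Ω : Type} [MeasurableSpace Ω] (μ : Measure Ω) [IsProbabilityMeasure μ]

lemma cprob_add (s1 s2 s t : Set Ω) (hm : MeasurableSet (s2 ∩ t))
    (hd : Disjoint (s1 ∩ t) (s2 ∩ t)) (hu : s1 ∩ t ∪ s2 ∩ t = s ∩ t) :
    cprob μ s1 t + cprob μ s2 t = cprob μ s t := by
  unfold cprob
  rw [← add_div]
  congr 1
  rw [← ENNReal.toReal_add (measure_ne_top μ _) (measure_ne_top μ _),
    ← measure_union hd hm, hu]

lemma cprob_split (Y D : Ω → ℝ) (hYm : Measurable Y) (hDm : Measurable D)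
    (hDbin : ∀ ω, D ω = 0 ∨ D ω = 1) (t : Set Ω) (ht : MeasurableSet t) (y : ℝ) :
    cprob μ {ω | Y ω = y ∧ D ω = 0} t + cprob μ {ω | Y ω = y ∧ D ω = 1} t
      = cprob μ {ω | Y ω = y} t := by
  apply cprob_add
  · exact (((hYm (measurableSet_singleton y)).inter
      (hDm (measurableSet_singleton 1))).inter ht)
  · rw [Set.disjoint_left]
    rintro ω ⟨⟨_, h0⟩, _⟩ ⟨⟨_, h1⟩, _⟩
    rw [h0] at h1; norm_num at h1
  · ext ω
    have := hDbin ω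
    simp only [Set.mem_inter_iff, Set.mem_union, Set.mem_setOf_eq]
    tauto

lemma cprob_compl_sum (Y : Ω → ℝ) (hYm : Measurable Y)
    (hYbin : ∀ ω, Y ω = 0 ∨ Y ω = 1) (t : Set Ω) (ht : MeasurableSet t)
    (ht0 : μ t ≠ 0) :
    cprob μ {ω | Y ω = 0} t + cprob μ {ω | Y ω = 1} t = 1 := by
  have h : cprob μ {ω | Y ω = 0} t + cprob μ {ω | Y ω = 1} t
      = cprob μ Set.univ t := by
    apply cprob_add
    · exact ((hYm (measurableSet_singleton 1)).preimage measurable_id).inter ht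
    · rw [Set.disjoint_left]
      rintro ω ⟨h0, _⟩ ⟨h1, _⟩
      rw [Set.mem_setOf_eq] at h0 h1
      rw [h0] at h1; norm_num at h1
    · ext ω
      have := hYbin ω
      simp only [Set.mem_inter_iff, Set.mem_union, Set.mem_setOf_eq, Set.mem_univ]
      tauto
  rw [h]
  unfold cprob
  rw [Set.univ_inter, div_self]
  exact ENNReal.toReal_ne_zero.mpr ⟨ht0, measure_ne_top μ _⟩

end Aux

theorem redundant_inequalities
    {Ω : Type} [MeasurableSpace Ω] (μ : Measure Ω) [IsProbabilityMeasure μ]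
    (Z D Y : Ω → ℝ)
    (hZm : Measurable Z) (hDm : Measurable D) (hYm : Measurable Y)
    (hZbin : ∀ ω, Z ω = 0 ∨ Z ω = 1)
    (hDbin : ∀ ω, D ω = 0 ∨ D ω = 1)
    (hYbin : ∀ ω, Y ω = 0 ∨ Y ω = 1)
    (hz0 : 0 < μ {ω | Z ω = 1}) (hz1 : μ {ω | Z ω = 1} < 1) :
    -- ineq (1): Pr(Y=0,D=0|Z=1) ≤ Pr(Y=0,D=0|Z=0)
    -- ineq (2): Pr(Y=0,D=1|Z=0) ≤ Pr(Y=0,D=1|Z=1)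
    -- ineq (3): Pr(Y=1,D=0|Z=1) ≤ Pr(Y=1,D=0|Z=0)
    -- ineq (4): Pr(Y=1,D=1|Z=0) ≤ Pr(Y=1,D=1|Z=1)
    -- ineq (5): Pr(Y=0|Z=1) ≤ Pr(Y=0|Z=0)
    -- ineq (6): Pr(Y=1|Z=0) ≤ Pr(Y=1|Z=1)
    ((cprob μ {ω | Y ω = 0 ∧ D ω = 1} {ω | Z ω = 0}
          ≤ cprob μ {ω | Y ω = 0 ∧ D ω = 1} {ω | Z ω = 1}
      → cprob μ {ω | Y ω = 0} {ω | Z ω = 1} ≤ cprob μ {ω | Y ω = 0} {ω | Z ω = 0}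
      → cprob μ {ω | Y ω = 0 ∧ D ω = 0} {ω | Z ω = 1}
          ≤ cprob μ {ω | Y ω = 0 ∧ D ω = 0} {ω | Z ω = 0})
    ∧ (cprob μ {ω | Y ω = 1 ∧ D ω = 0} {ω | Z ω = 1}
          ≤ cprob μ {ω | Y ω = 1 ∧ D ω = 0} {ω | Z ω = 0}
      → cprob μ {ω | Y ω = 1} {ω | Z ω = 0} ≤ cprob μ {ω | Y ω = 1} {ω | Z ω = 1}
      → cprob μ {ω | Y ω = 1 ∧ D ω = 1} {ω | Z ω = 0}
          ≤ cprob μ {ω | Y ω = 1 ∧ D ω = 1} {ω | Z ω = 1})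
    ∧ (cprob μ {ω | Y ω = 0} {ω | Z ω = 1} ≤ cprob μ {ω | Y ω = 0} {ω | Z ω = 0}
        ↔ cprob μ {ω | Y ω = 1} {ω | Z ω = 0} ≤ cprob μ {ω | Y ω = 1} {ω | Z ω = 1})
    ∧ (cprob μ {ω | Y ω = 0 ∧ D ω = 1} {ω | Z ω = 0}
          ≤ cprob μ {ω | Y ω = 0 ∧ D ω = 1} {ω | Z ω = 1}
      → cprob μ {ω | Y ω = 1 ∧ D ω = 0} {ω | Z ω = 1}
          ≤ cprob μ {ω | Y ω = 1 ∧ D ω = 0} {ω | Z ω = 0}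
      → cprob μ {ω | Y ω = 1} {ω | Z ω = 0} ≤ cprob μ {ω | Y ω = 1} {ω | Z ω = 1}
      → (cprob μ {ω | Y ω = 0 ∧ D ω = 0} {ω | Z ω = 1}
            ≤ cprob μ {ω | Y ω = 0 ∧ D ω = 0} {ω | Z ω = 0}
        ∧ cprob μ {ω | Y ω = 1 ∧ D ω = 1} {ω | Z ω = 0}
            ≤ cprob μ {ω | Y ω = 1 ∧ D ω = 1} {ω | Z ω = 1}
        ∧ cprob μ {ω | Y ω = 0} {ω | Z ω = 1}
            ≤ cprob μ {ω | Y ω = 0} {ω | Z ω = 0}))) := by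
  have hmz1 : MeasurableSet {ω | Z ω = 1} := hZm (measurableSet_singleton 1)
  have hmz0 : MeasurableSet {ω | Z ω = 0} := hZm (measurableSet_singleton 0)
  have hz0ne : μ {ω | Z ω = 1} ≠ 0 := hz0.ne'
  have hz1ne : μ {ω | Z ω = 0} ≠ 0 := by
    intro h
    have hcompl : {ω | Z ω = 0} ∪ {ω | Z ω = 1} = Set.univ := by
      ext ω; have := hZbin ω; simp [Set.mem_setOf_eq]; tauto
    have : (1 : ENNReal) ≤ μ {ω | Z ω = 1} := by
      calc (1 : ENNReal) = μ Set.univ := (measure_univ).symm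
        _ ≤ μ {ω | Z ω = 0} + μ {ω | Z ω = 1} := by
            rw [← hcompl]; exact measure_union_le _ _
        _ = μ {ω | Z ω = 1} := by rw [h, zero_add]
    exact absurd hz1 (not_lt.mpr this)
  have s00 := cprob_split μ Y D hYm hDm hDbin _ hmz0 0
  have s01 := cprob_split μ Y D hYm hDm hDbin _ hmz1 0
  have s10 := cprob_split μ Y D hYm hDm hDbin _ hmz0 1
  have s11 := cprob_split μ Y D hYm hDm hDbin _ hmz1 1
  have c0 := cprob_compl_sum μ Y hYm hYbin _ hmz0 hz1ne
  have c1 := cprob_compl_sum μ Y hYm hYbin _ hmz1 hz0ne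
  refine ⟨fun h2 h5 => by linarith, fun h3 h6 => by linarith,
    ⟨fun h5 => by linarith, fun h6 => by linarith⟩,
    fun h2 h3 h6 => ⟨by linarith, by linarith, by linarith⟩⟩
end

section
/- Conditional weight positivity for quantile estimation: with π = κ − κ0·Y − κ1·(1−Y) as defined, under random assignment, treatment monotonicity, and outcome monotonicity, E[π | Y, X] = Pr(D1>D0, Y1>Y0 | Y, X); in particular E[π | Y, X] ≥ 0 almost surely. -/
open MeasureTheory ProbabilityTheory

/-- helper: bounded measurable functions are integrable w.r.t. a probability measure -/
lemma my_integral_indicator {Ω : Type} {mα : MeasurableSpace Ω} (μ : Measure Ω)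
    {s : Set Ω} (hs : MeasurableSet s) (f : Ω → ℝ) :
    ∫ ω, Set.indicator s f ω ∂μ = ∫ ω in s, f ω ∂μ := integral_indicator hs

lemma my_integral_indicator_const {Ω : Type} {mα : MeasurableSpace Ω} (μ : Measure Ω)
    {s : Set Ω} (hs : MeasurableSet s) :
    ∫ ω, Set.indicator s (fun _ => (1 : ℝ)) ω ∂μ = (μ s).toReal := by
  rw [integral_indicator hs]
  simp
  rfl

lemma integrable_of_abs_le {Ω : Type} {mα : MeasurableSpace Ω} (μ : Measure Ω)
    [IsProbabilityMeasure μ] {f : Ω → ℝ} (hf : Measurable f) (c : ℝ)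
    (h : ∀ ω, |f ω| ≤ c) : Integrable f μ :=
  (integrable_const c).mono' hf.aestronglyMeasurable
    (Filter.Eventually.of_forall (fun ω => by simpa using h ω))

set_option maxHeartbeats 1000000 in
theorem conditional_pi_weight_positivity
    {Ω : Type} [mΩ : MeasurableSpace Ω] (μ : Measure Ω) [IsProbabilityMeasure μ]
    (Z D0 D1 Y0 Y1 D Y X : Ω → ℝ)
    (hZm : Measurable Z) (hD0m : Measurable D0) (hD1m : Measurable D1)
    (hY0m : Measurable Y0) (hY1m : Measurable Y1) (hXm : Measurable X)
    (hZbin : ∀ ω, Z ω = 0 ∨ Z ω = 1)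
    (hD0bin : ∀ ω, D0 ω = 0 ∨ D0 ω = 1)
    (hD1bin : ∀ ω, D1 ω = 0 ∨ D1 ω = 1)
    (hY0bin : ∀ ω, Y0 ω = 0 ∨ Y0 ω = 1)
    (hY1bin : ∀ ω, Y1 ω = 0 ∨ Y1 ω = 1)
    (hD : ∀ ω, D ω = Z ω * D1 ω + (1 - Z ω) * D0 ω)
    (hY : ∀ ω, Y ω = D ω * Y1 ω + (1 - D ω) * Y0 ω)
    (hindep : IndepFun (fun ω => (X ω, Y0 ω, Y1 ω, D0 ω, D1 ω)) Z μ)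
    (hz0 : 0 < μ {ω | Z ω = 1}) (hz1 : μ {ω | Z ω = 1} < 1)
    (hmonoD : ∀ᵐ ω ∂μ, D0 ω ≤ D1 ω)
    (hmonoY : ∀ᵐ ω ∂μ, Y0 ω ≤ Y1 ω)
    (κ κ0 κ1 π : Ω → ℝ)
    (hκ : ∀ ω, κ ω = 1 - D ω * (1 - Z ω) / (μ {ω' | Z ω' = 0}).toReal
        - (1 - D ω) * Z ω / (μ {ω' | Z ω' = 1}).toReal)
    (hκ0 : ∀ ω, κ0 ω = (1 - D ω) * (1 - Z ω) / (μ {ω' | Z ω' = 0}).toReal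
        - (1 - D ω) * Z ω / (μ {ω' | Z ω' = 1}).toReal)
    (hκ1 : ∀ ω, κ1 ω = D ω * Z ω / (μ {ω' | Z ω' = 1}).toReal
        - D ω * (1 - Z ω) / (μ {ω' | Z ω' = 0}).toReal)
    (hπ : ∀ ω, π ω = κ ω - κ0 ω * Y ω - κ1 ω * (1 - Y ω))
    (m : MeasurableSpace Ω)
    (hm : m = MeasurableSpace.comap (fun ω => (Y ω, X ω)) inferInstance) :
    (μ[π | m]
      =ᵐ[μ] μ[Set.indicator {ω | D0 ω < D1 ω ∧ Y0 ω < Y1 ω} (fun _ => (1 : ℝ)) | m])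
    ∧ (∀ᵐ ω ∂μ, 0 ≤ (μ[π | m]) ω) := by
  classical
  set p1 : ℝ := (μ {ω' | Z ω' = 1}).toReal with hp1def
  set p0 : ℝ := (μ {ω' | Z ω' = 0}).toReal with hp0def
  have hZ1set : MeasurableSet[mΩ] {ω | Z ω = 1} := hZm (measurableSet_singleton 1)
  have hZ0eq : {ω | Z ω = 0} = {ω | Z ω = 1}ᶜ := by
    ext ω
    rcases hZbin ω with h | h <;> simp [h]
  -- basic probability facts
  have hμ1ne : μ {ω | Z ω = 1} ≠ ⊤ := measure_ne_top μ _
  have hp1pos : 0 < p1 := ENNReal.toReal_pos hz0.ne' hμ1ne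
  have hsum : p0 + p1 = 1 := by
    have h1 : μ {ω | Z ω = 0} + μ {ω | Z ω = 1} = 1 := by
      rw [hZ0eq]
      rw [add_comm]
      simpa using measure_add_measure_compl (μ := μ) hZ1set
    have := congrArg ENNReal.toReal h1
    rwa [ENNReal.toReal_add (measure_ne_top μ _) hμ1ne] at this
  have hp0pos : 0 < p0 := by
    have : p1 < 1 := by
      have := ENNReal.toReal_lt_toReal hμ1ne (by simp : (1 : ENNReal) ≠ ⊤)
      simpa [hp1def] using this.mpr hz1
    linarith
  have hp1ne : p1 ≠ 0 := hp1pos.ne'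
  have hp0ne : p0 ≠ 0 := hp0pos.ne'
  -- two scalar identities used repeatedly
  have sA : ∀ a : ℝ, p1 * (a - a / p1) + p0 * a = 0 := by
    intro a
    rw [mul_sub, ← mul_div_assoc, mul_div_cancel_left₀ _ hp1ne]
    linear_combination a * hsum
  have sB : ∀ a : ℝ, p1 * a + p0 * (a - a / p0) = 0 := by
    intro a
    rw [mul_sub, ← mul_div_assoc, mul_div_cancel_left₀ _ hp0ne]
    linear_combination a * hsum
  -- measurability of derived functions
  have hDm : Measurable[mΩ] D := by
    have : D = fun ω => Z ω * D1 ω + (1 - Z ω) * D0 ω := funext hD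
    rw [this]; fun_prop
  have hYmeas : Measurable[mΩ] Y := by
    have : Y = fun ω => D ω * Y1 ω + (1 - D ω) * Y0 ω := funext hY
    rw [this]; fun_prop
  have hπm : Measurable[mΩ] π := by
    have : π = fun ω => (1 - D ω * (1 - Z ω) / p0 - (1 - D ω) * Z ω / p1)
        - ((1 - D ω) * (1 - Z ω) / p0 - (1 - D ω) * Z ω / p1) * Y ω
        - (D ω * Z ω / p1 - D ω * (1 - Z ω) / p0) * (1 - Y ω) := by
      funext ω; rw [hπ ω, hκ ω, hκ0 ω, hκ1 ω]
    rw [this]; fun_prop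
  -- binary values of D and Y
  have hDbin : ∀ ω, D ω = 0 ∨ D ω = 1 := by
    intro ω
    rcases hZbin ω with h | h <;>
      rcases hD0bin ω with h0 | h0 <;>
      rcases hD1bin ω with h1 | h1 <;>
      rw [hD ω, h, h0, h1] <;> norm_num
  have hYbin : ∀ ω, Y ω = 0 ∨ Y ω = 1 := by
    intro ω
    rcases hDbin ω with h | h <;>
      rcases hY0bin ω with h0 | h0 <;>
      rcases hY1bin ω with h1 | h1 <;>
      rw [hY ω, h, h0, h1] <;> norm_num
  -- simplified formula for π
  have hπ' : ∀ ω, π ω = 1 - (1 - Y ω) * Z ω / p1 - Y ω * (1 - Z ω) / p0 := by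
    intro ω
    rw [hπ ω, hκ ω, hκ0 ω, hκ1 ω]
    ring
  -- the indicator function and its basic properties
  set Cset : Set Ω := {ω | D0 ω < D1 ω ∧ Y0 ω < Y1 ω} with hCsetdef
  set C : Ω → ℝ := Set.indicator Cset (fun _ => (1 : ℝ)) with hCdef
  have hCsetm : MeasurableSet[mΩ] Cset :=
    (measurableSet_lt hD0m hD1m).inter (measurableSet_lt hY0m hY1m)
  have hCm : Measurable[mΩ] C := measurable_const.indicator hCsetm
  have hC01 : ∀ ω, C ω = 0 ∨ C ω = 1 := by
    intro ω
    by_cases h : ω ∈ Cset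
    · right; exact Set.indicator_of_mem h _
    · left; exact Set.indicator_of_notMem h _
  have hCbd : ∀ ω, |C ω| ≤ 1 := by
    intro ω; rcases hC01 ω with h | h <;> rw [h] <;> norm_num
  have hCint : Integrable C μ := integrable_of_abs_le μ hCm 1 hCbd
  -- π is integrable
  have habs : ∀ u v q : ℝ, 0 < q → 0 ≤ u → u ≤ 1 → 0 ≤ v → v ≤ 1 →
      |u - v / q| ≤ 1 + 1 / q := by
    intro u v q hq hu hu1 hv hv1
    have h1 : v / q ≤ 1 / q := by gcongr
    have h2 : 0 ≤ v / q := by positivity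
    have h3 : 0 < 1 / q := by positivity
    rw [abs_le]
    constructor <;> linarith
  have hπbd : ∀ ω, |π ω| ≤ 1 + 1 / p1 + 1 / p0 := by
    intro ω
    have h1 : 0 < 1 / p1 := by positivity
    have h0 : 0 < 1 / p0 := by positivity
    have ha : 0 ≤ (1 - Y ω) * Z ω / p1 ∧ (1 - Y ω) * Z ω / p1 ≤ 1 / p1 := by
      rcases hYbin ω with hy | hy <;> rcases hZbin ω with hz | hz <;>
        rw [hy, hz] <;> norm_num <;> positivity
    have hb : 0 ≤ Y ω * (1 - Z ω) / p0 ∧ Y ω * (1 - Z ω) / p0 ≤ 1 / p0 := by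
      rcases hYbin ω with hy | hy <;> rcases hZbin ω with hz | hz <;>
        rw [hy, hz] <;> norm_num <;> positivity
    rw [hπ' ω, abs_le]
    constructor <;> linarith [ha.1, ha.2, hb.1, hb.2]
  have hπint : Integrable π μ := integrable_of_abs_le μ hπm _ hπbd
  -- the vector of potential outcomes, independent of Z
  set V : Ω → ℝ × ℝ × ℝ × ℝ × ℝ := fun ω => (X ω, Y0 ω, Y1 ω, D0 ω, D1 ω) with hVdef
  have hVm : Measurable[mΩ] V := by rw [hVdef]; fun_prop
  -- potential observed outcomes
  set y1f : ℝ × ℝ × ℝ × ℝ × ℝ → ℝ :=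
    fun v => v.2.2.2.2 * v.2.2.1 + (1 - v.2.2.2.2) * v.2.1 with hy1fdef
  set y0f : ℝ × ℝ × ℝ × ℝ × ℝ → ℝ :=
    fun v => v.2.2.2.1 * v.2.2.1 + (1 - v.2.2.2.1) * v.2.1 with hy0fdef
  set cs : Set (ℝ × ℝ × ℝ × ℝ × ℝ) :=
    {v : ℝ × ℝ × ℝ × ℝ × ℝ | v.2.2.2.1 < v.2.2.2.2 ∧ v.2.1 < v.2.2.1} with hcsdef
  set cf : ℝ × ℝ × ℝ × ℝ × ℝ → ℝ := Set.indicator cs (fun _ => (1 : ℝ)) with hcfdef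
  have hy1fm : Measurable y1f := by rw [hy1fdef]; fun_prop
  have hy0fm : Measurable y0f := by rw [hy0fdef]; fun_prop
  have hcsm : MeasurableSet cs := by
    rw [hcsdef]
    have h1 : MeasurableSet {v : ℝ × ℝ × ℝ × ℝ × ℝ | v.2.2.2.1 < v.2.2.2.2} :=
      measurableSet_lt (by fun_prop) (by fun_prop)
    have h2 : MeasurableSet {v : ℝ × ℝ × ℝ × ℝ × ℝ | v.2.1 < v.2.2.1} :=
      measurableSet_lt (by fun_prop) (by fun_prop)
    exact h1.inter h2
  have hcfm : Measurable cf := by rw [hcfdef]; exact measurable_const.indicator hcsm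
  have hCcf : ∀ ω, C ω = cf (V ω) := by
    intro ω
    by_cases h : D0 ω < D1 ω ∧ Y0 ω < Y1 ω
    · have h1 : ω ∈ Cset := h
      have h2 : V ω ∈ cs := h
      rw [hCdef, hcfdef, Set.indicator_of_mem h1, Set.indicator_of_mem h2]
    · have h1 : ω ∉ Cset := h
      have h2 : V ω ∉ cs := h
      rw [hCdef, hcfdef, Set.indicator_of_notMem h1, Set.indicator_of_notMem h2]
  have hcf01 : ∀ v, cf v = 0 ∨ cf v = 1 := by
    intro v
    by_cases h : v ∈ cs
    · right; exact Set.indicator_of_mem h _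
    · left; exact Set.indicator_of_notMem h _
  have hcfval : ∀ ω, cf (V ω) =
      if D0 ω < D1 ω ∧ Y0 ω < Y1 ω then (1 : ℝ) else 0 := by
    intro ω
    by_cases h : D0 ω < D1 ω ∧ Y0 ω < Y1 ω
    · rw [if_pos h]; exact Set.indicator_of_mem (show V ω ∈ cs from h) _
    · rw [if_neg h]; exact Set.indicator_of_notMem (show V ω ∉ cs from h) _
  -- integral of Z
  have hZind : Z = Set.indicator {ω | Z ω = 1} (fun _ => (1 : ℝ)) := by
    funext ω
    rcases hZbin ω with h | h
    · rw [h, Set.indicator_of_notMem (show ω ∉ ({ω | Z ω = 1} : Set Ω) by simp [h])]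
    · rw [h, Set.indicator_of_mem (show ω ∈ ({ω | Z ω = 1} : Set Ω) from h)]
  have hZbd : ∀ ω, |Z ω| ≤ 1 := by
    intro ω; rcases hZbin ω with h | h <;> rw [h] <;> norm_num
  have hZint : Integrable Z μ := integrable_of_abs_le μ hZm 1 hZbd
  have hintZ : ∫ ω, Z ω ∂μ = p1 := by
    rw [hZind, my_integral_indicator_const μ hZ1set, hp1def]
  -- key identity of set integrals
  have hYXm : Measurable[mΩ] (fun ω => (Y ω, X ω)) := hYmeas.prodMk hXm
  have key : ∀ s, MeasurableSet[m] s → ∫ ω in s, π ω ∂μ = ∫ ω in s, C ω ∂μ := by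
    intro s hs
    rw [hm] at hs
    obtain ⟨t, ht, rfl⟩ := MeasurableSpace.measurableSet_comap.mp hs
    set s : Set Ω := (fun ω => (Y ω, X ω)) ⁻¹' t with hsdef
    have hsm : MeasurableSet[mΩ] s := hYXm ht
    set χ : ℝ × ℝ → ℝ := Set.indicator t (fun _ => (1 : ℝ)) with hχdef
    have hχm : Measurable χ := measurable_const.indicator ht
    have hχ01 : ∀ p, χ p = 0 ∨ χ p = 1 := by
      intro p
      by_cases h : p ∈ t
      · right; exact Set.indicator_of_mem h _
      · left; exact Set.indicator_of_notMem h _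
    set A1 : ℝ × ℝ × ℝ × ℝ × ℝ → ℝ :=
      fun v => (1 - cf v) * χ (y1f v, v.1) - (1 - y1f v) * χ (y1f v, v.1) / p1 with hA1def
    set A0 : ℝ × ℝ × ℝ × ℝ × ℝ → ℝ :=
      fun v => (1 - cf v) * χ (y0f v, v.1) - y0f v * χ (y0f v, v.1) / p0 with hA0def
    have hA1m : Measurable A1 := by
      rw [hA1def]
      exact ((measurable_const.sub hcfm).mul (hχm.comp (hy1fm.prodMk measurable_fst))).sub
        (((measurable_const.sub hy1fm).mul (hχm.comp (hy1fm.prodMk measurable_fst))).div_const p1)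
    have hA0m : Measurable A0 := by
      rw [hA0def]
      exact ((measurable_const.sub hcfm).mul (hχm.comp (hy0fm.prodMk measurable_fst))).sub
        ((hy0fm.mul (hχm.comp (hy0fm.prodMk measurable_fst))).div_const p0)
    -- pointwise values along V
    have hy1V : ∀ ω, y1f (V ω) = D1 ω * Y1 ω + (1 - D1 ω) * Y0 ω := fun ω => rfl
    have hy0V : ∀ ω, y0f (V ω) = D0 ω * Y1 ω + (1 - D0 ω) * Y0 ω := fun ω => rfl
    have hA1V : ∀ ω, A1 (V ω) = (1 - cf (V ω)) * χ (y1f (V ω), X ω)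
        - (1 - y1f (V ω)) * χ (y1f (V ω), X ω) / p1 := fun ω => rfl
    have hA0V : ∀ ω, A0 (V ω) = (1 - cf (V ω)) * χ (y0f (V ω), X ω)
        - y0f (V ω) * χ (y0f (V ω), X ω) / p0 := fun ω => rfl
    have hy1V01 : ∀ ω, y1f (V ω) = 0 ∨ y1f (V ω) = 1 := by
      intro ω
      rw [hy1V ω]
      rcases hD1bin ω with h | h <;> rcases hY0bin ω with h0 | h0 <;>
        rcases hY1bin ω with h1 | h1 <;> rw [h, h0, h1] <;> norm_num
    have hy0V01 : ∀ ω, y0f (V ω) = 0 ∨ y0f (V ω) = 1 := by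
      intro ω
      rw [hy0V ω]
      rcases hD0bin ω with h | h <;> rcases hY0bin ω with h0 | h0 <;>
        rcases hY1bin ω with h1 | h1 <;> rw [h, h0, h1] <;> norm_num
    -- boundedness along V
    have h01le : ∀ a b : ℝ, (a = 0 ∨ a = 1) → (b = 0 ∨ b = 1) →
        0 ≤ (1 - a) * b ∧ (1 - a) * b ≤ 1 ∧ 0 ≤ a * b ∧ a * b ≤ 1 := by
      rintro a b (rfl | rfl) (rfl | rfl) <;> norm_num
    have hA1bd : ∀ ω, |A1 (V ω)| ≤ 1 + 1 / p1 := by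
      intro ω
      rw [hA1V ω]
      obtain ⟨h1, h2, _, _⟩ := h01le _ _ (hcf01 (V ω)) (hχ01 (y1f (V ω), X ω))
      obtain ⟨h3, h4, _, _⟩ := h01le _ _ (hy1V01 ω) (hχ01 (y1f (V ω), X ω))
      exact habs _ _ _ hp1pos h1 h2 h3 h4
    have hA0bd : ∀ ω, |A0 (V ω)| ≤ 1 + 1 / p0 := by
      intro ω
      rw [hA0V ω]
      obtain ⟨h1, h2, _, _⟩ := h01le _ _ (hcf01 (V ω)) (hχ01 (y0f (V ω), X ω))
      obtain ⟨_, _, h3, h4⟩ := h01le _ _ (hy0V01 ω) (hχ01 (y0f (V ω), X ω))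
      exact habs _ _ _ hp0pos h1 h2 h3 h4
    have hA1int : Integrable (fun ω => A1 (V ω)) μ :=
      integrable_of_abs_le μ (hA1m.comp hVm) _ hA1bd
    have hA0int : Integrable (fun ω => A0 (V ω)) μ :=
      integrable_of_abs_le μ (hA0m.comp hVm) _ hA0bd
    -- the pointwise decomposition
    have e1 : ∀ ω, Set.indicator s π ω =
        Set.indicator s C ω + (Z ω * A1 (V ω) + (1 - Z ω) * A0 (V ω)) := by
      intro ω
      rcases hZbin ω with hz | hz
      · -- Z = 0 : Y = y0f (V ω)
        have hDo : D ω = D0 ω := by rw [hD ω, hz]; ring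
        have hYo : Y ω = y0f (V ω) := by
          show Y ω = D0 ω * Y1 ω + (1 - D0 ω) * Y0 ω
          rw [hY ω, hDo]
        by_cases hts : (Y ω, X ω) ∈ t
        · have hmem : ω ∈ s := hts
          rw [Set.indicator_of_mem hmem, Set.indicator_of_mem hmem]
          have hχ1 : χ (y0f (V ω), X ω) = (1 : ℝ) := by
            rw [← hYo]; exact Set.indicator_of_mem hts _
          rw [hπ' ω, hz, hA0V ω, hχ1, hCcf ω, hYo]
          ring
        · have hmem : ω ∉ s := hts
          rw [Set.indicator_of_notMem hmem, Set.indicator_of_notMem hmem]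
          have hχ0 : χ (y0f (V ω), X ω) = (0 : ℝ) := by
            rw [← hYo]; exact Set.indicator_of_notMem hts _
          rw [hz, hA0V ω, hχ0]
          ring
      · -- Z = 1 : Y = y1f (V ω)
        have hDo : D ω = D1 ω := by rw [hD ω, hz]; ring
        have hYo : Y ω = y1f (V ω) := by
          show Y ω = D1 ω * Y1 ω + (1 - D1 ω) * Y0 ω
          rw [hY ω, hDo]
        by_cases hts : (Y ω, X ω) ∈ t
        · have hmem : ω ∈ s := hts
          rw [Set.indicator_of_mem hmem, Set.indicator_of_mem hmem]
          have hχ1 : χ (y1f (V ω), X ω) = (1 : ℝ) := by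
            rw [← hYo]; exact Set.indicator_of_mem hts _
          rw [hπ' ω, hz, hA1V ω, hχ1, hCcf ω, hYo]
          ring
        · have hmem : ω ∉ s := hts
          rw [Set.indicator_of_notMem hmem, Set.indicator_of_notMem hmem]
          have hχ0 : χ (y1f (V ω), X ω) = (0 : ℝ) := by
            rw [← hYo]; exact Set.indicator_of_notMem hts _
          rw [hz, hA1V ω, hχ0]
          ring
    -- independence consequences
    have hZbd1 : ∀ ω, |1 - Z ω| ≤ 1 := by
      intro ω; rcases hZbin ω with h | h <;> rw [h] <;> norm_num
    have hZA1 : ∫ ω, Z ω * A1 (V ω) ∂μ = p1 * ∫ ω, A1 (V ω) ∂μ := by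
      have hi : IndepFun Z (fun ω => A1 (V ω)) μ :=
        (hindep.comp hA1m measurable_id).symm
      have := IndepFun.integral_mul_eq_mul_integral hi hZint.aestronglyMeasurable hA1int.aestronglyMeasurable
      rw [← hintZ]
      simpa [Pi.mul_apply] using this
    have hZA0 : ∫ ω, Z ω * A0 (V ω) ∂μ = p1 * ∫ ω, A0 (V ω) ∂μ := by
      have hi : IndepFun Z (fun ω => A0 (V ω)) μ :=
        (hindep.comp hA0m measurable_id).symm
      have := IndepFun.integral_mul_eq_mul_integral hi hZint.aestronglyMeasurable hA0int.aestronglyMeasurable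
      rw [← hintZ]
      simpa [Pi.mul_apply] using this
    have hZA1int : Integrable (fun ω => Z ω * A1 (V ω)) μ := by
      refine integrable_of_abs_le μ (hZm.mul (hA1m.comp hVm)) (1 + 1 / p1) ?_
      intro ω
      calc |Z ω * A1 (V ω)| = |Z ω| * |A1 (V ω)| := abs_mul _ _
        _ ≤ 1 * (1 + 1 / p1) :=
            mul_le_mul (hZbd ω) (hA1bd ω) (abs_nonneg _) zero_le_one
        _ = 1 + 1 / p1 := one_mul _
    have hZA0int' : Integrable (fun ω => Z ω * A0 (V ω)) μ := by
      refine integrable_of_abs_le μ (hZm.mul (hA0m.comp hVm)) (1 + 1 / p0) ?_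
      intro ω
      calc |Z ω * A0 (V ω)| = |Z ω| * |A0 (V ω)| := abs_mul _ _
        _ ≤ 1 * (1 + 1 / p0) :=
            mul_le_mul (hZbd ω) (hA0bd ω) (abs_nonneg _) zero_le_one
        _ = 1 + 1 / p0 := one_mul _
    have hZA0int : Integrable (fun ω => (1 - Z ω) * A0 (V ω)) μ := by
      refine integrable_of_abs_le μ ((measurable_const.sub hZm).mul (hA0m.comp hVm))
        (1 + 1 / p0) ?_
      intro ω
      calc |(1 - Z ω) * A0 (V ω)| = |1 - Z ω| * |A0 (V ω)| := abs_mul _ _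
        _ ≤ 1 * (1 + 1 / p0) :=
            mul_le_mul (hZbd1 ω) (hA0bd ω) (abs_nonneg _) zero_le_one
        _ = 1 + 1 / p0 := one_mul _
    have hZ'A0 : ∫ ω, (1 - Z ω) * A0 (V ω) ∂μ = p0 * ∫ ω, A0 (V ω) ∂μ := by
      have heq : (fun ω => (1 - Z ω) * A0 (V ω))
          = fun ω => A0 (V ω) - Z ω * A0 (V ω) := by
        funext ω; ring
      rw [heq, integral_sub hA0int hZA0int', hZA0]
      have : p0 = 1 - p1 := by linarith
      rw [this]; ring
    -- the a.e. vanishing of the combination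
    have hQ : ∀ᵐ ω ∂μ, p1 * A1 (V ω) + p0 * A0 (V ω) = 0 := by
      filter_upwards [hmonoD, hmonoY] with ω hd hy
      rw [hA1V ω, hA0V ω, hy1V ω, hy0V ω, hcfval ω]
      rcases hD0bin ω with h0 | h0 <;> rcases hD1bin ω with h1 | h1 <;>
        rcases hY0bin ω with h2 | h2 <;> rcases hY1bin ω with h3 | h3 <;>
        first
          | (exfalso; rw [h0, h1] at hd; linarith)
          | (exfalso; rw [h2, h3] at hy; linarith)
          | (rw [h0, h1, h2, h3]
             norm_num
             try ring
             try (first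
               | (have h := sA (χ (0, X ω)); linear_combination h)
               | (have h := sA (χ (1, X ω)); linear_combination h)
               | (have h := sB (χ (0, X ω)); linear_combination h)
               | (have h := sB (χ (1, X ω)); linear_combination h)))
    have hQ0 : ∫ ω, (p1 * A1 (V ω) + p0 * A0 (V ω)) ∂μ = 0 :=
      integral_eq_zero_of_ae hQ
    have hQ0' : p1 * (∫ ω, A1 (V ω) ∂μ) + p0 * (∫ ω, A0 (V ω) ∂μ) = 0 := by
      rw [← integral_const_mul p1, ← integral_const_mul p0,
        ← integral_add (hA1int.const_mul p1) (hA0int.const_mul p0)]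
      exact hQ0
    -- put everything together
    have hIπ : ∫ ω, Set.indicator s π ω ∂μ = ∫ ω in s, π ω ∂μ := my_integral_indicator μ hsm π
    have hIC : ∫ ω, Set.indicator s C ω ∂μ = ∫ ω in s, C ω ∂μ := my_integral_indicator μ hsm C
    rw [← hIπ, ← hIC]
    calc ∫ ω, Set.indicator s π ω ∂μ
        = ∫ ω, (Set.indicator s C ω + (Z ω * A1 (V ω) + (1 - Z ω) * A0 (V ω))) ∂μ := by
          exact integral_congr_ae (Filter.Eventually.of_forall e1)
      _ = ∫ ω, Set.indicator s C ω ∂μ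
          + ∫ ω, (Z ω * A1 (V ω) + (1 - Z ω) * A0 (V ω)) ∂μ := by
          have hsCint : Integrable (Set.indicator s C) μ := by
            refine integrable_of_abs_le μ (hCm.indicator hsm) 1 (fun ω => ?_)
            by_cases h : ω ∈ s
            · rw [Set.indicator_of_mem h]; exact hCbd ω
            · rw [Set.indicator_of_notMem h]; norm_num
          have hgint : Integrable
              (fun ω => Z ω * A1 (V ω) + (1 - Z ω) * A0 (V ω)) μ := hZA1int.add hZA0int
          exact integral_add hsCint hgint
      _ = ∫ ω, Set.indicator s C ω ∂μ := by
          have hsplit : ∫ ω, (Z ω * A1 (V ω) + (1 - Z ω) * A0 (V ω)) ∂μ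
              = (∫ ω, Z ω * A1 (V ω) ∂μ) + ∫ ω, (1 - Z ω) * A0 (V ω) ∂μ :=
            integral_add hZA1int hZA0int
          rw [hsplit, hZA1, hZ'A0]
          linarith
  -- conclude via uniqueness of conditional expectation
  have hm_le : m ≤ mΩ := by
    rw [hm]
    exact hYXm.comap_le
  haveI : SigmaFinite (μ.trim hm_le) := by
    have : IsFiniteMeasure (μ.trim hm_le) := isFiniteMeasure_trim hm_le
    infer_instance
  have main : μ[C | m] =ᵐ[μ] μ[π | m] := by
    refine ae_eq_condExp_of_forall_setIntegral_eq hm_le hπint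
      (fun s hs hμs => integrable_condExp.mono_measure Measure.restrict_le_self)
      (fun s hs hμs => ?_) stronglyMeasurable_condExp.aestronglyMeasurable
    rw [setIntegral_condExp hm_le hCint hs, key s hs]
  refine ⟨main.symm, ?_⟩
  have hCnn : 0 ≤ᵐ[μ] C := Filter.Eventually.of_forall (fun ω => by
    rcases hC01 ω with h | h <;> rw [h] <;> norm_num)
  have hcond : 0 ≤ᵐ[μ] μ[C | m] := condExp_nonneg hCnn
  filter_upwards [main.symm, hcond] with ω h1 h2
  rw [h1]
  exact h2
end
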